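/- arXiv:math/0702351 — 4 statements merged into one kernel-verified Lean document; each statement's English description precedes it below -/
import Mathlib

section
/- Let k, D ∈ ℕ with D ≥ 2, and define g_D : ℕ → ℕ by g_D(x) = Σ_{i=0}^{D−1} (i+1)·C(x,i). Suppose C₁ ∈ ℕ is such that every m×n (0,1)-matrix with at least C₁·n entries equal to 1, with at most two 1's in each row, and with pairwise distinct rows, contains a member of each class of M(k). Then for all m, n ∈ ℕ, every m×n (0,1)-matrix with at least g_D(D(D−1)C₁)·n entries equal to 1, with at most D of the entries in each row equal to 1, and with pairwise distinct rows, contains a member of each class of M(k). -/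
/-- The element `i ∈ [k]` viewed as an element of `[2k]` (the left half). -/
def finL (k : ℕ) (i : Fin k) : Fin (2 * k) := ⟨i.1, by have := i.isLt; omega⟩

/-- The element `π(i) + k` viewed as an element of `[2k]` (the right half). -/
def finR (k : ℕ) (i : Fin k) : Fin (2 * k) := ⟨k + i.1, by have := i.isLt; omega⟩

/-- The number of entries of the `(0,1)`-matrix `A` that equal 1. -/
def onesCount {m n : ℕ} (A : Fin m → Fin n → Bool) : ℕ :=
  (Finset.univ.filter fun p : Fin m × Fin n => A p.1 p.2 = true).card

/-- `A` contains a member of each class of `M(k)`: for every permutation `σ` of `[k]` there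
are pairwise distinct rows `r 1, …, r k` and columns `c 1 < … < c (2k)` such that
`A (r i) (c i) = 1` and `A (r i) (c (k + σ i)) = 1` for every `i ∈ [k]`. -/
def ContainsMk {m n : ℕ} (k : ℕ) (A : Fin m → Fin n → Bool) : Prop :=
  ∀ σ : Equiv.Perm (Fin k), ∃ r : Fin k → Fin m, ∃ c : Fin (2 * k) → Fin n,
    Function.Injective r ∧ StrictMono c ∧
    ∀ i : Fin k, A (r i) (c (finL k i)) = true ∧ A (r i) (c (finR k (σ i))) = true

/-- `g_D(x) = Σ_{i=0}^{D−1} (i+1)·C(x,i)`. -/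
def gD (D x : ℕ) : ℕ := ∑ i ∈ Finset.range D, (i + 1) * x.choose i

open Finset

section Helpers

/-- Transfer of `ContainsMk` along a submatrix embedding. -/
lemma containsMk_transfer {m n m' n' k : ℕ} (A : Fin m → Fin n → Bool)
    (B : Fin m' → Fin n' → Bool) (ρ : Fin m' → Fin m) (φ : Fin n' → Fin n)
    (hρ : Function.Injective ρ) (hφ : StrictMono φ)
    (hAB : ∀ i j, B i j = true → A (ρ i) (φ j) = true) :
    ContainsMk k B → ContainsMk k A := by
  intro H σ
  obtain ⟨r, c, hr, hc, hP⟩ := H σ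
  exact ⟨ρ ∘ r, φ ∘ c, hρ.comp hr, hφ.comp hc,
    fun i => ⟨hAB _ _ (hP i).1, hAB _ _ (hP i).2⟩⟩

lemma onesCount_eq_sum {m n : ℕ} (A : Fin m → Fin n → Bool) :
    onesCount A = ∑ i : Fin m, (univ.filter fun j => A i j = true).card := by
  unfold onesCount
  rw [Finset.card_filter, Fintype.sum_prod_type]
  apply Finset.sum_congr rfl
  intro i _
  rw [Finset.card_filter]

lemma gD_mono (D : ℕ) {x y : ℕ} (hxy : x ≤ y) : gD D x ≤ gD D y := by
  unfold gD
  exact Finset.sum_le_sum fun i _ => Nat.mul_le_mul_left _ (Nat.choose_le_choose i hxy)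

lemma le_gD {D x : ℕ} (hD : 2 ≤ D) : 1 + 2 * x ≤ gD D x := by
  have hsub : ({0, 1} : Finset ℕ) ⊆ range D := by
    intro i hi
    rcases Finset.mem_insert.mp hi with rfl | hi
    · exact Finset.mem_range.mpr (by omega)
    · rw [Finset.mem_singleton.mp hi]; exact Finset.mem_range.mpr (by omega)
  calc 1 + 2 * x = ∑ i ∈ ({0, 1} : Finset ℕ), (i + 1) * x.choose i := by
        rw [Finset.sum_insert (by decide), Finset.sum_singleton]
        simp [Nat.choose_one_right]
    _ ≤ gD D x := Finset.sum_le_sum_of_subset hsub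

/-- Sum of (|T|+1) over a family of distinct subsets of N of size < D. -/
lemma sum_card_add_one_le {β : Type*} [DecidableEq β] (N : Finset β) (D : ℕ)
    (C : Finset (Finset β)) (hC : ∀ T ∈ C, T ⊆ N ∧ T.card < D) :
    ∑ T ∈ C, (T.card + 1) ≤ gD D N.card := by
  have hsub : C ⊆ (range D).biUnion (fun i => N.powersetCard i) := by
    intro T hT
    obtain ⟨h1, h2⟩ := hC T hT
    exact Finset.mem_biUnion.mpr ⟨T.card, Finset.mem_range.mpr h2,
      Finset.mem_powersetCard.mpr ⟨h1, rfl⟩⟩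
  calc ∑ T ∈ C, (T.card + 1)
      ≤ ∑ T ∈ (range D).biUnion (fun i => N.powersetCard i), (T.card + 1) :=
        Finset.sum_le_sum_of_subset hsub
    _ = ∑ i ∈ range D, ∑ T ∈ N.powersetCard i, (T.card + 1) := by
        apply Finset.sum_biUnion
        intro a _ b _ hab
        apply Finset.disjoint_left.mpr
        intro T hTa hTb
        exact hab ((Finset.mem_powersetCard.mp hTa).2 ▸ (Finset.mem_powersetCard.mp hTb).2 ▸ rfl)
    _ = ∑ i ∈ range D, (i + 1) * N.card.choose i := by
        apply Finset.sum_congr rfl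
        intro i _
        rw [Finset.sum_congr rfl (fun T hT => by
          rw [(Finset.mem_powersetCard.mp hT).2]), Finset.sum_const,
          Finset.card_powersetCard, smul_eq_mul, mul_comm]
    _ = gD D N.card := rfl

/-- Neighborhood of a column in the "appearing pairs" graph. -/
def nbr {m n : ℕ} (A : Fin m → Fin n → Bool) (j : Fin n) : Finset (Fin n) :=
  univ.filter (fun b => b ≠ j ∧ ∃ i, A i j = true ∧ A i b = true)

end Helpers

section DenseCase

lemma dense_case {k m n D C₁ : ℕ} (hD : 2 ≤ D) (hn : 1 ≤ n)
    (A : Fin m → Fin n → Bool)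
    (h : ∀ m' n' : ℕ, 1 ≤ n' → ∀ B : Fin m' → Fin n' → Bool,
      C₁ * n' ≤ onesCount B →
      (∀ i : Fin m', (Finset.univ.filter fun j => B i j = true).card ≤ 2) →
      Function.Injective B → ContainsMk k B)
    (hrowD : ∀ i : Fin m, (Finset.univ.filter fun j => A i j = true).card ≤ D)
    (hdeg : ∀ j : Fin n, D * (D - 1) * C₁ ≤ (nbr A j).card) :
    ContainsMk k A := by
  classical
  set x := D * (D - 1) * C₁ with hx
  set P : (Fin n × Fin n) × Fin m → Prop := fun u =>
    u.1.1 < u.1.2 ∧ A u.2 u.1.1 = true ∧ A u.2 u.1.2 = true with hP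
  set Good : Finset ((Fin n × Fin n) × Fin m) → Prop := fun s =>
    (∀ u ∈ s, P u) ∧ (∀ u ∈ s, ∀ v ∈ s, u.1 = v.1 → u = v) ∧
    (∀ u ∈ s, ∀ v ∈ s, u.2 = v.2 → u = v) with hGood
  have hne : (univ.filter Good).Nonempty := by
    refine ⟨∅, Finset.mem_filter.mpr ⟨Finset.mem_univ _, ?_⟩⟩
    refine ⟨fun u hu => absurd hu (Finset.notMem_empty u), ?_, ?_⟩ <;>
      exact fun u hu => absurd hu (Finset.notMem_empty u)
  obtain ⟨s₀, hs₀mem, hs₀max⟩ := Finset.exists_max_image (univ.filter Good) Finset.card hne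
  have hs₀good : Good s₀ := (Finset.mem_filter.mp hs₀mem).2
  set pairsOf : Fin m → Finset (Fin n × Fin n) := fun i =>
    univ.filter (fun p => p.1 < p.2 ∧ A i p.1 = true ∧ A i p.2 = true) with hpairsOf
  set E : Finset (Fin n × Fin n) :=
    univ.filter (fun p => p.1 < p.2 ∧ ∃ i, A i p.1 = true ∧ A i p.2 = true) with hE
  have hcover : E ⊆ s₀.biUnion (fun u => pairsOf u.2) := by
    intro p hp
    obtain ⟨hlt, i, hi1, hi2⟩ := (Finset.mem_filter.mp hp).2
    by_contra hnm
    have hnotrow : ∀ u ∈ s₀, u.2 ≠ i := by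
      intro u hu hui
      exact hnm (Finset.mem_biUnion.mpr ⟨u, hu,
        Finset.mem_filter.mpr ⟨Finset.mem_univ _, hlt, hui ▸ hi1, hui ▸ hi2⟩⟩)
    have hnotmem : (p, i) ∉ s₀ := fun hmem => hnotrow _ hmem rfl
    have hgood' : Good (insert (p, i) s₀) := by
      refine ⟨?_, ?_, ?_⟩
      · intro u hu
        rcases Finset.mem_insert.mp hu with rfl | hu
        · exact ⟨hlt, hi1, hi2⟩
        · exact hs₀good.1 u hu
      · intro u hu v hv huv
        rcases Finset.mem_insert.mp hu with rfl | hu <;>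
          rcases Finset.mem_insert.mp hv with rfl | hv
        · rfl
        · exfalso
          obtain ⟨hl, h1, h2⟩ := hs₀good.1 v hv
          exact hnm (Finset.mem_biUnion.mpr ⟨v, hv,
            Finset.mem_filter.mpr ⟨Finset.mem_univ _, by
              rw [show v.1 = p from huv.symm] at hl h1 h2; exact ⟨hl, h1, h2⟩⟩⟩)
        · exfalso
          obtain ⟨hl, h1, h2⟩ := hs₀good.1 u hu
          exact hnm (Finset.mem_biUnion.mpr ⟨u, hu,
            Finset.mem_filter.mpr ⟨Finset.mem_univ _, by
              rw [show u.1 = p from huv] at hl h1 h2; exact ⟨hl, h1, h2⟩⟩⟩)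
        · exact hs₀good.2.1 u hu v hv huv
      · intro u hu v hv huv
        rcases Finset.mem_insert.mp hu with rfl | hu <;>
          rcases Finset.mem_insert.mp hv with rfl | hv
        · rfl
        · exact absurd huv.symm (hnotrow v hv)
        · exact absurd huv (hnotrow u hu)
        · exact hs₀good.2.2 u hu v hv huv
    have := hs₀max _ (Finset.mem_filter.mpr ⟨Finset.mem_univ _, hgood'⟩)
    rw [Finset.card_insert_of_notMem hnotmem] at this
    omega
  have hpairsCard : ∀ i : Fin m, (pairsOf i).card ≤ D * (D - 1) := by
    intro i
    have hsub : pairsOf i ⊆ (univ.filter fun j => A i j = true).offDiag := by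
      intro p hp
      obtain ⟨hlt, h1, h2⟩ := (Finset.mem_filter.mp hp).2
      exact Finset.mem_offDiag.mpr ⟨Finset.mem_filter.mpr ⟨Finset.mem_univ _, h1⟩,
        Finset.mem_filter.mpr ⟨Finset.mem_univ _, h2⟩, ne_of_lt hlt⟩
    have := Finset.card_le_card hsub
    rw [Finset.offDiag_card] at this
    set d := (univ.filter fun j => A i j = true).card
    have hd : d ≤ D := hrowD i
    calc (pairsOf i).card ≤ d * d - d := this
      _ = d * (d - 1) := by
          cases d with
          | zero => rfl
          | succ e => simp [Nat.succ_sub_one, Nat.mul_succ]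
      _ ≤ D * (D - 1) := Nat.mul_le_mul hd (Nat.sub_le_sub_right hd 1)
  have hEcard : E.card ≤ s₀.card * (D * (D - 1)) := by
    calc E.card ≤ (s₀.biUnion (fun u => pairsOf u.2)).card := Finset.card_le_card hcover
      _ ≤ ∑ u ∈ s₀, (pairsOf u.2).card := Finset.card_biUnion_le
      _ ≤ ∑ _u ∈ s₀, D * (D - 1) := Finset.sum_le_sum (fun u _ => hpairsCard u.2)
      _ = s₀.card * (D * (D - 1)) := by rw [Finset.sum_const, smul_eq_mul]
  have hhand : n * x ≤ 2 * E.card := by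
    have h1 : n * x ≤ ∑ j : Fin n, (nbr A j).card := by
      have := Finset.card_nsmul_le_sum Finset.univ (fun j => (nbr A j).card) x
        (fun j _ => hdeg j)
      rwa [Finset.card_univ, Fintype.card_fin, smul_eq_mul] at this
    set Eord : Finset (Fin n × Fin n) :=
      univ.filter (fun p => p.2 ≠ p.1 ∧ ∃ i, A i p.1 = true ∧ A i p.2 = true) with hEord
    have h2 : ∑ j : Fin n, (nbr A j).card = Eord.card := by
      rw [hEord, Finset.card_filter, Fintype.sum_prod_type]
      apply Finset.sum_congr rfl
      intro j _
      rw [nbr, Finset.card_filter]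
    have h3 : Eord ⊆ E ∪ E.image Prod.swap := by
      intro p hp
      obtain ⟨hne', i, h1', h2'⟩ := (Finset.mem_filter.mp hp).2
      rcases lt_or_gt_of_ne (Ne.symm hne') with hlt | hgt
      · exact Finset.mem_union_left _ (Finset.mem_filter.mpr
          ⟨Finset.mem_univ _, hlt, i, h1', h2'⟩)
      · refine Finset.mem_union_right _ (Finset.mem_image.mpr ⟨(p.2, p.1), ?_, rfl⟩)
        exact Finset.mem_filter.mpr ⟨Finset.mem_univ _, hgt, i, h2', h1'⟩
    have h4 : Eord.card ≤ 2 * E.card := by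
      calc Eord.card ≤ (E ∪ E.image Prod.swap).card := Finset.card_le_card h3
        _ ≤ E.card + (E.image Prod.swap).card := Finset.card_union_le _ _
        _ ≤ E.card + E.card := Nat.add_le_add_left Finset.card_image_le _
        _ = 2 * E.card := by ring
    omega
  have hkey : C₁ * n ≤ 2 * s₀.card := by
    have hDD : 0 < D * (D - 1) := by
      have : 1 ≤ D - 1 := by omega
      exact Nat.mul_pos (by omega) this
    have : (D * (D - 1)) * (C₁ * n) ≤ (D * (D - 1)) * (2 * s₀.card) := by
      calc (D * (D - 1)) * (C₁ * n) = n * x := by rw [hx]; ring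
        _ ≤ 2 * E.card := hhand
        _ ≤ 2 * (s₀.card * (D * (D - 1))) := by omega
        _ = (D * (D - 1)) * (2 * s₀.card) := by ring
    exact Nat.le_of_mul_le_mul_left this hDD
  set f : Fin s₀.card → (Fin n × Fin n) × Fin m := fun t => (s₀.equivFin.symm t).val with hf
  have hfmem : ∀ t, f t ∈ s₀ := fun t => (s₀.equivFin.symm t).property
  have hfinj : Function.Injective f :=
    Subtype.val_injective.comp s₀.equivFin.symm.injective
  set B : Fin s₀.card → Fin n → Bool :=
    fun t j => decide (j = (f t).1.1 ∨ j = (f t).1.2) with hB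
  have hBrow : ∀ t, (univ.filter fun j => B t j = true) = {(f t).1.1, (f t).1.2} := by
    intro t
    ext j
    simp [hB, Finset.mem_insert]
  have hBlt : ∀ t, (f t).1.1 < (f t).1.2 := fun t => (hs₀good.1 _ (hfmem t)).1
  have hBcard : ∀ t, (univ.filter fun j => B t j = true).card = 2 := by
    intro t
    rw [hBrow t]
    rw [Finset.card_insert_of_notMem (by simp [ne_of_lt (hBlt t)]), Finset.card_singleton]
  have honesB : onesCount B = 2 * s₀.card := by
    rw [onesCount_eq_sum]
    rw [Finset.sum_congr rfl (fun t _ => hBcard t), Finset.sum_const, Finset.card_univ,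
      Fintype.card_fin, smul_eq_mul, mul_comm]
  have hBinj : Function.Injective B := by
    intro t t' htt
    have h1 : B t (f t).1.1 = true := by simp [hB]
    have h2 : B t (f t).1.2 = true := by simp [hB]
    rw [htt] at h1 h2
    have h1' := of_decide_eq_true h1
    have h2' := of_decide_eq_true h2
    have hlt : ((f t).1.1 : ℕ) < (f t).1.2 := hBlt t
    have hlt' : ((f t').1.1 : ℕ) < (f t').1.2 := hBlt t'
    have hfst : (f t).1 = (f t').1 := by
      have e1 : ((f t).1.1 : ℕ) = (f t').1.1 ∨ ((f t).1.1 : ℕ) = (f t').1.2 := by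
        rcases h1' with h | h
        · exact Or.inl (congrArg Fin.val h)
        · exact Or.inr (congrArg Fin.val h)
      have e2 : ((f t).1.2 : ℕ) = (f t').1.1 ∨ ((f t).1.2 : ℕ) = (f t').1.2 := by
        rcases h2' with h | h
        · exact Or.inl (congrArg Fin.val h)
        · exact Or.inr (congrArg Fin.val h)
      have : ((f t).1.1 : ℕ) = (f t').1.1 ∧ ((f t).1.2 : ℕ) = (f t').1.2 := by omega
      exact Prod.ext (Fin.ext this.1) (Fin.ext this.2)
    exact hfinj (hs₀good.2.1 _ (hfmem t) _ (hfmem t') hfst)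
  have hcontB : ContainsMk k B :=
    h s₀.card n hn B (by rw [honesB]; exact hkey) (fun t => le_of_eq (hBcard t)) hBinj
  refine containsMk_transfer A B (fun t => (f t).2) id ?_ strictMono_id ?_ hcontB
  · intro t t' htt
    exact hfinj (hs₀good.2.2 _ (hfmem t) _ (hfmem t') htt)
  · intro t j hj
    rcases of_decide_eq_true hj with rfl | rfl
    · exact (hs₀good.1 _ (hfmem t)).2.1
    · exact (hs₀good.1 _ (hfmem t)).2.2

end DenseCase

section DeleteCol

lemma delete_col {m N : ℕ} (A : Fin m → Fin (N + 1) → Bool) (j₀ : Fin (N + 1))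
    (hinj : Function.Injective A) :
    ∃ (m' : ℕ) (A' : Fin m' → Fin N → Bool) (ρ : Fin m' → Fin m),
      Function.Injective ρ ∧ Function.Injective A' ∧
      (∀ t l, A' t l = A (ρ t) (j₀.succAbove l)) ∧
      onesCount A ≤ onesCount A' +
        ∑ i ∈ univ.filter (fun i => A i j₀ = true),
          (univ.filter fun j => A i j = true).card := by
  classical
  set V : Fin m → (Fin N → Bool) := fun i l => A i (j₀.succAbove l) with hV
  set S : Finset (Fin N → Bool) := univ.image V with hS
  set e : {v // v ∈ S} ≃ Fin S.card := S.equivFin with he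
  have hρex : ∀ t : Fin S.card, ∃ i, V i = (e.symm t).val := by
    intro t
    obtain ⟨i, _, hi⟩ := Finset.mem_image.mp (e.symm t).property
    exact ⟨i, hi⟩
  choose ρ hρ using hρex
  refine ⟨S.card, fun t l => (e.symm t).val l, ρ, ?_, ?_, ?_, ?_⟩
  case _ =>
    intro t t' htt
    have : (e.symm t).val = (e.symm t').val := by rw [← hρ t, ← hρ t', htt]
    exact e.symm.injective (Subtype.ext this)
  case _ =>
    intro t t' htt
    exact e.symm.injective (Subtype.ext (by exact htt))
  case _ =>
    intro t l
    show (e.symm t).val l = A (ρ t) (j₀.succAbove l)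
    rw [← hρ t]
  case _ =>
    set rc : Fin m → ℕ := fun i => (univ.filter fun j => A i j = true).card with hrc
    set rcv : (Fin N → Bool) → ℕ := fun v => (univ.filter fun l => v l = true).card with hrcv
    have hones : onesCount A = ∑ v ∈ S, ∑ i ∈ univ.filter (fun i => V i = v), rc i := by
      rw [onesCount_eq_sum]
      exact (Finset.sum_fiberwise_of_maps_to
        (fun i _ => Finset.mem_image_of_mem V (mem_univ i)) rc).symm
    have hones' : onesCount (fun t l => (e.symm t).val l) = ∑ v ∈ S, rcv v := by
      rw [onesCount_eq_sum]
      calc ∑ t : Fin S.card, (univ.filter fun l => (e.symm t).val l = true).card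
          = ∑ t : Fin S.card, rcv ((e.symm t).val) := Finset.sum_congr rfl (fun t _ => rfl)
        _ = ∑ v : {v // v ∈ S}, rcv v.val := Equiv.sum_comp e.symm (fun v => rcv v.val)
        _ = ∑ v ∈ S, rcv v := Finset.sum_coe_sort S rcv
    have hfiber : ∀ v ∈ S, ∑ i ∈ univ.filter (fun i => V i = v), rc i
        ≤ rcv v + ∑ i ∈ (univ.filter (fun i => A i j₀ = true)).filter (fun i => V i = v), rc i := by
      intro v _
      have hsplit : ∑ i ∈ univ.filter (fun i => V i = v), rc i
          = ∑ i ∈ (univ.filter (fun i => V i = v)).filter (fun i => A i j₀ = true), rc i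
          + ∑ i ∈ (univ.filter (fun i => V i = v)).filter (fun i => ¬ A i j₀ = true), rc i :=
        (Finset.sum_filter_add_sum_filter_not _ _ _).symm
      have hcomm : (univ.filter (fun i => V i = v)).filter (fun i => A i j₀ = true)
          = (univ.filter (fun i => A i j₀ = true)).filter (fun i => V i = v) := by
        rw [Finset.filter_filter, Finset.filter_filter]
        exact Finset.filter_congr (fun i _ => by tauto)
      set F0 := (univ.filter (fun i => V i = v)).filter (fun i => ¬ A i j₀ = true) with hF0
      have hF0rc : ∀ i ∈ F0, rc i = rcv v := by
        intro i hi
        have hVi : V i = v := (Finset.mem_filter.mp (Finset.mem_filter.mp hi).1).2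
        have hj₀ : A i j₀ = false := by simpa using (Finset.mem_filter.mp hi).2
        rw [hrc, hrcv]
        refine (Finset.card_bij (fun l _ => j₀.succAbove l) ?_ ?_ ?_).symm
        · intro l hl
          have : v l = true := (Finset.mem_filter.mp hl).2
          rw [← hVi] at this
          exact Finset.mem_filter.mpr ⟨mem_univ _, this⟩
        · intro l _ l' _ hll
          exact j₀.succAbove_right_injective hll
        · intro j hj
          have hj1 : A i j = true := (Finset.mem_filter.mp hj).2
          have hne : j ≠ j₀ := fun hjj => by rw [hjj, hj₀] at hj1; exact Bool.noConfusion hj1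
          obtain ⟨l, hl⟩ := Fin.exists_succAbove_eq hne
          refine ⟨l, Finset.mem_filter.mpr ⟨mem_univ _, ?_⟩, hl⟩
          rw [← hVi]
          show A i (j₀.succAbove l) = true
          rw [hl]; exact hj1
      have hF0card : F0.card ≤ 1 := by
        apply Finset.card_le_one.mpr
        intro i hi i' hi'
        have hVi : V i = v := (Finset.mem_filter.mp (Finset.mem_filter.mp hi).1).2
        have hVi' : V i' = v := (Finset.mem_filter.mp (Finset.mem_filter.mp hi').1).2
        have hj₀ : A i j₀ = false := by simpa using (Finset.mem_filter.mp hi).2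
        have hj₀' : A i' j₀ = false := by simpa using (Finset.mem_filter.mp hi').2
        apply hinj
        funext j
        by_cases hjj : j = j₀
        · rw [hjj, hj₀, hj₀']
        · obtain ⟨l, hl⟩ := Fin.exists_succAbove_eq hjj
          have : V i l = V i' l := by rw [hVi, hVi']
          rw [← hl]
          exact this
      have hF0sum : ∑ i ∈ F0, rc i ≤ rcv v := by
        calc ∑ i ∈ F0, rc i = ∑ _i ∈ F0, rcv v := Finset.sum_congr rfl hF0rc
          _ = F0.card * rcv v := by rw [Finset.sum_const, smul_eq_mul]
          _ ≤ 1 * rcv v := Nat.mul_le_mul_right _ hF0card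
          _ = rcv v := one_mul _
      rw [hsplit, hcomm]
      omega
    have hback : ∑ v ∈ S, ∑ i ∈ (univ.filter (fun i => A i j₀ = true)).filter
        (fun i => V i = v), rc i = ∑ i ∈ univ.filter (fun i => A i j₀ = true), rc i :=
      Finset.sum_fiberwise_of_maps_to (fun i _ => Finset.mem_image_of_mem V (mem_univ i)) rc
    calc onesCount A = ∑ v ∈ S, ∑ i ∈ univ.filter (fun i => V i = v), rc i := hones
      _ ≤ ∑ v ∈ S, (rcv v + ∑ i ∈ (univ.filter (fun i => A i j₀ = true)).filter
            (fun i => V i = v), rc i) := Finset.sum_le_sum hfiber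
      _ = ∑ v ∈ S, rcv v + ∑ v ∈ S, ∑ i ∈ (univ.filter (fun i => A i j₀ = true)).filter
            (fun i => V i = v), rc i := Finset.sum_add_distrib
      _ = onesCount (fun t l => (e.symm t).val l)
            + ∑ i ∈ univ.filter (fun i => A i j₀ = true), rc i := by rw [hones', hback]

end DeleteCol

section Main

/-- The ones of the rows containing a "sparse" column `j₀` number at most `gD D (nbr card)`. -/
lemma sparse_col_weight {m n D : ℕ} (A : Fin m → Fin n → Bool) (j₀ : Fin n)
    (hinj : Function.Injective A)
    (hrowD : ∀ i : Fin m, (Finset.univ.filter fun j => A i j = true).card ≤ D) :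
    ∑ i ∈ univ.filter (fun i => A i j₀ = true), (univ.filter fun j => A i j = true).card
      ≤ gD D (nbr A j₀).card := by
  classical
  set R := univ.filter (fun i => A i j₀ = true) with hR
  set T : Fin m → Finset (Fin n) := fun i => (univ.filter fun j => A i j = true).erase j₀
    with hT
  have hmemR : ∀ i ∈ R, A i j₀ = true := fun i hi => (Finset.mem_filter.mp hi).2
  have hcardT : ∀ i ∈ R, (univ.filter fun j => A i j = true).card = (T i).card + 1 := by
    intro i hi
    have hj₀mem : j₀ ∈ (univ.filter fun j => A i j = true) :=
      Finset.mem_filter.mpr ⟨mem_univ _, hmemR i hi⟩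
    rw [hT, Finset.card_erase_of_mem hj₀mem]
    have : 1 ≤ (univ.filter fun j => A i j = true).card :=
      Finset.card_pos.mpr ⟨j₀, hj₀mem⟩
    omega
  have hTinj : ∀ i ∈ R, ∀ i' ∈ R, T i = T i' → i = i' := by
    intro i hi i' hi' hTT
    have hfull : (univ.filter fun j => A i j = true) = (univ.filter fun j => A i' j = true) := by
      have hm1 : j₀ ∈ (univ.filter fun j => A i j = true) :=
        Finset.mem_filter.mpr ⟨mem_univ _, hmemR i hi⟩
      have hm2 : j₀ ∈ (univ.filter fun j => A i' j = true) :=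
        Finset.mem_filter.mpr ⟨mem_univ _, hmemR i' hi'⟩
      have h1 : (univ.filter fun j => A i j = true) = insert j₀ (T i) :=
        (Finset.insert_erase hm1).symm
      have h2 : (univ.filter fun j => A i' j = true) = insert j₀ (T i') :=
        (Finset.insert_erase hm2).symm
      rw [h1, h2, hTT]
    apply hinj
    funext j
    have : (A i j = true) ↔ (A i' j = true) := by
      constructor
      · intro hj
        have hjm : j ∈ univ.filter (fun j' => A i j' = true) :=
          Finset.mem_filter.mpr ⟨mem_univ j, hj⟩
        rw [hfull] at hjm
        exact (Finset.mem_filter.mp hjm).2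
      · intro hj
        have hjm : j ∈ univ.filter (fun j' => A i' j' = true) :=
          Finset.mem_filter.mpr ⟨mem_univ j, hj⟩
        rw [← hfull] at hjm
        exact (Finset.mem_filter.mp hjm).2
    cases hb : A i j with
    | false => cases hb' : A i' j with
      | false => rfl
      | true => exact absurd (this.mpr hb') (by rw [hb]; exact Bool.noConfusion)
    | true => exact (this.mp hb).symm
  calc ∑ i ∈ R, (univ.filter fun j => A i j = true).card
      = ∑ i ∈ R, ((T i).card + 1) := Finset.sum_congr rfl hcardT
    _ = ∑ T' ∈ R.image T, (T'.card + 1) :=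
        (Finset.sum_image (f := fun s : Finset (Fin n) => s.card + 1) hTinj).symm
    _ ≤ gD D (nbr A j₀).card := by
        apply sum_card_add_one_le
        intro T' hT'
        obtain ⟨i, hi, rfl⟩ := Finset.mem_image.mp hT'
        constructor
        · intro b hb
          have hbne : b ≠ j₀ := Finset.ne_of_mem_erase hb
          have hbA : A i b = true := (Finset.mem_filter.mp (Finset.mem_of_mem_erase hb)).2
          exact Finset.mem_filter.mpr ⟨mem_univ _, hbne, i, hmemR i hi, hbA⟩
        · have := hcardT i hi
          have hD' := hrowD i
          omega

/-- The main inductive lemma. -/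
lemma main_induction (k D C₁ : ℕ) (hD : 2 ≤ D)
    (h : ∀ m n : ℕ, 1 ≤ n → ∀ A : Fin m → Fin n → Bool,
      C₁ * n ≤ onesCount A →
      (∀ i : Fin m, (Finset.univ.filter fun j => A i j = true).card ≤ 2) →
      Function.Injective A → ContainsMk k A) :
    ∀ n : ℕ, 1 ≤ n → ∀ (m : ℕ) (A : Fin m → Fin n → Bool),
      gD D (D * (D - 1) * C₁) * n ≤ onesCount A →
      (∀ i : Fin m, (Finset.univ.filter fun j => A i j = true).card ≤ D) →
      Function.Injective A → ContainsMk k A := by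
  intro n
  induction n using Nat.strong_induction_on with
  | _ n ih =>
  intro hn m A hones hrowD hinjA
  set x := D * (D - 1) * C₁ with hx
  by_cases hcase : ∀ j : Fin n, x ≤ (nbr A j).card
  · exact dense_case hD hn A h hrowD hcase
  · push_neg at hcase
    obtain ⟨j₀, hj₀⟩ := hcase
    have hxpos : 1 ≤ x := by omega
    obtain ⟨N, rfl⟩ : ∃ N, n = N + 1 := ⟨n - 1, by omega⟩
    by_cases hN : N = 0
    · -- n = 1 : impossible, too many ones required
      exfalso
      subst hN
      have hm2 : m ≤ 2 := by
        have := Fintype.card_le_of_injective A hinjA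
        simpa using this
      have hone : onesCount A ≤ m := by
        rw [onesCount_eq_sum]
        calc ∑ i : Fin m, (univ.filter fun j => A i j = true).card
            ≤ ∑ _i : Fin m, 1 := Finset.sum_le_sum (fun i _ => by
              calc (univ.filter fun j => A i j = true).card
                  ≤ (univ : Finset (Fin 1)).card := Finset.card_le_card (Finset.filter_subset _ _)
                _ = 1 := by simp)
          _ = m := by simp
      have hgD : 3 ≤ gD D x := by
        have := le_gD (x := x) hD
        omega
      omega
    · -- delete column j₀ and recurse
      obtain ⟨m', A', ρ, hρinj, hA'inj, hA'eq, hcount⟩ := delete_col A j₀ hinjA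
      have hW : ∑ i ∈ univ.filter (fun i => A i j₀ = true),
          (univ.filter fun j => A i j = true).card ≤ gD D x := by
        calc ∑ i ∈ univ.filter (fun i => A i j₀ = true),
              (univ.filter fun j => A i j = true).card
            ≤ gD D (nbr A j₀).card := sparse_col_weight A j₀ hinjA hrowD
          _ ≤ gD D x := gD_mono D (by omega)
      have honesA' : gD D x * N ≤ onesCount A' := by
        have : gD D x * (N + 1) ≤ onesCount A' + gD D x := by
          calc gD D x * (N + 1) ≤ onesCount A := hones
            _ ≤ onesCount A' + ∑ i ∈ univ.filter (fun i => A i j₀ = true),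
                (univ.filter fun j => A i j = true).card := hcount
            _ ≤ onesCount A' + gD D x := by omega
        have hexp : gD D x * (N + 1) = gD D x * N + gD D x := by ring
        omega
      have hrowD' : ∀ t : Fin m', (univ.filter fun l => A' t l = true).card ≤ D := by
        intro t
        calc (univ.filter fun l => A' t l = true).card
            ≤ (univ.filter fun j => A (ρ t) j = true).card := by
              apply Finset.card_le_card_of_injOn (fun l => j₀.succAbove l)
              · intro l hl
                have : A' t l = true := (Finset.mem_filter.mp hl).2
                rw [hA'eq t l] at this
                exact Finset.mem_filter.mpr ⟨mem_univ _, this⟩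
              · intro l _ l' _ hll
                exact j₀.succAbove_right_injective hll
          _ ≤ D := hrowD (ρ t)
      have hcont' : ContainsMk k A' :=
        ih N (by omega) (by omega) m' A' honesA' hrowD' hA'inj
      refine containsMk_transfer A A' ρ j₀.succAbove hρinj (Fin.strictMono_succAbove j₀)
        ?_ hcont'
      intro t l htl
      rw [← hA'eq t l]
      exact htl

end Main

theorem stmt11 (k D : ℕ) (hD : 2 ≤ D) (C₁ : ℕ)
    (h : ∀ m n : ℕ, 1 ≤ n → ∀ A : Fin m → Fin n → Bool,
      C₁ * n ≤ onesCount A →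
      (∀ i : Fin m, (Finset.univ.filter fun j => A i j = true).card ≤ 2) →
      Function.Injective A → ContainsMk k A) :
    ∀ m n : ℕ, 1 ≤ n → ∀ A : Fin m → Fin n → Bool,
      gD D (D * (D - 1) * C₁) * n ≤ onesCount A →
      (∀ i : Fin m, (Finset.univ.filter fun j => A i j = true).card ≤ D) →
      Function.Injective A → ContainsMk k A := by
  intro m n hn A hones hrowD hinjA
  exact main_induction k D C₁ hD h n hn m A hones hrowD hinjA
end

section
/- For every k ∈ ℕ there exists a constant c such that for every permutation π of [k], every n ∈ ℕ, and every ordered hypergraph H on [n] that avoids π, the sum Σ_{E ∈ E(H)} |E| of the sizes of the edges of H is less than c·n. -/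
/-- The ordered hypergraph `H` on `[n]` contains the permutation `π` of `[k]`: there are
vertices `v_1 < … < v_{2k}` and pairwise distinct edges `E_1, …, E_k` of `H` with
`{v_i, v_{π(i)+k}} ⊆ E_i` for every `i ∈ [k]`. -/
def HContainsPerm {n k : ℕ} (H : Finset (Finset (Fin n))) (π : Equiv.Perm (Fin k)) : Prop :=
  ∃ v : Fin (2 * k) → Fin n, StrictMono v ∧ ∃ E : Fin k → Finset (Fin n),
    Function.Injective E ∧ ∀ i : Fin k, E i ∈ H ∧ v (finL k i) ∈ E i ∧ v (finR k (π i)) ∈ E i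


open Finset

/-- Containment of the permutation pattern `σ` in a 0-1 matrix given as a finite set
of positions in `ℕ × ℕ`. -/
def MCon {m : ℕ} (σ : Equiv.Perm (Fin m)) (M : Finset (ℕ × ℕ)) : Prop :=
  ∃ r c : Fin m → ℕ, StrictMono r ∧ StrictMono c ∧ ∀ i, (r i, c (σ i)) ∈ M

/-- block map -/
def blkf (K : ℕ) : ℕ × ℕ → ℕ × ℕ := fun p => (p.1 / K, p.2 / K)

lemma nat_lt_of_div_lt_div {a b c : ℕ} (h : a / c < b / c) : a < b := by
  by_contra hh
  push_neg at hh
  exact absurd (Nat.div_le_div_right (c := c) hh) (not_le.2 h)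

lemma mcon_swap {m : ℕ} (σ : Equiv.Perm (Fin m)) (M : Finset (ℕ × ℕ))
    (h : MCon σ.symm (M.image Prod.swap)) : MCon σ M := by
  obtain ⟨r, c, hr, hc, hp⟩ := h
  refine ⟨c, r, hc, hr, fun i => ?_⟩
  have h2 := hp (σ i)
  rw [Equiv.symm_apply_apply] at h2
  rw [Finset.mem_image] at h2
  obtain ⟨q, hq, hqe⟩ := h2
  have : q = (c i, r (σ i)) := by
    have := congrArg Prod.swap hqe
    simpa using this
  rwa [this] at hq

lemma mcon_blk {m K : ℕ} (σ : Equiv.Perm (Fin m)) (M : Finset (ℕ × ℕ))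
    (h : MCon σ (M.image (blkf K))) : MCon σ M := by
  obtain ⟨r, c, hr, hc, hp⟩ := h
  have hx : ∀ i, ∃ q, q ∈ M ∧ q.1 / K = r i ∧ q.2 / K = c (σ i) := by
    intro i
    have := hp i
    rw [Finset.mem_image] at this
    obtain ⟨q, hq, hqe⟩ := this
    exact ⟨q, hq, congrArg Prod.fst hqe, congrArg Prod.snd hqe⟩
  choose q hqM hq1 hq2 using hx
  refine ⟨fun i => (q i).1, fun t => (q (σ.symm t)).2, ?_, ?_, ?_⟩
  · intro a b hab
    apply nat_lt_of_div_lt_div (c := K)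
    rw [hq1 a, hq1 b]; exact hr hab
  · intro a b hab
    apply nat_lt_of_div_lt_div (c := K)
    rw [hq2 (σ.symm a), hq2 (σ.symm b)]
    simp only [Equiv.apply_symm_apply]
    exact hc hab
  · intro i
    simp only [Equiv.symm_apply_apply]
    exact hqM i

/-- Per-column bound on the number of wide blocks. -/
lemma wide_col (m : ℕ) (hm : 2 ≤ m) (σ : Equiv.Perm (Fin m)) (M : Finset (ℕ × ℕ))
    (hav : ¬ MCon σ M) (J : ℕ) :
    (((M.image (blkf (m*m))).filter
      (fun b => b.2 = J ∧ m ≤ ((M.filter (fun p => blkf (m*m) p = b)).image Prod.snd).card))).card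
      ≤ (m-1) * Nat.choose (m*m) m := by
  classical
  set K := m*m with hK
  by_contra hcon
  push_neg at hcon
  set W := ((M.image (blkf K)).filter
      (fun b => b.2 = J ∧ m ≤ ((M.filter (fun p => blkf K p = b)).image Prod.snd).card)) with hW
  -- a choice of an m-element subset of occupied columns, for each wide block
  have hSfun : ∀ b ∈ W, ∃ S, S ⊆ ((M.filter (fun p => blkf K p = b)).image Prod.snd) ∧ S.card = m := by
    intro b hb
    rw [hW, Finset.mem_filter] at hb
    exact Finset.exists_subset_card_eq hb.2.2
  choose! Sf hSsub hScard using hSfun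
  -- each such subset lies in the column interval of the block column J
  have hmaps : ∀ b ∈ W, Sf b ∈ Finset.powersetCard m (Finset.Ico (J*K) (J*K + K)) := by
    intro b hb
    rw [Finset.mem_powersetCard]
    refine ⟨?_, hScard b hb⟩
    intro x hx
    have hx2 := hSsub b hb hx
    rw [Finset.mem_image] at hx2
    obtain ⟨p, hp, rfl⟩ := hx2
    rw [Finset.mem_filter] at hp
    have hbJ : b.2 = J := by
      rw [hW, Finset.mem_filter] at hb; exact hb.2.1
    have hdiv : p.2 / K = J := by
      have := congrArg Prod.snd hp.2
      simpa [blkf, hbJ] using this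
    have hKpos : 0 < K := by rw [hK]; nlinarith
    rw [Finset.mem_Ico]
    constructor
    · calc J*K = (p.2/K)*K := by rw [hdiv]
        _ ≤ p.2 := Nat.div_mul_le_self _ _
    · have h1 := Nat.div_add_mod p.2 K
      have h2 := Nat.mod_lt p.2 hKpos
      calc p.2 = p.2/K*K + p.2%K := by rw [mul_comm]; exact h1.symm
        _ < p.2/K*K + K := by omega
        _ = J*K + K := by rw [hdiv]
  -- pigeonhole
  have hcard : (Finset.powersetCard m (Finset.Ico (J*K) (J*K + K))).card * (m-1) < W.card := by
    rw [Finset.card_powersetCard, Nat.card_Ico]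
    have : J*K + K - J*K = K := by omega
    rw [this, mul_comm]
    exact hcon
  obtain ⟨S, hS, hfib⟩ := Finset.exists_lt_card_fiber_of_mul_lt_card_of_maps_to hmaps hcard
  -- the fiber consists of blocks in column J with the same column set S
  set F := W.filter (fun b => Sf b = S) with hF
  have hFsub : ∀ b ∈ F, b.2 = J := by
    intro b hb
    rw [hF, Finset.mem_filter, hW, Finset.mem_filter] at hb
    exact hb.1.2.1
  have hfst : m ≤ (F.image Prod.fst).card := by
    rw [Finset.card_image_of_injOn]
    · omega
    · intro a ha b hb hab
      have : a.2 = b.2 := by rw [hFsub a ha, hFsub b hb]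
      exact Prod.ext hab this
  obtain ⟨I, hIsub, hIcard⟩ := Finset.exists_subset_card_eq hfst
  have hScard' : S.card = m := (Finset.mem_powersetCard.1 hS).2
  set re := I.orderEmbOfFin hIcard with hre
  set ce := S.orderEmbOfFin hScard' with hce
  -- for each i, find a cell of M in block (re i, J) with column ce (σ i)
  have hcell : ∀ i : Fin m, ∃ p, p ∈ M ∧ p.1 / K = re i ∧ p.2 = ce (σ i) := by
    intro i
    have hri : re i ∈ I := Finset.orderEmbOfFin_mem _ _ _
    have := hIsub hri
    rw [Finset.mem_image] at this
    obtain ⟨b, hbF, hb1⟩ := this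
    have hSb : Sf b = S := by
      rw [hF, Finset.mem_filter] at hbF; exact hbF.2
    have hbW : b ∈ W := by rw [hF, Finset.mem_filter] at hbF; exact hbF.1
    have hcmem : ce (σ i) ∈ (M.filter (fun p => blkf K p = b)).image Prod.snd := by
      apply hSsub b hbW
      rw [hSb]
      exact Finset.orderEmbOfFin_mem _ _ _
    rw [Finset.mem_image] at hcmem
    obtain ⟨p, hp, hp2⟩ := hcmem
    rw [Finset.mem_filter] at hp
    refine ⟨p, hp.1, ?_, hp2⟩
    have := congrArg Prod.fst hp.2
    simpa [blkf, hb1] using this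
  choose p hpM hp1 hp2 using hcell
  apply hav
  refine ⟨fun i => (p i).1, fun t => ce t, ?_, ?_, ?_⟩
  · intro a b hab
    apply nat_lt_of_div_lt_div (c := K)
    rw [hp1 a, hp1 b]
    exact re.strictMono hab
  · exact ce.strictMono
  · intro i
    have : ((p i).1, ce (σ i)) = p i := Prod.ext rfl (hp2 i).symm
    rw [this]
    exact hpM i

lemma wide_total (m : ℕ) (hm : 2 ≤ m) (σ : Equiv.Perm (Fin m)) (M : Finset (ℕ × ℕ))
    (hav : ¬ MCon σ M) (s : ℕ)
    (hM : ∀ p ∈ M, p.2 / (m*m) < s) :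
    ((M.image (blkf (m*m))).filter
      (fun b => m ≤ ((M.filter (fun p => blkf (m*m) p = b)).image Prod.snd).card)).card
      ≤ s * ((m-1) * Nat.choose (m*m) m) := by
  classical
  set W := ((M.image (blkf (m*m))).filter
      (fun b => m ≤ ((M.filter (fun p => blkf (m*m) p = b)).image Prod.snd).card)) with hW
  have hmaps : ∀ b ∈ W, b.2 ∈ Finset.range s := by
    intro b hb
    rw [hW, Finset.mem_filter, Finset.mem_image] at hb
    obtain ⟨⟨p, hp, rfl⟩, _⟩ := hb
    rw [Finset.mem_range]
    exact hM p hp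
  rw [Finset.card_eq_sum_card_fiberwise hmaps]
  have hbnd : ∀ J ∈ Finset.range s,
      (W.filter (fun b => b.2 = J)).card ≤ (m-1) * Nat.choose (m*m) m := by
    intro J _
    have heq : W.filter (fun b => b.2 = J) = ((M.image (blkf (m*m))).filter
      (fun b => b.2 = J ∧ m ≤ ((M.filter (fun p => blkf (m*m) p = b)).image Prod.snd).card)) := by
      rw [hW, Finset.filter_filter]
      apply Finset.filter_congr
      intro b _
      tauto
    rw [heq]
    exact wide_col m hm σ M hav J
  calc ∑ J ∈ Finset.range s, (W.filter (fun b => b.2 = J)).card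
      ≤ ∑ J ∈ Finset.range s, (m-1) * Nat.choose (m*m) m := Finset.sum_le_sum hbnd
    _ = s * ((m-1) * Nat.choose (m*m) m) := by rw [Finset.sum_const, Finset.card_range, smul_eq_mul]

lemma arithMT (m B n s X : ℕ) (hm : 2 ≤ m) (hn : m*m*(m*m) < n)
    (hs : (m*m)*s ≤ n + m*m)
    (hX : X = 2*(m-1)*B*((m*m)*(m*m))*((m*m)+2) + (m*m)^4) :
    2*(s*((m-1) * B))*((m*m)*(m*m)) + (m-1)*((m-1)*(X*(s+1))) ≤ X*(n+1) := by
  set K := m*m with hKdef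
  set a1 := 2*(m-1)*B*(K*K) with ha1
  have hkey : 1 + (m-1)*(m-1)*(K+2) ≤ K*K := by
    obtain ⟨t, rfl⟩ : ∃ t, m = t + 2 := ⟨m - 2, by omega⟩
    have h1 : t + 2 - 1 = t + 1 := by omega
    rw [hKdef, h1]
    nlinarith [sq_nonneg t, t.zero_le]
  have hXeq : X = a1*(K+2) + K^4 := by rw [hX, ha1, hKdef]
  have hXa : a1*(K+2) ≤ X := by rw [hXeq]; exact Nat.le_add_right _ _
  set L := 2*(s*((m-1) * B))*(K*K) + (m-1)*((m-1)*(X*(s+1))) with hL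
  set A := a1 + (m-1)*(m-1)*X with hA
  have h1 : L ≤ A*(s+1) := by
    have e1 : 2*(s*((m-1)*B))*(K*K) = a1*s := by rw [ha1]; ring
    rw [hL, e1, hA]
    calc a1*s + (m-1)*((m-1)*(X*(s+1))) ≤ a1*(s+1) + (m-1)*((m-1)*(X*(s+1))) := by
          exact Nat.add_le_add_right (Nat.mul_le_mul_left _ (Nat.le_succ s)) _
      _ = (a1 + (m-1)*(m-1)*X)*(s+1) := by ring
  have h2 : (K*K)*(s+1) ≤ (K+2)*(n+1) := by
    have hKs : K*(K*s) ≤ K*(n+K) := Nat.mul_le_mul_left _ hs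
    nlinarith [hKs, hn]
  have h3 : A*(K+2) ≤ X*(K*K) := by
    rw [hA]
    calc (a1 + (m-1)*(m-1)*X)*(K+2) = a1*(K+2) + (m-1)*(m-1)*(K+2)*X := by ring
      _ ≤ X*1 + ((m-1)*(m-1)*(K+2))*X := by
          exact Nat.add_le_add_right (by simpa using hXa) _
      _ = (1 + (m-1)*(m-1)*(K+2))*X := by ring
      _ ≤ (K*K)*X := Nat.mul_le_mul_right _ hkey
      _ = X*(K*K) := by ring
  have hcomb : (K*K) * L ≤ (K*K) * (X*(n+1)) := by
    calc (K*K)*L = L*(K*K) := by ring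
      _ ≤ (A*(s+1))*(K*K) := Nat.mul_le_mul_right _ h1
      _ = A*((K*K)*(s+1)) := by ring
      _ ≤ A*((K+2)*(n+1)) := Nat.mul_le_mul_left _ h2
      _ = (A*(K+2))*(n+1) := by ring
      _ ≤ (X*(K*K))*(n+1) := Nat.mul_le_mul_right _ h3
      _ = (K*K)*(X*(n+1)) := by ring
  have hKK : 0 < K*K := by
    have hm0 : 0 < m := by omega
    rw [hKdef]; positivity
  exact Nat.le_of_mul_le_mul_left hcomb hKK

lemma div_eq_imp_Ico {K x b : ℕ} (hK : 0 < K) (h : x / K = b) : b*K ≤ x ∧ x < b*K + K := by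
  subst h
  refine ⟨Nat.div_mul_le_self x K, ?_⟩
  have h1 := Nat.div_add_mod x K
  have h2 := Nat.mod_lt x hK
  calc x = K*(x/K) + x%K := h1.symm
    _ < K*(x/K) + K := by omega
    _ = x/K*K + K := by ring

lemma tall_total (m : ℕ) (hm : 2 ≤ m) (σ : Equiv.Perm (Fin m)) (M : Finset (ℕ × ℕ))
    (hav : ¬ MCon σ M) (s : ℕ)
    (hM : ∀ p ∈ M, p.1 / (m*m) < s) :
    ((M.image (blkf (m*m))).filter
      (fun b => m ≤ ((M.filter (fun p => blkf (m*m) p = b)).image Prod.fst).card)).card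
      ≤ s * ((m-1) * Nat.choose (m*m) m) := by
  classical
  set Mt := M.image Prod.swap with hMt
  have havt : ¬ MCon σ.symm Mt := fun hc => hav (mcon_swap σ M hc)
  have hMt2 : ∀ p ∈ Mt, p.2 / (m*m) < s := by
    intro p hp
    rw [hMt, Finset.mem_image] at hp
    obtain ⟨q, hq, rfl⟩ := hp
    simpa using hM q hq
  have hbig := wide_total m hm σ.symm Mt havt s hMt2
  refine le_trans (Finset.card_le_card_of_injOn Prod.swap ?_ ?_) hbig
  · intro b hbm
    rw [Finset.mem_coe, Finset.mem_filter] at hbm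
    rw [Finset.mem_coe, Finset.mem_filter]
    have hswapblk : ∀ p : ℕ × ℕ, blkf (m*m) (Prod.swap p) = Prod.swap (blkf (m*m) p) := by
      intro p; rfl
    constructor
    · obtain ⟨p, hp, rfl⟩ := Finset.mem_image.1 hbm.1
      exact Finset.mem_image.2 ⟨p.swap, Finset.mem_image_of_mem _ hp, hswapblk p⟩
    · have hfibeq : Mt.filter (fun p => blkf (m*m) p = b.swap)
          = (M.filter (fun p => blkf (m*m) p = b)).image Prod.swap := by
        ext q
        rw [Finset.mem_filter]
        constructor
        · rintro ⟨hq1, hq2⟩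
          rw [hMt] at hq1
          obtain ⟨p, hp, rfl⟩ := Finset.mem_image.1 hq1
          rw [Finset.mem_image]
          refine ⟨p, Finset.mem_filter.2 ⟨hp, ?_⟩, rfl⟩
          have := hq2
          rw [hswapblk] at this
          exact Prod.swap_injective this
        · intro hq
          rw [Finset.mem_image] at hq
          obtain ⟨p, hp, rfl⟩ := hq
          rw [Finset.mem_filter] at hp
          refine ⟨by rw [hMt]; exact Finset.mem_image_of_mem _ hp.1, ?_⟩
          rw [hswapblk, hp.2]
      rw [hfibeq, Finset.image_image]
      have heq2 : (Prod.snd ∘ Prod.swap : ℕ × ℕ → ℕ) = Prod.fst := rfl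
      rw [heq2]
      exact hbm.2
  · intro a _ b _ h
    exact Prod.swap_injective h

/-- Marcus-Tardos theorem, with sloppy constants. -/
theorem MTmain (m : ℕ) (σ : Equiv.Perm (Fin m)) :
    ∃ a : ℕ, ∀ n : ℕ, ∀ M : Finset (ℕ × ℕ),
      (∀ p ∈ M, p.1 < n ∧ p.2 < n) → ¬ MCon σ M → M.card ≤ a * (n+1) := by
  classical
  rcases Nat.lt_or_ge m 2 with hm | hm
  · -- degenerate cases m = 0, 1
    interval_cases m
    · refine ⟨0, fun n M hb hav => absurd ?_ hav⟩
      refine ⟨Fin.elim0, Fin.elim0, ?_, ?_, fun i => i.elim0⟩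
      · intro a; exact a.elim0
      · intro a; exact a.elim0
    · refine ⟨0, fun n M hb hav => ?_⟩
      rcases M.eq_empty_or_nonempty with rfl | ⟨p, hp⟩
      · simp
      · exfalso
        apply hav
        refine ⟨fun _ => p.1, fun _ => p.2, ?_, ?_, fun i => ?_⟩
        · intro a b h
          exfalso
          have h1 := a.isLt; have h2 := b.isLt
          rw [Fin.lt_def] at h
          omega
        · intro a b h
          exfalso
          have h1 := a.isLt; have h2 := b.isLt
          rw [Fin.lt_def] at h
          omega
        · simpa using hp
  · set B := Nat.choose (m*m) m with hB
    set X := 2*(m-1)*B*((m*m)*(m*m))*((m*m)+2) + (m*m)^4 with hX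
    refine ⟨X, ?_⟩
    intro n
    induction n using Nat.strong_induction_on with
    | _ n ih =>
    intro M hb hav
    have hm0 : 0 < m := by omega
    have hKpos : 0 < m*m := by positivity
    by_cases hn : n ≤ m*m*(m*m)
    · -- base case
      have hsub : M ⊆ Finset.range n ×ˢ Finset.range n := by
        intro p hp
        rw [Finset.mem_product, Finset.mem_range, Finset.mem_range]
        exact hb p hp
      have h1 : M.card ≤ n*n := by
        calc M.card ≤ (Finset.range n ×ˢ Finset.range n).card := Finset.card_le_card hsub
          _ = n*n := by rw [Finset.card_product, Finset.card_range]
      have h2 : m*m*(m*m) ≤ X := by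
        calc m*m*(m*m) = (m*m)^2 := by ring
          _ ≤ (m*m)^4 := Nat.pow_le_pow_right (by omega) (by omega)
          _ ≤ X := by rw [hX]; exact Nat.le_add_left _ _
      calc M.card ≤ n*n := h1
        _ ≤ (m*m*(m*m))*n := Nat.mul_le_mul_right n hn
        _ ≤ X*n := Nat.mul_le_mul_right n h2
        _ ≤ X*(n+1) := Nat.mul_le_mul_left X (Nat.le_succ n)
    · push_neg at hn
      set s := (n-1)/(m*m) + 1 with hsdef
      have hdivlt : ∀ x, x < n → x/(m*m) < s := by
        intro x hx
        have h1 : x/(m*m) ≤ (n-1)/(m*m) := Nat.div_le_div_right (by omega)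
        omega
      have h4m : 4 ≤ m*m := by nlinarith
      have hq4 : 4*((n-1)/(m*m)) ≤ n-1 := by
        calc 4*((n-1)/(m*m)) ≤ (m*m)*((n-1)/(m*m)) := Nat.mul_le_mul_right _ h4m
          _ = ((n-1)/(m*m))*(m*m) := by ring
          _ ≤ n-1 := Nat.div_mul_le_self _ _
      have h16 : 16 ≤ m*m*(m*m) := by nlinarith
      have hslt : s < n := by omega
      have hs' : (m*m)*s ≤ n + m*m := by
        rw [hsdef]
        have h5 : ((n-1)/(m*m))*(m*m) ≤ n-1 := Nat.div_mul_le_self _ _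
        calc (m*m)*((n-1)/(m*m) + 1) = ((n-1)/(m*m))*(m*m) + m*m := by ring
          _ ≤ (n-1) + m*m := by omega
          _ ≤ n + m*m := by omega
      set M' := M.image (blkf (m*m)) with hM'
      have hb' : ∀ b ∈ M', b.1 < s ∧ b.2 < s := by
        intro b hbm
        rw [hM', Finset.mem_image] at hbm
        obtain ⟨p, hp, rfl⟩ := hbm
        exact ⟨hdivlt _ (hb p hp).1, hdivlt _ (hb p hp).2⟩
      have hav' : ¬ MCon σ M' := fun hc => hav (mcon_blk σ M hc)
      have hIH : M'.card ≤ X*(s+1) := ih s hslt M' hb' hav'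
      have hmapsfib : ∀ p ∈ M, blkf (m*m) p ∈ M' := fun p hp => Finset.mem_image_of_mem _ hp
      rw [Finset.card_eq_sum_card_fiberwise hmapsfib]
      have hpoint : ∀ b ∈ M', (M.filter (fun p => blkf (m*m) p = b)).card ≤
          (if (m ≤ ((M.filter (fun p => blkf (m*m) p = b)).image Prod.snd).card
             ∨ m ≤ ((M.filter (fun p => blkf (m*m) p = b)).image Prod.fst).card)
           then (m*m)*(m*m) else (m-1)*(m-1)) := by
        intro b _
        set fib := M.filter (fun p => blkf (m*m) p = b) with hfib
        by_cases hwt : (m ≤ (fib.image Prod.snd).card ∨ m ≤ (fib.image Prod.fst).card)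
        · rw [if_pos hwt]
          have hsub : fib ⊆ Finset.Ico (b.1*(m*m)) (b.1*(m*m)+(m*m)) ×ˢ
              Finset.Ico (b.2*(m*m)) (b.2*(m*m)+(m*m)) := by
            intro p hp
            rw [hfib, Finset.mem_filter] at hp
            have e1 : p.1/(m*m) = b.1 := congrArg Prod.fst hp.2
            have e2 : p.2/(m*m) = b.2 := congrArg Prod.snd hp.2
            obtain ⟨a1, a2⟩ := div_eq_imp_Ico hKpos e1
            obtain ⟨a3, a4⟩ := div_eq_imp_Ico hKpos e2
            rw [Finset.mem_product, Finset.mem_Ico, Finset.mem_Ico]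
            exact ⟨⟨a1, a2⟩, ⟨a3, a4⟩⟩
          calc fib.card ≤ _ := Finset.card_le_card hsub
            _ = (m*m)*(m*m) := by
                rw [Finset.card_product, Nat.card_Ico, Nat.card_Ico,
                  Nat.add_sub_cancel_left, Nat.add_sub_cancel_left]
        · rw [if_neg hwt]
          push_neg at hwt
          have hsub : fib ⊆ (fib.image Prod.fst) ×ˢ (fib.image Prod.snd) := by
            intro p hp
            rw [Finset.mem_product]
            exact ⟨Finset.mem_image_of_mem _ hp, Finset.mem_image_of_mem _ hp⟩
          calc fib.card ≤ _ := Finset.card_le_card hsub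
            _ = (fib.image Prod.fst).card * (fib.image Prod.snd).card := Finset.card_product _ _
            _ ≤ (m-1)*(m-1) := by
                have q1 := hwt.1; have q2 := hwt.2
                exact Nat.mul_le_mul (by omega) (by omega)
      have hsplit := Finset.sum_le_sum hpoint
      rw [Finset.sum_ite] at hsplit
      rw [Finset.sum_const, Finset.sum_const, smul_eq_mul, smul_eq_mul] at hsplit
      -- bound the number of wide-or-tall blocks
      have hWT : (M'.filter (fun b => m ≤ ((M.filter (fun p => blkf (m*m) p = b)).image Prod.snd).card
             ∨ m ≤ ((M.filter (fun p => blkf (m*m) p = b)).image Prod.fst).card)).card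
           ≤ 2*(s*((m-1)*B)) := by
        rw [Finset.filter_or]
        calc _ ≤ (M'.filter (fun b => m ≤ ((M.filter (fun p => blkf (m*m) p = b)).image Prod.snd).card)).card
              + (M'.filter (fun b => m ≤ ((M.filter (fun p => blkf (m*m) p = b)).image Prod.fst).card)).card :=
              Finset.card_union_le _ _
          _ ≤ s*((m-1)*B) + s*((m-1)*B) := by
              refine Nat.add_le_add ?_ ?_
              · exact wide_total m hm σ M hav s (fun p hp => hdivlt _ (hb p hp).2)
              · exact tall_total m hm σ M hav s (fun p hp => hdivlt _ (hb p hp).1)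
          _ = 2*(s*((m-1)*B)) := by ring
      have hRest : (M'.filter (fun b => ¬(m ≤ ((M.filter (fun p => blkf (m*m) p = b)).image Prod.snd).card
             ∨ m ≤ ((M.filter (fun p => blkf (m*m) p = b)).image Prod.fst).card))).card
           ≤ X*(s+1) := le_trans (Finset.card_le_card (Finset.filter_subset _ _)) hIH
      have harith := arithMT m B n s X hm hn hs' hX
      calc ∑ b ∈ M', (M.filter (fun p => blkf (m*m) p = b)).card
          ≤ _ := hsplit
        _ ≤ 2*(s*((m-1)*B)) * ((m*m)*(m*m)) + X*(s+1) * ((m-1)*(m-1)) := by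
            exact Nat.add_le_add (Nat.mul_le_mul_right _ hWT) (Nat.mul_le_mul_right _ hRest)
        _ = 2*(s*((m-1)*B))*((m*m)*(m*m)) + (m-1)*((m-1)*(X*(s+1))) := by ring
        _ ≤ X*(n+1) := harith

/-! ### Families of finite sets of naturals -/

/-- minimum of a finset of naturals (0 if empty) -/
def mn (A : Finset ℕ) : ℕ := if h : A.Nonempty then A.min' h else 0

lemma mn_mem {A : Finset ℕ} (h : A.Nonempty) : mn A ∈ A := by
  rw [mn, dif_pos h]; exact A.min'_mem h

lemma mn_le {A : Finset ℕ} {x : ℕ} (h : x ∈ A) : mn A ≤ x := by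
  rw [mn, dif_pos ⟨x, h⟩]; exact A.min'_le x h

/-- The min-based matrix of a family. -/
def famM (G : Finset (Finset ℕ)) : Finset (ℕ × ℕ) :=
  G.biUnion (fun A => (A.erase (mn A)).image (fun v => (mn A, v)))

lemma mem_famM {G : Finset (Finset ℕ)} {u v : ℕ} :
    (u, v) ∈ famM G ↔ ∃ A ∈ G, mn A = u ∧ v ∈ A.erase (mn A) := by
  simp only [famM, Finset.mem_biUnion, Finset.mem_image]
  constructor
  · rintro ⟨A, hA, w, hw, heq⟩
    exact ⟨A, hA, congrArg Prod.fst heq, by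
      have : w = v := congrArg Prod.snd heq
      rwa [← this]⟩
  · rintro ⟨A, hA, h1, h2⟩
    exact ⟨A, hA, v, h2, by rw [h1]⟩

lemma famM_lt {G : Finset (Finset ℕ)} {u v : ℕ} (h : (u, v) ∈ famM G) : u < v := by
  rw [mem_famM] at h
  obtain ⟨A, _, rfl, h2⟩ := h
  rw [Finset.mem_erase] at h2
  exact lt_of_le_of_ne (mn_le h2.2) (Ne.symm h2.1)

/-- Containment of the pattern `π` with the first `j` left legs dropped, in a family of sets. -/
def ContainsPat (k : ℕ) (π : Equiv.Perm (Fin k)) (j : ℕ) (G : Finset (Finset ℕ)) : Prop :=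
  ∃ A : Fin k → Finset ℕ, (∀ i, A i ∈ G) ∧ Function.Injective A ∧
  ∃ w : Fin k → ℕ, StrictMono w ∧ (∀ i, w (π i) ∈ A i) ∧
  ∃ l : Fin k → ℕ,
    (∀ i₁ i₂ : Fin k, j ≤ i₁.1 → i₁ < i₂ → l i₁ < l i₂) ∧
    (∀ (i t : Fin k), j ≤ i.1 → l i < w t) ∧
    (∀ i : Fin k, j ≤ i.1 → l i ∈ A i)

lemma containsPat_mono {k : ℕ} {π : Equiv.Perm (Fin k)} {j j' : ℕ} {G : Finset (Finset ℕ)}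
    (hjj : j ≤ j') (h : ContainsPat k π j G) : ContainsPat k π j' G := by
  obtain ⟨A, h1, h2, w, h3, h4, l, h5, h6, h7⟩ := h
  exact ⟨A, h1, h2, w, h3, h4, l,
    fun i₁ i₂ ha hb => h5 i₁ i₂ (le_trans hjj ha) hb,
    fun i t ha => h6 i t (le_trans hjj ha),
    fun i ha => h7 i (le_trans hjj ha)⟩

/-- The `2k`-pattern used for the min-matrix argument. -/
def sigmaStar (k : ℕ) (π : Equiv.Perm (Fin k)) : Equiv.Perm (Fin (k+k)) :=
  finSumFinEquiv.symm.trans ((((π.sumCongr (Equiv.refl (Fin k)))).trans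
    (Equiv.sumComm (Fin k) (Fin k))).trans finSumFinEquiv)

lemma sigmaStar_castAdd (k : ℕ) (π : Equiv.Perm (Fin k)) (i : Fin k) :
    sigmaStar k π (Fin.castAdd k i) = Fin.natAdd k (π i) := by
  simp [sigmaStar]

lemma sigmaStar_natAdd (k : ℕ) (π : Equiv.Perm (Fin k)) (i : Fin k) :
    sigmaStar k π (Fin.natAdd k i) = Fin.castAdd k i := by
  rw [sigmaStar]
  simp only [Equiv.trans_apply, finSumFinEquiv_symm_apply_natAdd, Equiv.sumCongr_apply,
    Sum.map_inr, id_eq, Equiv.sumComm_apply, Sum.swap_inr, finSumFinEquiv_apply_left,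
    Equiv.refl_apply]

lemma famM_transfer (k : ℕ) (hk : 0 < k) (π : Equiv.Perm (Fin k)) (G : Finset (Finset ℕ))
    (h : MCon (sigmaStar k π) (famM G)) : ContainsPat k π 0 G := by
  obtain ⟨r, c, hr, hc, hp⟩ := h
  set l : Fin k → ℕ := fun i => r (Fin.castAdd k i) with hl
  set w : Fin k → ℕ := fun t => c (Fin.natAdd k t) with hw
  have hlmono : StrictMono l := by
    intro a b hab
    apply hr
    rw [Fin.lt_def] at hab ⊢
    simpa using hab
  have hwmono : StrictMono w := by
    intro a b hab
    apply hc
    rw [Fin.lt_def] at hab ⊢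
    simp only [Fin.coe_natAdd]
    omega
  have hpair : ∀ i : Fin k, (l i, w (π i)) ∈ famM G := by
    intro i
    have := hp (Fin.castAdd k i)
    rwa [sigmaStar_castAdd] at this
  have hx : ∀ i : Fin k, ∃ A, A ∈ G ∧ mn A = l i ∧ w (π i) ∈ A.erase (mn A) := by
    intro i
    obtain ⟨A, h1, h2, h3⟩ := (mem_famM).1 (hpair i)
    exact ⟨A, h1, h2, h3⟩
  choose A hAG hAmn hAw using hx
  have hord : r (Fin.natAdd k ⟨0, hk⟩) < c (Fin.castAdd k ⟨0, hk⟩) := by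
    have := hp (Fin.natAdd k ⟨0, hk⟩)
    rw [sigmaStar_natAdd] at this
    exact famM_lt this
  have hlw : ∀ (i t : Fin k), l i < w t := by
    intro i t
    have h1 : r (Fin.castAdd k i) < r (Fin.natAdd k ⟨0,hk⟩) := by
      apply hr
      rw [Fin.lt_def]
      simp only [Fin.coe_castAdd, Fin.coe_natAdd]
      have := i.isLt
      omega
    have h2 : c (Fin.castAdd k ⟨0,hk⟩) ≤ c (Fin.natAdd k t) := by
      apply le_of_lt
      apply hc
      rw [Fin.lt_def]
      simp only [Fin.coe_castAdd, Fin.coe_natAdd]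
      omega
    rw [hl, hw]
    dsimp only
    omega
  refine ⟨A, hAG, ?_, w, hwmono, fun i => Finset.mem_of_mem_erase (hAw i), l,
    fun i₁ i₂ _ hab => hlmono hab, fun i t _ => hlw i t, fun i _ => ?_⟩
  · intro a b hab
    have heq : mn (A a) = mn (A b) := by rw [hab]
    rw [hAmn a, hAmn b] at heq
    exact hlmono.injective heq
  · rw [← hAmn i]
    exact mn_mem ⟨w (π i), Finset.mem_of_mem_erase (hAw i)⟩

lemma mem_ground {G : Finset (Finset ℕ)} {A : Finset ℕ} {x : ℕ} (hA : A ∈ G) (hx : x ∈ A) :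
    x ∈ G.sup id := by
  exact (Finset.le_sup (f := id) hA : A ⊆ G.sup id) hx

lemma famM_sub {G : Finset (Finset ℕ)} {u v : ℕ} (h : (u, v) ∈ famM G) :
    u ∈ G.sup id ∧ v ∈ G.sup id := by
  rw [mem_famM] at h
  obtain ⟨A, hA, rfl, h2⟩ := h
  have hv : v ∈ A := Finset.mem_of_mem_erase h2
  exact ⟨mem_ground hA (mn_mem ⟨v, hv⟩), mem_ground hA hv⟩

lemma compress_card {m : ℕ} (σ : Equiv.Perm (Fin m)) (V : Finset ℕ) (M : Finset (ℕ × ℕ))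
    (hMV : ∀ p ∈ M, p.1 ∈ V ∧ p.2 ∈ V) (hav : ¬ MCon σ M) (a : ℕ)
    (hMT : ∀ n : ℕ, ∀ N : Finset (ℕ × ℕ),
      (∀ p ∈ N, p.1 < n ∧ p.2 < n) → ¬ MCon σ N → N.card ≤ a * (n+1)) :
    M.card ≤ a * (V.card + 1) := by
  classical
  set ν := V.card with hν
  set iso := V.orderIsoOfFin hν.symm with hiso
  set d : ℕ → ℕ := fun x => if h : x ∈ V then (iso.symm ⟨x, h⟩ : Fin ν).1 else 0 with hd
  set e : ℕ → ℕ := fun y => if h : y < ν then ((iso ⟨y, h⟩ : V) : ℕ) else 0 with he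
  have hed : ∀ x ∈ V, e (d x) = x := by
    intro x hx
    rw [hd]
    dsimp only
    rw [dif_pos hx, he]
    dsimp only
    rw [dif_pos (iso.symm ⟨x, hx⟩).isLt]
    have h1 : (⟨(iso.symm ⟨x, hx⟩ : Fin ν).1, (iso.symm ⟨x, hx⟩).isLt⟩ : Fin ν)
        = iso.symm ⟨x, hx⟩ := by apply Fin.ext; rfl
    rw [h1, OrderIso.apply_symm_apply]
  have hdlt : ∀ x ∈ V, d x < ν := by
    intro x hx
    rw [hd]
    dsimp only
    rw [dif_pos hx]
    exact (iso.symm ⟨x, hx⟩).isLt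
  have hemono : ∀ x y, x < y → y < ν → e x < e y := by
    intro x y hxy hy
    rw [he]
    dsimp only
    rw [dif_pos hy, dif_pos (lt_trans hxy hy)]
    have : (⟨x, lt_trans hxy hy⟩ : Fin ν) < ⟨y, hy⟩ := by rw [Fin.lt_def]; exact hxy
    have h2 := iso.lt_iff_lt.2 this
    exact h2
  set F : ℕ × ℕ → ℕ × ℕ := fun p => (d p.1, d p.2) with hF
  set N := M.image F with hN
  have hcard : N.card = M.card := by
    rw [hN]
    apply Finset.card_image_of_injOn
    intro p hp q hq hpq
    have hp1 := (hMV p hp).1; have hp2 := (hMV p hp).2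
    have hq1 := (hMV q hq).1; have hq2 := (hMV q hq).2
    have hfst : d p.1 = d q.1 := congrArg Prod.fst hpq
    have hsnd : d p.2 = d q.2 := congrArg Prod.snd hpq
    have e1 : e (d p.1) = e (d q.1) := by rw [hfst]
    have e2 : e (d p.2) = e (d q.2) := by rw [hsnd]
    rw [hed _ hp1, hed _ hq1] at e1
    rw [hed _ hp2, hed _ hq2] at e2
    exact Prod.ext e1 e2
  have hNb : ∀ p ∈ N, p.1 < ν ∧ p.2 < ν := by
    intro p hp
    rw [hN, Finset.mem_image] at hp
    obtain ⟨q, hq, rfl⟩ := hp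
    exact ⟨hdlt _ (hMV q hq).1, hdlt _ (hMV q hq).2⟩
  have hNav : ¬ MCon σ N := by
    rintro ⟨r, c, hrm, hcm, hpp⟩
    apply hav
    have hx : ∀ i, ∃ q, q ∈ M ∧ d q.1 = r i ∧ d q.2 = c (σ i) := by
      intro i
      have := hpp i
      rw [hN, Finset.mem_image] at this
      obtain ⟨q, hq, hqe⟩ := this
      exact ⟨q, hq, congrArg Prod.fst hqe, congrArg Prod.snd hqe⟩
    choose q hqM hq1 hq2 using hx
    have hrl : ∀ i, r i < ν := fun i => by
      have := hNb _ (hpp i); exact this.1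
    have hcl : ∀ t, c t < ν := by
      intro t
      have := hNb _ (hpp (σ.symm t))
      rw [Equiv.apply_symm_apply] at this
      exact this.2
    refine ⟨fun i => e (r i), fun t => e (c t), ?_, ?_, ?_⟩
    · intro i j hij
      exact hemono _ _ (hrm hij) (hrl j)
    · intro i j hij
      exact hemono _ _ (hcm hij) (hcl j)
    · intro i
      have e1 : e (r i) = (q i).1 := by
        rw [← hq1 i, hed _ (hMV _ (hqM i)).1]
      have e2 : e (c (σ i)) = (q i).2 := by
        rw [← hq2 i, hed _ (hMV _ (hqM i)).2]
      show (e (r i), e (c (σ i))) ∈ M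
      rw [e1, e2]
      exact hqM i
  calc M.card = N.card := hcard.symm
    _ ≤ a * (ν + 1) := hMT ν N hNb hNav

/-! ### Families avoiding patterns have small total size -/

def FamBound (k : ℕ) (π : Equiv.Perm (Fin k)) (j : ℕ) (C : ℕ) : Prop :=
  ∀ G : Finset (Finset ℕ), (∀ A ∈ G, A.Nonempty) → ¬ ContainsPat k π j G →
    ∑ A ∈ G, A.card ≤ C * ((G.sup id).card + 1)

def HasSDR (G : Finset (Finset ℕ)) (t : ℕ) : Prop :=
  ∃ (A : Fin t → Finset ℕ) (x : Fin t → ℕ), (∀ i, A i ∈ G) ∧ Function.Injective A ∧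
    Function.Injective x ∧ ∀ i, x i ∈ A i

lemma hasSDR_zero (G : Finset (Finset ℕ)) : HasSDR G 0 :=
  ⟨Fin.elim0, Fin.elim0, fun i => i.elim0, fun i => i.elim0, fun i => i.elim0, fun i => i.elim0⟩

lemma hasSDR_mono {G : Finset (Finset ℕ)} {t t' : ℕ} (h : HasSDR G t') (htt : t ≤ t') :
    HasSDR G t := by
  obtain ⟨A, x, h1, h2, h3, h4⟩ := h
  exact ⟨A ∘ Fin.castLE htt, x ∘ Fin.castLE htt, fun i => h1 _,
    h2.comp (Fin.castLE_injective htt), h3.comp (Fin.castLE_injective htt), fun i => h4 _⟩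

lemma hasSDR_le_card {G : Finset (Finset ℕ)} {t : ℕ} (h : HasSDR G t) : t ≤ G.card := by
  classical
  obtain ⟨A, x, h1, h2, h3, h4⟩ := h
  calc t = (Finset.univ : Finset (Fin t)).card := by rw [Finset.card_univ, Fintype.card_fin]
    _ = (Finset.univ.image A).card := (Finset.card_image_of_injective _ h2).symm
    _ ≤ G.card := Finset.card_le_card (by
        intro B hB
        rw [Finset.mem_image] at hB
        obtain ⟨i, _, rfl⟩ := hB
        exact h1 i)

lemma sdr_to_containsPat {k : ℕ} (π : Equiv.Perm (Fin k)) {G : Finset (Finset ℕ)}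
    (h : HasSDR G k) : ContainsPat k π k G := by
  classical
  obtain ⟨Af, xf, hAG, hAinj, hxinj, hxa⟩ := h
  set R := Finset.image xf Finset.univ with hR
  have hRcard : R.card = k := by
    rw [hR, Finset.card_image_of_injective _ hxinj, Finset.card_univ, Fintype.card_fin]
  set wemb := R.orderEmbOfFin hRcard with hwemb
  have hw : ∀ t : Fin k, ∃ i, xf i = wemb t := by
    intro t
    have hmem : (wemb t : ℕ) ∈ R := Finset.orderEmbOfFin_mem _ _ _
    rw [hR, Finset.mem_image] at hmem
    obtain ⟨i, _, hi⟩ := hmem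
    exact ⟨i, hi⟩
  choose hfun hspec using hw
  have hhinj : Function.Injective hfun := by
    intro a b hab
    have : wemb a = wemb b := by rw [← hspec a, ← hspec b, hab]
    exact wemb.injective this
  refine ⟨fun i => Af (hfun (π i)), fun i => hAG _, ?_, fun t => wemb t, wemb.strictMono,
    fun i => ?_, fun _ => 0, ?_, ?_, ?_⟩
  · intro a b hab
    exact π.injective (hhinj (hAinj hab))
  · show wemb (π i) ∈ Af (hfun (π i))
    rw [← hspec (π i)]
    exact hxa _
  · intro i₁ i₂ h _
    exact absurd h (Nat.not_le.2 i₁.isLt)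
  · intro i t h
    exact absurd h (Nat.not_le.2 i.isLt)
  · intro i h
    exact absurd h (Nat.not_le.2 i.isLt)

lemma fam_base (k : ℕ) (π : Equiv.Perm (Fin k)) :
    FamBound k π k (k + 2^k * k) := by
  classical
  intro G hne hav
  have hsdr : ¬ HasSDR G k := fun h => hav (sdr_to_containsPat π h)
  set t₀ := Nat.findGreatest (fun t => HasSDR G t) G.card with ht0
  have hPt0 : HasSDR G t₀ := Nat.findGreatest_spec (Nat.zero_le _) (hasSDR_zero G)
  have ht0k : t₀ < k := by
    by_contra hcon
    push_neg at hcon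
    exact hsdr (hasSDR_mono hPt0 hcon)
  obtain ⟨Af, xf, hAG, hAinj, hxinj, hxa⟩ := hPt0
  set T := Finset.image Af Finset.univ with hT
  set Xs := Finset.image xf Finset.univ with hXs
  have hTcard : T.card = t₀ := by
    rw [hT, Finset.card_image_of_injective _ hAinj, Finset.card_univ, Fintype.card_fin]
  have hXcard : Xs.card = t₀ := by
    rw [hXs, Finset.card_image_of_injective _ hxinj, Finset.card_univ, Fintype.card_fin]
  -- every member of G not in T is a subset of Xs
  have hkey : ∀ A ∈ G, A ∉ T → A ⊆ Xs := by
    intro A hA hAT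
    intro y hy
    by_contra hyX
    -- extend the matching
    have hext : HasSDR G (t₀+1) := by
      set Af' : Fin (t₀+1) → Finset ℕ :=
        fun i => if h : i.1 < t₀ then Af ⟨i.1, h⟩ else A with hAf'
      set xf' : Fin (t₀+1) → ℕ :=
        fun i => if h : i.1 < t₀ then xf ⟨i.1, h⟩ else y with hxf'
      have hAfT : ∀ (z : Fin t₀), Af z ∈ T := fun z =>
        Finset.mem_image.2 ⟨z, Finset.mem_univ _, rfl⟩
      have hxfX : ∀ (z : Fin t₀), xf z ∈ Xs := fun z =>
        Finset.mem_image.2 ⟨z, Finset.mem_univ _, rfl⟩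
      refine ⟨Af', xf', ?_, ?_, ?_, ?_⟩
      · intro i
        rw [hAf']
        dsimp only
        split
        · exact hAG _
        · exact hA
      · intro a b hab
        rw [hAf'] at hab
        dsimp only at hab
        by_cases ha : a.1 < t₀ <;> by_cases hb : b.1 < t₀
        · rw [dif_pos ha, dif_pos hb] at hab
          have h3 := congrArg Fin.val (hAinj hab)
          apply Fin.ext
          exact h3
        · rw [dif_pos ha, dif_neg hb] at hab
          exact absurd (hab ▸ hAfT ⟨a.1, ha⟩) hAT
        · rw [dif_neg ha, dif_pos hb] at hab
          exact absurd (hab.symm ▸ hAfT ⟨b.1, hb⟩) hAT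
        · apply Fin.ext
          have h1 := a.isLt; have h2 := b.isLt
          omega
      · intro a b hab
        rw [hxf'] at hab
        dsimp only at hab
        by_cases ha : a.1 < t₀ <;> by_cases hb : b.1 < t₀
        · rw [dif_pos ha, dif_pos hb] at hab
          have h3 := congrArg Fin.val (hxinj hab)
          apply Fin.ext
          exact h3
        · rw [dif_pos ha, dif_neg hb] at hab
          exact absurd (hab ▸ hxfX ⟨a.1, ha⟩) hyX
        · rw [dif_neg ha, dif_pos hb] at hab
          exact absurd (hab.symm ▸ hxfX ⟨b.1, hb⟩) hyX
        · apply Fin.ext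
          have h1 := a.isLt; have h2 := b.isLt
          omega
      · intro i
        rw [hAf', hxf']
        dsimp only
        split
        · exact hxa _
        · exact hy
    have hle : t₀ + 1 ≤ G.card := hasSDR_le_card hext
    exact Nat.findGreatest_is_greatest (Nat.lt_succ_self _) hle hext
  -- now count
  have hbound : ∀ A ∈ G, A.card ≤ (G.sup id).card := by
    intro A hA
    exact Finset.card_le_card (fun x hx => mem_ground hA hx)
  set ν := (G.sup id).card with hν
  have hsplit := Finset.sum_filter_add_sum_filter_not G (fun A => A ∈ T) (fun A => A.card)
  have h1 : ∑ A ∈ G.filter (fun A => A ∈ T), A.card ≤ k * ν := by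
    calc ∑ A ∈ G.filter (fun A => A ∈ T), A.card
        ≤ (G.filter (fun A => A ∈ T)).card • ν := Finset.sum_le_card_nsmul _ _ _
          (fun A hA => hbound A (Finset.mem_filter.1 hA).1)
      _ = (G.filter (fun A => A ∈ T)).card * ν := smul_eq_mul ..
      _ ≤ t₀ * ν := Nat.mul_le_mul_right _ (by
          calc (G.filter (fun A => A ∈ T)).card
              ≤ T.card := Finset.card_le_card (fun A hA => (Finset.mem_filter.1 hA).2)
            _ = t₀ := hTcard)
      _ ≤ k * ν := Nat.mul_le_mul_right _ (by omega)
  have h2 : ∑ A ∈ G.filter (fun A => A ∉ T), A.card ≤ 2^k * k := by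
    have hcc : (G.filter (fun A => A ∉ T)).card ≤ 2^k := by
      calc (G.filter (fun A => A ∉ T)).card
          ≤ (Xs.powerset).card := Finset.card_le_card (fun A hA => by
            rw [Finset.mem_powerset]
            rw [Finset.mem_filter] at hA
            exact hkey A hA.1 hA.2)
        _ = 2^Xs.card := Finset.card_powerset _
        _ ≤ 2^k := Nat.pow_le_pow_right (by omega) (by omega)
    calc ∑ A ∈ G.filter (fun A => A ∉ T), A.card
        ≤ (G.filter (fun A => A ∉ T)).card • k := Finset.sum_le_card_nsmul _ _ _
          (fun A hA => by
            rw [Finset.mem_filter] at hA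
            calc A.card ≤ Xs.card := Finset.card_le_card (hkey A hA.1 hA.2)
              _ ≤ k := by omega)
      _ = (G.filter (fun A => A ∉ T)).card * k := smul_eq_mul ..
      _ ≤ 2^k * k := Nat.mul_le_mul_right _ hcc
  calc ∑ A ∈ G, A.card
      = ∑ A ∈ G.filter (fun A => A ∈ T), A.card
        + ∑ A ∈ G.filter (fun A => A ∉ T), A.card := hsplit.symm
    _ ≤ k*ν + 2^k*k := Nat.add_le_add h1 h2
    _ ≤ k*(ν+1) + (2^k*k)*(ν+1) := Nat.add_le_add
        (Nat.mul_le_mul_left _ (Nat.le_succ ν))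
        (Nat.le_mul_of_pos_right _ (Nat.succ_pos ν))
    _ = (k + 2^k*k)*(ν+1) := by ring

lemma fam_step (k : ℕ) (hk : 0 < k) (π : Equiv.Perm (Fin k)) (j C' : ℕ)
    (hIH : FamBound k π (j+1) C') : ∃ C, FamBound k π j C := by
  classical
  obtain ⟨a, hMT⟩ := MTmain (k+k) (sigmaStar k π)
  refine ⟨1 + 2*C' + 2*C'*a, ?_⟩
  intro G hne hav
  set V := G.sup id with hV
  set ν := V.card with hν
  set M := famM G with hM
  have hMav : ¬ MCon (sigmaStar k π) M := by
    intro hcon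
    exact hav (containsPat_mono (Nat.zero_le j) (famM_transfer k hk π G hcon))
  have hMV : ∀ p ∈ M, p.1 ∈ V ∧ p.2 ∈ V := by
    intro p hp
    obtain ⟨u, v⟩ := p
    exact famM_sub hp
  have hMcard : M.card ≤ a * (ν + 1) := compress_card _ V M hMV hMav a hMT
  set U := G.image mn with hU
  have hUsub : U ⊆ V := by
    intro u hu
    rw [hU, Finset.mem_image] at hu
    obtain ⟨A, hA, rfl⟩ := hu
    exact mem_ground hA (mn_mem (hne A hA))
  have hUν : U.card ≤ ν := Finset.card_le_card hUsub
  have hmaps : ∀ A ∈ G, mn A ∈ U := fun A hA => Finset.mem_image_of_mem _ hA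
  have hsum := Finset.sum_fiberwise_of_maps_to hmaps (fun A => A.card)
  rw [← hsum]
  have hperu : ∀ u ∈ U, ∑ A ∈ G.filter (fun A => mn A = u), A.card
      ≤ 1 + 2*C' + 2*C'*(M.filter (fun p => p.1 = u)).card := by
    intro u _
    set Fu := G.filter (fun A => mn A = u) with hFu
    have huF : ∀ A ∈ Fu, u ∈ A := by
      intro A hA
      rw [hFu, Finset.mem_filter] at hA
      exact hA.2 ▸ mn_mem (hne A hA.1)
    have hWinj : ∀ A ∈ Fu, ∀ B ∈ Fu, A.erase u = B.erase u → A = B := by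
      intro A hA B hB hAB
      rw [← Finset.insert_erase (huF A hA), ← Finset.insert_erase (huF B hB), hAB]
    set Eu := Fu.image (fun A => A.erase u) with hEu
    set Gu := Eu.erase ∅ with hGu
    have hGu_ne : ∀ B ∈ Gu, B.Nonempty := fun B hB =>
      Finset.nonempty_iff_ne_empty.2 (Finset.ne_of_mem_erase hB)
    have hGu_gt : ∀ B ∈ Gu, ∀ x ∈ B, u < x := by
      intro B hB x hx
      have hB' : B ∈ Eu := Finset.mem_of_mem_erase hB
      rw [hEu, Finset.mem_image] at hB'
      obtain ⟨A, hAF, rfl⟩ := hB'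
      rw [hFu, Finset.mem_filter] at hAF
      rw [Finset.mem_erase] at hx
      exact lt_of_le_of_ne (hAF.2 ▸ mn_le hx.2) (Ne.symm hx.1)
    have hGuav : ¬ ContainsPat k π (j+1) Gu := by
      intro hcon
      apply hav
      obtain ⟨B, hBG, hBinj, w, hwm, hwB, l, hl1, hl2, hl3⟩ := hcon
      have hlift : ∀ i, insert u (B i) ∈ G ∧ u ∉ B i := by
        intro i
        have hBi := Finset.mem_of_mem_erase (hBG i)
        rw [hEu, Finset.mem_image] at hBi
        obtain ⟨A, hAF, hAe⟩ := hBi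
        rw [hFu, Finset.mem_filter] at hAF
        have huA : u ∈ A := hAF.2 ▸ mn_mem (hne A hAF.1)
        constructor
        · rw [← hAe, Finset.insert_erase huA]; exact hAF.1
        · rw [← hAe]; exact Finset.notMem_erase u A
      refine ⟨fun i => insert u (B i), fun i => (hlift i).1, ?_, w, hwm,
        fun i => Finset.mem_insert_of_mem (hwB i),
        fun i => if i.1 = j then u else l i, ?_, ?_, ?_⟩
      · intro a' b' hab
        apply hBinj
        have hab' : insert u (B a') = insert u (B b') := hab
        have h1 : (insert u (B a')).erase u = (insert u (B b')).erase u := by rw [hab']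
        rwa [Finset.erase_insert (hlift a').2, Finset.erase_insert (hlift b').2] at h1
      · intro i₁ i₂ hj hlt
        dsimp only
        rw [Fin.lt_def] at hlt
        by_cases h1 : i₁.1 = j
        · rw [if_pos h1, if_neg (by omega : ¬ i₂.1 = j)]
          exact hGu_gt _ (hBG i₂) _ (hl3 i₂ (by omega))
        · rw [if_neg h1, if_neg (by omega : ¬ i₂.1 = j)]
          exact hl1 i₁ i₂ (by omega) (by rw [Fin.lt_def]; omega)
      · intro i t hj
        dsimp only
        by_cases h1 : i.1 = j
        · rw [if_pos h1]
          have hwmem : w t ∈ B (π.symm t) := by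
            have := hwB (π.symm t)
            rwa [Equiv.apply_symm_apply] at this
          exact hGu_gt _ (hBG _) _ hwmem
        · rw [if_neg h1]
          exact hl2 i t (by omega)
      · intro i hj
        dsimp only
        by_cases h1 : i.1 = j
        · rw [if_pos h1]; exact Finset.mem_insert_self u (B i)
        · rw [if_neg h1]
          exact Finset.mem_insert_of_mem (hl3 i (by omega))
    have hGuV : (Gu.sup id).card ≤ (M.filter (fun p => p.1 = u)).card := by
      have hsub : Gu.sup id ⊆ (M.filter (fun p => p.1 = u)).image Prod.snd := by
        intro x hx
        rw [Finset.mem_sup] at hx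
        obtain ⟨B, hB, hxB⟩ := hx
        have hB' : B ∈ Eu := Finset.mem_of_mem_erase hB
        rw [hEu, Finset.mem_image] at hB'
        obtain ⟨A, hAF, hAe⟩ := hB'
        rw [hFu, Finset.mem_filter] at hAF
        have hpm : (u, x) ∈ M := by
          rw [hM, mem_famM]
          refine ⟨A, hAF.1, hAF.2, ?_⟩
          rw [hAF.2, hAe]
          exact hxB
        rw [Finset.mem_image]
        exact ⟨(u,x), Finset.mem_filter.2 ⟨hpm, rfl⟩, rfl⟩
      calc (Gu.sup id).card ≤ ((M.filter (fun p => p.1 = u)).image Prod.snd).card :=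
            Finset.card_le_card hsub
        _ ≤ (M.filter (fun p => p.1 = u)).card := Finset.card_image_le
    have hIHu := hIH Gu hGu_ne hGuav
    have hFuEu : Fu.card = Eu.card := (Finset.card_image_of_injOn hWinj).symm
    have hEuGu : Eu.card ≤ Gu.card + 1 := by
      have hss : Eu ⊆ insert ∅ Gu := by
        intro B hB
        by_cases hBe : B = ∅
        · rw [hBe]; exact Finset.mem_insert_self _ _
        · exact Finset.mem_insert_of_mem (Finset.mem_erase.2 ⟨hBe, hB⟩)
      calc Eu.card ≤ (insert ∅ Gu).card := Finset.card_le_card hss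
        _ ≤ Gu.card + 1 := Finset.card_insert_le _ _
    have hGucard : Gu.card ≤ ∑ B ∈ Gu, B.card := by
      calc Gu.card = ∑ _B ∈ Gu, 1 := by rw [Finset.sum_const, smul_eq_mul, mul_one]
        _ ≤ ∑ B ∈ Gu, B.card := Finset.sum_le_sum
            (fun B hB => Finset.card_pos.2 (hGu_ne B hB))
    have hsum1 : ∑ A ∈ Fu, A.card = Fu.card + ∑ B ∈ Eu, B.card := by
      have hc : ∀ A ∈ Fu, A.card = (A.erase u).card + 1 := by
        intro A hA
        exact (Finset.card_erase_add_one (huF A hA)).symm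
      have himg : ∑ B ∈ Eu, B.card = ∑ A ∈ Fu, (A.erase u).card := by
        rw [hEu]
        exact Finset.sum_image hWinj
      calc ∑ A ∈ Fu, A.card = ∑ A ∈ Fu, ((A.erase u).card + 1) := Finset.sum_congr rfl hc
        _ = (∑ A ∈ Fu, (A.erase u).card) + ∑ _A ∈ Fu, 1 := Finset.sum_add_distrib
        _ = Fu.card + ∑ B ∈ Eu, B.card := by
            rw [himg, Finset.sum_const, smul_eq_mul, mul_one]
            ring
    have hsum2 : ∑ B ∈ Eu, B.card = ∑ B ∈ Gu, B.card := by
      rw [hGu]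
      exact (Finset.sum_erase _ (by simp)).symm
    calc ∑ A ∈ Fu, A.card = Fu.card + ∑ B ∈ Eu, B.card := hsum1
      _ = Fu.card + ∑ B ∈ Gu, B.card := by rw [hsum2]
      _ ≤ (Gu.card + 1) + ∑ B ∈ Gu, B.card :=
          Nat.add_le_add_right (le_trans (le_of_eq hFuEu) hEuGu) _
      _ ≤ ((∑ B ∈ Gu, B.card) + 1) + ∑ B ∈ Gu, B.card := by omega
      _ = 1 + 2*(∑ B ∈ Gu, B.card) := by ring
      _ ≤ 1 + 2*(C' * ((Gu.sup id).card + 1)) :=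
          Nat.add_le_add_left (Nat.mul_le_mul_left 2 hIHu) 1
      _ ≤ 1 + 2*(C' * ((M.filter (fun p => p.1 = u)).card + 1)) := by
          have := Nat.mul_le_mul_left C' (Nat.add_le_add_right hGuV 1)
          omega
      _ = 1 + 2*C' + 2*C'*(M.filter (fun p => p.1 = u)).card := by ring
  have hdisj : ∑ u ∈ U, (M.filter (fun p => p.1 = u)).card ≤ M.card := by
    rw [← Finset.card_biUnion]
    · exact Finset.card_le_card (Finset.biUnion_subset.2 (fun u _ => Finset.filter_subset _ _))
    · intro u _ v _ huv
      rw [Function.onFun, Finset.disjoint_left]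
      intro p hp1 hp2
      rw [Finset.mem_filter] at hp1 hp2
      exact huv (hp1.2 ▸ hp2.2 ▸ rfl)
  calc ∑ u ∈ U, ∑ A ∈ G.filter (fun A => mn A = u), A.card
      ≤ ∑ u ∈ U, (1 + 2*C' + 2*C'*(M.filter (fun p => p.1 = u)).card) :=
        Finset.sum_le_sum hperu
    _ = U.card * (1 + 2*C') + 2*C' * ∑ u ∈ U, (M.filter (fun p => p.1 = u)).card := by
        rw [Finset.sum_add_distrib, Finset.sum_const, smul_eq_mul, ← Finset.mul_sum]
    _ ≤ ν * (1 + 2*C') + 2*C' * (a * (ν+1)) := Nat.add_le_add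
        (Nat.mul_le_mul_right _ hUν)
        (Nat.mul_le_mul_left _ (le_trans hdisj hMcard))
    _ ≤ (1 + 2*C') * (ν+1) + (2*C'*a) * (ν+1) := Nat.add_le_add
        (by calc ν * (1 + 2*C') ≤ (ν+1) * (1+2*C') :=
              Nat.mul_le_mul_right _ (Nat.le_succ ν)
            _ = (1 + 2*C') * (ν+1) := Nat.mul_comm _ _)
        (le_of_eq (by ring))
    _ = (1 + 2*C' + 2*C'*a) * (ν + 1) := by ring

lemma fam_all (k : ℕ) (hk : 0 < k) (π : Equiv.Perm (Fin k)) : ∃ C, FamBound k π 0 C := by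
  have key : ∀ d : ℕ, ∃ C, FamBound k π (k - d) C := by
    intro d
    induction d with
    | zero => exact ⟨k + 2^k*k, fam_base k π⟩
    | succ d ih =>
      obtain ⟨C', hC'⟩ := ih
      by_cases hd : d < k
      · have he : k - d = (k - (d+1)) + 1 := by omega
        rw [he] at hC'
        exact fam_step k hk π (k - (d+1)) C' hC'
      · have he : k - (d+1) = k - d := by omega
        rw [he]
        exact ⟨C', hC'⟩
  have h := key k
  rwa [Nat.sub_self] at h

lemma per_pi (k : ℕ) (hk : 0 < k) (π : Equiv.Perm (Fin k)) :
    ∃ c : ℕ, ∀ n : ℕ, 1 ≤ n → ∀ H : Finset (Finset (Fin n)), (∀ e ∈ H, 2 ≤ e.card) →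
      ¬ HContainsPerm H π → ∑ E ∈ H, E.card < c * n := by
  classical
  obtain ⟨C, hC⟩ := fam_all k hk π
  refine ⟨2*C + 1, ?_⟩
  intro n hn H h2 hav
  set G := H.image (fun E => E.image Fin.val) with hG
  have hinj : ∀ E₁ ∈ H, ∀ E₂ ∈ H, E₁.image Fin.val = E₂.image Fin.val → E₁ = E₂ := by
    intro E₁ _ E₂ _ h
    ext v
    constructor
    · intro hv
      have : (v : ℕ) ∈ E₂.image Fin.val := h ▸ Finset.mem_image_of_mem _ hv
      rw [Finset.mem_image] at this
      obtain ⟨w, hw, hwv⟩ := this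
      rwa [← Fin.ext hwv]
    · intro hv
      have : (v : ℕ) ∈ E₁.image Fin.val := h.symm ▸ Finset.mem_image_of_mem _ hv
      rw [Finset.mem_image] at this
      obtain ⟨w, hw, hwv⟩ := this
      rwa [← Fin.ext hwv]
  have hGne : ∀ A ∈ G, A.Nonempty := by
    intro A hA
    rw [hG, Finset.mem_image] at hA
    obtain ⟨E, hE, rfl⟩ := hA
    exact Finset.Nonempty.image (Finset.card_pos.1 (by have := h2 E hE; omega)) _
  have hGav : ¬ ContainsPat k π 0 G := by
    intro hcon
    apply hav
    obtain ⟨A, hAG, hAinj, w, hwm, hwA, l, hl1, hl2, hl3⟩ := hcon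
    have hx : ∀ i, ∃ E, E ∈ H ∧ E.image Fin.val = A i := by
      intro i
      have := hAG i
      rw [hG, Finset.mem_image] at this
      obtain ⟨E, hE1, hE2⟩ := this
      exact ⟨E, hE1, hE2⟩
    choose Ef hEH hEA using hx
    have hmem : ∀ {x : ℕ} {i : Fin k}, x ∈ A i → x < n := by
      intro x i hx'
      rw [← hEA i, Finset.mem_image] at hx'
      obtain ⟨v, _, rfl⟩ := hx'
      exact v.isLt
    have hla : ∀ i : Fin k, l i ∈ A i := fun i => hl3 i (Nat.zero_le _)
    have hwa : ∀ t : Fin k, w t ∈ A (π.symm t) := fun t => by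
      have := hwA (π.symm t)
      rwa [Equiv.apply_symm_apply] at this
    have hln : ∀ i, l i < n := fun i => hmem (hla i)
    have hwn : ∀ t, w t < n := fun t => hmem (hwa t)
    set v : Fin (2*k) → Fin n := fun t =>
      if h : t.1 < k then ⟨l ⟨t.1, h⟩, hln _⟩
      else ⟨w ⟨t.1 - k, by have := t.isLt; omega⟩, hwn _⟩ with hv
    have hvL : ∀ i : Fin k, v (finL k i) = ⟨l i, hln i⟩ := by
      intro i
      rw [hv]
      dsimp only
      rw [dif_pos (show (finL k i).1 < k from i.isLt)]
      rfl
    have hvR : ∀ t : Fin k, v (finR k t) = ⟨w t, hwn t⟩ := by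
      intro t
      rw [hv]
      dsimp only
      rw [dif_neg (show ¬ (finR k t).1 < k by simp [finR])]
      apply Fin.ext
      show w _ = w t
      congr 1
      apply Fin.ext
      show (finR k t).1 - k = t.1
      simp [finR]
    refine ⟨v, ?_, Ef, ?_, ?_⟩
    · intro s t hst
      rw [Fin.lt_def] at hst
      rw [hv]
      dsimp only
      by_cases hs : s.1 < k <;> by_cases ht : t.1 < k
      · rw [dif_pos hs, dif_pos ht, Fin.lt_def]
        exact hl1 ⟨s.1, hs⟩ ⟨t.1, ht⟩ (Nat.zero_le _) (by rw [Fin.lt_def]; exact hst)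
      · rw [dif_pos hs, dif_neg ht, Fin.lt_def]
        exact hl2 _ _ (Nat.zero_le _)
      · exact absurd hst (by omega)
      · rw [dif_neg hs, dif_neg ht, Fin.lt_def]
        exact hwm (show (⟨s.1 - k, _⟩ : Fin k) < ⟨t.1 - k, _⟩ by rw [Fin.lt_def]; dsimp; omega)
    · intro i1 i2 h
      apply hAinj
      rw [← hEA i1, ← hEA i2, h]
    · intro i
      refine ⟨hEH i, ?_, ?_⟩
      · rw [hvL i]
        have hm := hla i
        rw [← hEA i, Finset.mem_image] at hm
        obtain ⟨y, hy, hyv⟩ := hm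
        have : (⟨l i, hln i⟩ : Fin n) = y := Fin.ext hyv.symm
        rwa [this]
      · rw [hvR (π i)]
        have hm := hwA i
        rw [← hEA i, Finset.mem_image] at hm
        obtain ⟨y, hy, hyv⟩ := hm
        have : (⟨w (π i), hwn (π i)⟩ : Fin n) = y := Fin.ext hyv.symm
        rwa [this]
  have hsum : ∑ A ∈ G, A.card = ∑ E ∈ H, E.card := by
    rw [hG, Finset.sum_image hinj]
    exact Finset.sum_congr rfl (fun E _ => Finset.card_image_of_injective _ Fin.val_injective)
  have hground : (G.sup id).card ≤ n := by
    have hsub : G.sup id ⊆ Finset.range n := by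
      intro x hx
      rw [Finset.mem_sup] at hx
      obtain ⟨A, hA, hxA⟩ := hx
      rw [hG, Finset.mem_image] at hA
      obtain ⟨E, _, rfl⟩ := hA
      simp only [id_eq] at hxA
      rw [Finset.mem_image] at hxA
      obtain ⟨y, _, rfl⟩ := hxA
      rw [Finset.mem_range]
      exact y.isLt
    calc (G.sup id).card ≤ (Finset.range n).card := Finset.card_le_card hsub
      _ = n := Finset.card_range n
  calc ∑ E ∈ H, E.card = ∑ A ∈ G, A.card := hsum.symm
    _ ≤ C * ((G.sup id).card + 1) := hC G hGne hGav
    _ ≤ C * (n + 1) := Nat.mul_le_mul_left _ (Nat.add_le_add_right hground 1)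
    _ ≤ C * (2*n) := Nat.mul_le_mul_left _ (by omega)
    _ = 2*C*n := by ring
    _ < (2*C + 1)*n := by nlinarith

theorem stmt12 (k : ℕ) :
    ∃ c : ℕ, ∀ (π : Equiv.Perm (Fin k)) (n : ℕ), 1 ≤ n →
      ∀ H : Finset (Finset (Fin n)),
        -- `H` is an ordered hypergraph: every edge has size at least 2
        (∀ e ∈ H, 2 ≤ e.card) →
        -- `H` avoids `π`
        ¬HContainsPerm H π →
        ∑ E ∈ H, E.card < c * n := by
  rcases Nat.eq_zero_or_pos k with rfl | hk
  · refine ⟨1, fun π n hn H h2 hav => ?_⟩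
    exfalso
    apply hav
    refine ⟨fun i => i.elim0, ?_, fun i => i.elim0, ?_, fun i => i.elim0⟩
    · intro i; exact i.elim0
    · intro i; exact i.elim0
  · have hper := fun π => per_pi k hk π
    choose f hf using hper
    refine ⟨(Finset.univ : Finset (Equiv.Perm (Fin k))).sup f, fun π n hn H h2 hav => ?_⟩
    calc ∑ E ∈ H, E.card < f π * n := hf π n hn H h2 hav
      _ ≤ (Finset.univ : Finset (Equiv.Perm (Fin k))).sup f * n :=
        Nat.mul_le_mul_right n (Finset.le_sup (Finset.mem_univ π))
end

section
/- Let k ∈ ℕ, let π be a permutation of [k], and let c ∈ ℕ with c ≥ 1 be such that for every m ∈ ℕ, every ordered hypergraph H on [m] that avoids π satisfies Σ_{E ∈ E(H)} |E| < c·m. Then for every n ∈ ℕ, |T_{2n}(π)| ≤ |T_n(π)| · 3^{2c²n}, where T_m(π) denotes the set of ordered hypergraphs on [m] that avoid π. -/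
/-- `T_m(π)`: the set of ordered hypergraphs on `[m]` that avoid `π`. -/
def Tset (m : ℕ) {k : ℕ} (π : Equiv.Perm (Fin k)) : Set (Finset (Finset (Fin m))) :=
  {H | (∀ e ∈ H, 2 ≤ e.card) ∧ ¬HContainsPerm H π}

open Finset

/-- contraction of vertices: `v ↦ ⌊v/2⌋`. -/
def ctr {n : ℕ} (v : Fin (2 * n)) : Fin n := ⟨v.1 / 2, by have := v.isLt; omega⟩

def up0 {n : ℕ} (a : Fin n) : Fin (2 * n) := ⟨2 * a.1, by have := a.isLt; omega⟩
def up1 {n : ℕ} (a : Fin n) : Fin (2 * n) := ⟨2 * a.1 + 1, by have := a.isLt; omega⟩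

lemma ctr_eq_iff {n : ℕ} (v : Fin (2 * n)) (a : Fin n) :
    ctr v = a ↔ v = up0 a ∨ v = up1 a := by
  simp only [ctr, up0, up1, Fin.ext_iff]
  omega

lemma ctr_up0 {n : ℕ} (a : Fin n) : ctr (up0 a) = a := by
  rw [ctr_eq_iff]; exact Or.inl rfl

lemma ctr_up1 {n : ℕ} (a : Fin n) : ctr (up1 a) = a := by
  rw [ctr_eq_iff]; exact Or.inr rfl

/-- the expansion pattern of an edge. -/
def pat {n : ℕ} (E : Finset (Fin (2 * n))) : Fin n → Bool × Bool :=
  fun a => (decide (up0 a ∈ E), decide (up1 a ∈ E))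

lemma pat_injective {n : ℕ} : Function.Injective (pat (n := n)) := by
  intro E F hEF
  ext v
  have h := congrFun hEF (ctr v)
  have hv : v = up0 (ctr v) ∨ v = up1 (ctr v) := (ctr_eq_iff v _).1 rfl
  simp only [pat, Prod.mk.injEq, decide_eq_decide] at h
  rcases hv with hv | hv
  · rw [hv]; exact ⟨fun hh => h.1.1 hh, fun hh => h.1.2 hh⟩
  · rw [hv]; exact ⟨fun hh => h.2.1 hh, fun hh => h.2.2 hh⟩

/-- the contracted hypergraph on `[n]`. -/
def contractH {n : ℕ} (H : Finset (Finset (Fin (2 * n)))) : Finset (Finset (Fin n)) :=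
  (H.image (fun E => E.image ctr)).filter (fun A => 2 ≤ A.card)

/-- If `H` avoids `π`, so does its contraction. -/
lemma contractH_avoids {n k : ℕ} (π : Equiv.Perm (Fin k)) (H : Finset (Finset (Fin (2 * n))))
    (hav : ¬ HContainsPerm H π) : ¬ HContainsPerm (contractH H) π := by
  rintro ⟨v, hv, A, hAinj, hA⟩
  apply hav
  -- choose preimage edges
  have hpre : ∀ i : Fin k, ∃ E, E ∈ H ∧ E.image ctr = A i := by
    intro i
    have := (hA i).1
    simp only [contractH, mem_filter, mem_image] at this
    obtain ⟨⟨E, hE, hEA⟩, -⟩ := this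
    exact ⟨E, hE, hEA⟩
  choose E hEmem hEimg using hpre
  -- owner of each position
  have hk : ∀ x : Fin (2 * k), ¬ x.1 < k → x.1 - k < k := by
    intro x hx; have := x.isLt; omega
  let o : Fin (2 * k) → Fin k := fun x =>
    if hx : x.1 < k then ⟨x.1, hx⟩ else π.symm ⟨x.1 - k, hk x hx⟩
  have hvA : ∀ x : Fin (2 * k), v x ∈ A (o x) := by
    intro x
    by_cases hx : x.1 < k
    · have h1 := (hA ⟨x.1, hx⟩).2.1
      have : finL k ⟨x.1, hx⟩ = x := by simp [finL, Fin.ext_iff]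
      rw [this] at h1
      simpa only [o, dif_pos hx] using h1
    · set j : Fin k := ⟨x.1 - k, hk x hx⟩ with hj
      have h1 := (hA (π.symm j)).2.2
      rw [Equiv.apply_symm_apply] at h1
      have : finR k j = x := by simp [finR, Fin.ext_iff, hj]; have := x.isLt; omega
      rw [this] at h1
      simpa only [o, dif_neg hx] using h1
  have hch : ∀ x : Fin (2 * k), ∃ u, u ∈ E (o x) ∧ ctr u = v x := by
    intro x
    have := hvA x
    rw [← hEimg (o x)] at this
    simpa only [mem_image] using this
  choose w hw1 hw2 using hch
  refine ⟨w, ?_, E, ?_, ?_⟩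
  · intro x y hxy
    have hvv : v x < v y := hv hxy
    have h1 := (ctr_eq_iff (w x) (v x)).1 (hw2 x)
    have h2 := (ctr_eq_iff (w y) (v y)).1 (hw2 y)
    have e1 : (w x).1 = 2 * (v x).1 ∨ (w x).1 = 2 * (v x).1 + 1 := by
      rcases h1 with h | h <;> rw [h] <;> simp [up0, up1]
    have e2 : (w y).1 = 2 * (v y).1 ∨ (w y).1 = 2 * (v y).1 + 1 := by
      rcases h2 with h | h <;> rw [h] <;> simp [up0, up1]
    have : (v x).1 < (v y).1 := hvv
    rw [Fin.lt_def]
    omega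
  · intro i j hij
    apply hAinj
    rw [← hEimg i, ← hEimg j, hij]
  · intro i
    refine ⟨hEmem i, ?_, ?_⟩
    · have : o (finL k i) = i := by
        simp only [o, finL]
        rw [dif_pos i.isLt]
    -- w (finL k i) ∈ E (o (finL k i)) = E i
      have h := hw1 (finL k i)
      rwa [this] at h
    · have hlt : ¬ (finR k (π i)).1 < k := by simp [finR]
      have : o (finR k (π i)) = i := by
        simp only [o, dif_neg hlt]
        have : (⟨(finR k (π i)).1 - k, hk _ hlt⟩ : Fin k) = π i := by
          simp [finR, Fin.ext_iff]
        rw [this, Equiv.symm_apply_apply]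
      have h := hw1 (finR k (π i))
      rwa [this] at h

/-- contraction of a member of `Tset (2n)` is in `Tset n`. -/
lemma contractH_mem {n k : ℕ} (π : Equiv.Perm (Fin k)) (H : Finset (Finset (Fin (2 * n))))
    (hH : H ∈ Tset (2 * n) π) : contractH H ∈ Tset n π := by
  constructor
  · intro A hA
    exact (mem_filter.1 hA).2
  · exact contractH_avoids π H hH.2

/-- Key bound: at most `2c-1` edges of `H` contract to a given `A` with `|A| ≥ 2`. -/
lemma filter_ctr_card_le {n k : ℕ} (π : Equiv.Perm (Fin k)) (c : ℕ) (hc : 1 ≤ c)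
    (h : ∀ m : ℕ, 1 ≤ m → ∀ H : Finset (Finset (Fin m)),
      (∀ e ∈ H, 2 ≤ e.card) → ¬HContainsPerm H π → ∑ E ∈ H, E.card < c * m)
    (H : Finset (Finset (Fin (2 * n)))) (hH : H ∈ Tset (2 * n) π)
    (A : Finset (Fin n)) (hA2 : 2 ≤ A.card) :
    (H.filter (fun E => E.image ctr = A)).card ≤ 2 * c - 1 := by
  classical
  set m := A.card with hm
  -- the expansion of A
  set s : Finset (Fin (2 * n)) := A.biUnion (fun a => {up0 a, up1 a}) with hs
  have hmem_s : ∀ v : Fin (2 * n), v ∈ s ↔ ctr v ∈ A := by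
    intro v
    simp only [hs, mem_biUnion, mem_insert, mem_singleton]
    constructor
    · rintro ⟨a, ha, hv | hv⟩ <;> rw [hv]
      · rwa [ctr_up0]
      · rwa [ctr_up1]
    · intro hv
      exact ⟨ctr v, hv, by rcases (ctr_eq_iff v (ctr v)).1 rfl with h' | h' <;> [left; right] <;> exact h'⟩
  have hscard : s.card = 2 * m := by
    rw [hs, card_biUnion]
    · rw [Finset.sum_congr rfl (fun a _ => ?_), Finset.sum_const, smul_eq_mul, hm, mul_comm]
      rw [card_insert_of_notMem, card_singleton]
      simp [up0, up1, Fin.ext_iff]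
    · intro a _ b _ hab
      simp only [Finset.disjoint_left, mem_insert, mem_singleton]
      rintro x (hx | hx) (hy | hy) <;> subst hx <;>
      · exfalso; apply hab; apply Fin.ext
        have := congrArg Fin.val hy
        simp only [up0, up1] at this
        omega
  -- order isomorphism with Fin (2m)
  set ι : Fin (2 * m) ≃o {x // x ∈ s} := s.orderIsoOfFin hscard with hι
  set ιf : Fin (2 * m) → Fin (2 * n) := fun j => (ι j : Fin (2 * n)) with hιf
  have hιmono : StrictMono ιf := fun a b hab => Subtype.coe_lt_coe.2 (ι.strictMono hab)
  set down : Finset (Fin (2 * n)) → Finset (Fin (2 * m)) :=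
    fun E => univ.filter (fun j => ιf j ∈ E) with hdown
  set HA := H.filter (fun E => E.image ctr = A) with hHA
  have hHAsub : ∀ E ∈ HA, E ⊆ s := by
    intro E hE v hv
    rw [hmem_s]
    have hEA : E.image ctr = A := (mem_filter.1 hE).2
    rw [← hEA]; exact mem_image_of_mem _ hv
  have key : ∀ E, E ⊆ s → (down E).image ιf = E := by
    intro E hEs
    ext v
    simp only [mem_image, hdown, mem_filter, mem_univ, true_and]
    constructor
    · rintro ⟨j, hj, rfl⟩; exact hj
    · intro hv
      refine ⟨ι.symm ⟨v, hEs hv⟩, ?_, ?_⟩ <;>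
        simp only [hιf, OrderIso.apply_symm_apply] <;> exact hv
  have hdowncard : ∀ E, E ⊆ s → (down E).card = E.card := by
    intro E hEs
    conv_rhs => rw [← key E hEs]
    rw [card_image_of_injective _ hιmono.injective]
  set H2m := HA.image down with hH2m
  have havoid2 : ¬ HContainsPerm H2m π := by
    rintro ⟨v, hv, Edg, hEdginj, hEdg⟩
    apply hH.2
    have hpre : ∀ i : Fin k, ∃ F, F ∈ HA ∧ down F = Edg i := by
      intro i; simpa only [hH2m, mem_image] using (hEdg i).1
    choose F hF1 hF2 using hpre
    refine ⟨fun x => ιf (v x), fun a b hab => hιmono (hv hab), F, ?_, ?_⟩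
    · intro i j hij; apply hEdginj; rw [← hF2 i, ← hF2 j, hij]
    · intro i
      refine ⟨(mem_filter.1 (hF1 i)).1, ?_, ?_⟩
      · have hh := (hEdg i).2.1; rw [← hF2 i] at hh
        exact (mem_filter.1 hh).2
      · have hh := (hEdg i).2.2; rw [← hF2 i] at hh
        exact (mem_filter.1 hh).2
  have hcard2 : ∀ e ∈ H2m, 2 ≤ e.card := by
    intro e he
    obtain ⟨E, hE, hEe⟩ := mem_image.1 he
    rw [← hEe, hdowncard E (hHAsub E hE)]
    exact hH.1 E (mem_filter.1 hE).1
  have hsum := h (2 * m) (by omega) H2m hcard2 havoid2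
  have hdowninj : ∀ E1 ∈ HA, ∀ E2 ∈ HA, down E1 = down E2 → E1 = E2 := by
    intro E1 h1 E2 h2 he
    rw [← key E1 (hHAsub E1 h1), ← key E2 (hHAsub E2 h2), he]
  have hsum_eq : ∑ e ∈ H2m, e.card = ∑ E ∈ HA, (down E).card :=
    Finset.sum_image hdowninj
  have hlow : HA.card * m ≤ ∑ e ∈ H2m, e.card := by
    rw [hsum_eq]
    calc HA.card * m = ∑ _E ∈ HA, m := by rw [sum_const, smul_eq_mul]
      _ ≤ ∑ E ∈ HA, (down E).card := by
          apply sum_le_sum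
          intro E hE
          rw [hdowncard E (hHAsub E hE)]
          calc m = (E.image ctr).card := by rw [(mem_filter.1 hE).2]
            _ ≤ E.card := card_image_le
  have hfin : HA.card * m < (2 * c) * m := by
    have h1 := lt_of_le_of_lt hlow hsum
    have h2 : c * (2 * m) = (2 * c) * m := by ring
    omega
  have := Nat.lt_of_mul_lt_mul_right hfin
  omega

/-- patterns supported exactly on `A`. -/
def patsFin {n : ℕ} (A : Finset (Fin n)) : Finset (Fin n → Bool × Bool) :=
  univ.filter (fun g => ∀ a, a ∈ A ↔ g a ≠ (false, false))

lemma pat_mem_patsFin {n : ℕ} {E : Finset (Fin (2 * n))} {A : Finset (Fin n)}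
    (hEA : E.image ctr = A) : pat E ∈ patsFin A := by
  rw [patsFin, mem_filter]
  refine ⟨mem_univ _, fun a => ?_⟩
  subst hEA
  constructor
  · intro ha hcon
    obtain ⟨v, hv, hva⟩ := mem_image.1 ha
    have h0 : up0 a ∉ E := by
      have := congrArg Prod.fst hcon
      simpa [pat] using this
    have h1 : up1 a ∉ E := by
      have := congrArg Prod.snd hcon
      simpa [pat] using this
    rcases (ctr_eq_iff v a).1 hva with h' | h' <;> subst h'
    · exact h0 hv
    · exact h1 hv
  · intro hne
    by_cases h0 : up0 a ∈ E
    · exact mem_image.2 ⟨up0 a, h0, ctr_up0 a⟩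
    by_cases h1 : up1 a ∈ E
    · exact mem_image.2 ⟨up1 a, h1, ctr_up1 a⟩
    exact absurd (by simp [pat, h0, h1]) hne

lemma patsFin_card_le {n : ℕ} (A : Finset (Fin n)) : (patsFin A).card ≤ 3 ^ A.card := by
  classical
  set three : Finset (Bool × Bool) := univ.filter (fun p => p ≠ (false, false)) with hthree
  have h3 : three.card = 3 := by decide
  have hle : (patsFin A).card ≤ (A.pi (fun _ => three)).card := by
    apply card_le_card_of_injOn (fun (g : Fin n → Bool × Bool) => (fun a _ => g a))
    · intro g hg
      rw [mem_coe, mem_pi]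
      intro a ha
      rw [hthree, mem_filter]
      exact ⟨mem_univ _, ((mem_filter.1 hg).2 a).1 ha⟩
    · intro g1 h1 g2 h2 he
      funext a
      by_cases ha : a ∈ A
      · exact congrFun (congrFun he a) ha
      · have e1 : g1 a = (false, false) := by
          by_contra hne; exact ha (((mem_filter.1 h1).2 a).2 hne)
        have e2 : g2 a = (false, false) := by
          by_contra hne; exact ha (((mem_filter.1 h2).2 a).2 hne)
        rw [e1, e2]
  calc (patsFin A).card ≤ (A.pi (fun _ => three)).card := hle
      _ = ∏ _a ∈ A, 3 := by rw [card_pi]; exact prod_congr rfl (fun _ _ => h3)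
      _ = 3 ^ A.card := by rw [prod_const]

lemma sum_pow_le (x S : ℕ) (hx : 2 ≤ x) : ∑ s ∈ range (S + 1), x ^ s ≤ 2 * x ^ S := by
  induction S with
  | zero => simp
  | succ S ih =>
    rw [sum_range_succ]
    have h2 : 2 * x ^ S ≤ x ^ (S + 1) := by
      rw [pow_succ]
      calc 2 * x ^ S = x ^ S * 2 := by ring
        _ ≤ x ^ S * x := Nat.mul_le_mul_left _ hx
    omega

lemma cand_card_le {n : ℕ} (A : Finset (Fin n)) (hA : 1 ≤ A.card) (S : ℕ) :
    ((patsFin A).powerset.filter (fun T => T.card ≤ S)).card ≤ 2 * 3 ^ (S * A.card) := by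
  classical
  have hsub : (patsFin A).powerset.filter (fun T => T.card ≤ S) ⊆
      (range (S + 1)).biUnion (fun s => (patsFin A).powersetCard s) := by
    intro T hT
    rw [mem_filter, mem_powerset] at hT
    rw [mem_biUnion]
    exact ⟨T.card, mem_range.2 (by omega), mem_powersetCard.2 ⟨hT.1, rfl⟩⟩
  calc ((patsFin A).powerset.filter (fun T => T.card ≤ S)).card
      ≤ ((range (S + 1)).biUnion (fun s => (patsFin A).powersetCard s)).card :=
        card_le_card hsub
    _ ≤ ∑ s ∈ range (S + 1), ((patsFin A).powersetCard s).card := card_biUnion_le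
    _ ≤ ∑ s ∈ range (S + 1), (3 ^ A.card) ^ s := by
        apply sum_le_sum
        intro s _
        rw [card_powersetCard]
        calc ((patsFin A).card).choose s ≤ (patsFin A).card ^ s := Nat.choose_le_pow _ _
          _ ≤ (3 ^ A.card) ^ s := Nat.pow_le_pow_left (patsFin_card_le A) s
    _ ≤ 2 * (3 ^ A.card) ^ S := by
        apply sum_pow_le
        calc 2 ≤ 3 ^ 1 := by norm_num
          _ ≤ 3 ^ A.card := Nat.pow_le_pow_right (by norm_num) hA
    _ = 2 * 3 ^ (S * A.card) := by rw [← pow_mul, mul_comm A.card S]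

/-- the set of small (contracted-to-singleton) edges, as a subset of `Fin n`. -/
def Bset {n : ℕ} (H : Finset (Finset (Fin (2 * n)))) : Finset (Fin n) :=
  univ.filter (fun i => ({up0 i, up1 i} : Finset (Fin (2 * n))) ∈ H)

/-- the patterns of the edges of `H` contracting to `A`. -/
def patsAt {n : ℕ} (H : Finset (Finset (Fin (2 * n)))) (A : Finset (Fin n)) :
    Finset (Fin n → Bool × Bool) :=
  (H.filter (fun E => E.image ctr = A)).image pat

lemma arith (c n hcnt M : ℕ) (hc : 1 ≤ c) (hn : 1 ≤ n) (hM : M + 1 ≤ c * n)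
    (hcm : 2 * hcnt ≤ M) :
    2 ^ n * (2 ^ hcnt * 3 ^ ((2 * c - 1) * M)) ≤ 3 ^ (2 * c ^ 2 * n) := by
  have hnp : n ≤ c * n := Nat.le_mul_of_pos_left n hc
  have h1 : 2 ^ (n + hcnt) ≤ 3 ^ (c * n) := by
    obtain ⟨p, hp⟩ : ∃ p, c * n = p := ⟨_, rfl⟩
    rw [hp] at hM hnp ⊢
    apply (Nat.pow_le_pow_iff_left (two_ne_zero)).1
    calc (2 ^ (n + hcnt)) ^ 2 = 2 ^ ((n + hcnt) * 2) := by rw [pow_mul]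
      _ ≤ 2 ^ (3 * p) := Nat.pow_le_pow_right (by norm_num) (by omega)
      _ = 8 ^ p := by rw [pow_mul]; norm_num
      _ ≤ 9 ^ p := Nat.pow_le_pow_left (by norm_num) p
      _ = (3 ^ p) ^ 2 := by rw [show (9 : ℕ) = 3 ^ 2 by norm_num, ← pow_mul, mul_comm 2 p, pow_mul]
  have hexp : c * n + (2 * c - 1) * M ≤ 2 * c ^ 2 * n := by
    obtain ⟨d, rfl⟩ := Nat.exists_eq_add_of_le hc
    have he : 2 * (1 + d) - 1 = 2 * d + 1 := by omega
    rw [he]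
    nlinarith [Nat.mul_le_mul_left (2 * d + 1) hM, hM, hcm]
  calc 2 ^ n * (2 ^ hcnt * 3 ^ ((2 * c - 1) * M))
      = 2 ^ (n + hcnt) * 3 ^ ((2 * c - 1) * M) := by rw [pow_add]; ring
    _ ≤ 3 ^ (c * n) * 3 ^ ((2 * c - 1) * M) := Nat.mul_le_mul_right _ h1
    _ = 3 ^ (c * n + (2 * c - 1) * M) := (pow_add 3 _ _).symm
    _ ≤ 3 ^ (2 * c ^ 2 * n) := Nat.pow_le_pow_right (by norm_num) hexp

theorem stmt13 (k : ℕ) (π : Equiv.Perm (Fin k)) (c : ℕ) (hc : 1 ≤ c)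
    (h : ∀ m : ℕ, 1 ≤ m → ∀ H : Finset (Finset (Fin m)),
      (∀ e ∈ H, 2 ≤ e.card) → ¬HContainsPerm H π → ∑ E ∈ H, E.card < c * m) :
    ∀ n : ℕ, (Tset (2 * n) π).ncard ≤ (Tset n π).ncard * 3 ^ (2 * c ^ 2 * n) := by
  intro n
  rcases Nat.eq_zero_or_pos n with rfl | hn
  · show (Tset 0 π).ncard ≤ (Tset 0 π).ncard * 3 ^ (2 * c ^ 2 * 0)
    simp
  classical
  have hfin2 : (Tset (2 * n) π).Finite := Set.toFinite _
  have hfin1 : (Tset n π).Finite := Set.toFinite _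
  rw [Set.ncard_eq_toFinset_card _ hfin2, Set.ncard_eq_toFinset_card _ hfin1]
  set T2 := hfin2.toFinset with hT2
  set T1 := hfin1.toFinset with hT1
  set K := 3 ^ (2 * c ^ 2 * n) with hK
  have hmap : ∀ H ∈ T2, contractH H ∈ T1 := by
    intro H hH
    rw [hT1, Set.Finite.mem_toFinset]
    exact contractH_mem π H (by rwa [hT2, Set.Finite.mem_toFinset] at hH)
  have main : T2.card ≤ K * (T2.image contractH).card := by
    apply card_le_mul_card_image
    intro H' hH'
    -- H' is a contraction of something in T2, hence lies in Tset n π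
    obtain ⟨H₀, hH₀, hH₀'⟩ := mem_image.1 hH'
    have hH'mem : H' ∈ Tset n π := by
      rw [← hH₀']
      exact contractH_mem π H₀ (by rwa [hT2, Set.Finite.mem_toFinset] at hH₀)
    have h2H' : ∀ A ∈ H', 2 ≤ A.card := hH'mem.1
    have hMlt : ∑ A ∈ H', A.card < c * n := h n hn H' hH'mem.1 hH'mem.2
    set M := ∑ A ∈ H', A.card with hMdef
    have hcm : 2 * H'.card ≤ M := by
      calc 2 * H'.card = ∑ _A ∈ H', 2 := by rw [sum_const, smul_eq_mul, mul_comm]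
        _ ≤ M := sum_le_sum h2H'
    -- the encoding
    set cand : Finset (Fin n) → Finset (Finset (Fin n → Bool × Bool)) :=
      fun A => (patsFin A).powerset.filter (fun T => T.card ≤ 2 * c - 1) with hcand
    set enc : Finset (Finset (Fin (2 * n))) →
        Finset (Fin n) × (∀ A ∈ H', Finset (Fin n → Bool × Bool)) :=
      fun H => (Bset H, fun A _ => patsAt H A) with henc
    set Target := (univ : Finset (Finset (Fin n))) ×ˢ (H'.pi (fun A => cand A)) with hTargetdef
    set Fib := T2.filter (fun H => contractH H = H') with hFibdef
    have hFibTset : ∀ H ∈ Fib, H ∈ Tset (2 * n) π ∧ contractH H = H' := by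
      intro H hH
      rw [hFibdef, mem_filter] at hH
      exact ⟨(Set.Finite.mem_toFinset _).1 hH.1, hH.2⟩
    have hmaps : ∀ H ∈ Fib, enc H ∈ Target := by
      intro H hH
      obtain ⟨hHT, hHc⟩ := hFibTset H hH
      rw [hTargetdef, mem_product]
      refine ⟨mem_univ _, ?_⟩
      rw [mem_pi]
      intro A hA
      rw [hcand, mem_filter, mem_powerset]
      refine ⟨?_, ?_⟩
      · -- patsAt H A ⊆ patsFin A
        intro g hg
        obtain ⟨E, hE, rfl⟩ := mem_image.1 hg
        exact pat_mem_patsFin (mem_filter.1 hE).2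
      · -- card bound
        show (patsAt H A).card ≤ 2 * c - 1
        simp only [patsAt]
        rw [card_image_of_injective _ pat_injective]
        exact filter_ctr_card_le π c hc h H hHT A (h2H' A hA)
    have hinjsub : ∀ H ∈ Fib, ∀ H₂ ∈ Fib, enc H = enc H₂ → H ⊆ H₂ := by
      intro H hH H₂ hH₂ he E hE
      obtain ⟨hHT, hHc⟩ := hFibTset H hH
      obtain ⟨hHT₂, hHc₂⟩ := hFibTset H₂ hH₂
      by_cases hc2 : 2 ≤ (E.image ctr).card
      · have hA' : E.image ctr ∈ H' := by
          rw [← hHc, contractH, mem_filter]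
          exact ⟨mem_image_of_mem _ hE, hc2⟩
        have hsnd := congrArg Prod.snd he
        have hpats : patsAt H (E.image ctr) = patsAt H₂ (E.image ctr) :=
          congrFun (congrFun hsnd (E.image ctr)) hA'
        have hmem : pat E ∈ patsAt H₂ (E.image ctr) := by
          rw [← hpats]
          simp only [patsAt]
          exact mem_image_of_mem _ (mem_filter.2 ⟨hE, rfl⟩)
        obtain ⟨E₂, hE₂, hpe⟩ := mem_image.1 hmem
        rw [← pat_injective hpe]
        exact (mem_filter.1 hE₂).1
      · -- small edge
        have h2 : 2 ≤ E.card := hHT.1 E hE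
        have hne : (E.image ctr).Nonempty := by
          apply Finset.Nonempty.image
          rw [← card_pos]; omega
        have h1 : (E.image ctr).card = 1 := by
          have := card_pos.2 hne; omega
        obtain ⟨a, ha⟩ := card_eq_one.1 h1
        have hEsub : E ⊆ {up0 a, up1 a} := by
          intro v hv
          have hm : ctr v ∈ E.image ctr := mem_image_of_mem _ hv
          rw [ha, mem_singleton] at hm
          rcases (ctr_eq_iff v a).1 hm with h' | h' <;> simp [h']
        have hpcard : ({up0 a, up1 a} : Finset (Fin (2 * n))).card = 2 := by
          rw [card_insert_of_notMem (by simp [up0, up1, Fin.ext_iff]), card_singleton]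
        have hEeq : E = {up0 a, up1 a} :=
          eq_of_subset_of_card_le hEsub (by omega)
        have hBa : a ∈ Bset H := mem_filter.2 ⟨mem_univ _, by rw [← hEeq]; exact hE⟩
        have hBeq : Bset H = Bset H₂ := congrArg Prod.fst he
        rw [hBeq] at hBa
        rw [hEeq]
        exact (mem_filter.1 hBa).2
    have hFT : Fib.card ≤ Target.card := by
      apply card_le_card_of_injOn enc hmaps
      intro H hH H₂ hH₂ he
      exact Subset.antisymm (hinjsub H hH H₂ hH₂ he) (hinjsub H₂ hH₂ H hH he.symm)
    have hTc : Target.card ≤ 2 ^ n * (2 ^ H'.card * 3 ^ ((2 * c - 1) * M)) := by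
      rw [hTargetdef, card_product, card_pi]
      have hu : (univ : Finset (Finset (Fin n))).card = 2 ^ n := by
        rw [card_univ, Fintype.card_finset, Fintype.card_fin]
      rw [hu]
      apply Nat.mul_le_mul_left
      calc ∏ A ∈ H', (cand A).card ≤ ∏ A ∈ H', 2 * 3 ^ ((2 * c - 1) * A.card) := by
            apply prod_le_prod (fun _ _ => Nat.zero_le _)
            intro A hA
            exact cand_card_le A (by have := h2H' A hA; omega) (2 * c - 1)
        _ = 2 ^ H'.card * 3 ^ ((2 * c - 1) * M) := by
            rw [prod_mul_distrib, prod_const, prod_pow_eq_pow_sum, ← mul_sum, ← hMdef]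
    have harith : 2 ^ n * (2 ^ H'.card * 3 ^ ((2 * c - 1) * M)) ≤ K := by
      rw [hK]
      exact arith c n H'.card M hc hn (by omega) hcm
    calc (T2.filter (fun H => contractH H = H')).card = Fib.card := rfl
      _ ≤ K := le_trans hFT (le_trans hTc harith)
  calc T2.card ≤ K * (T2.image contractH).card := main
    _ ≤ K * T1.card := by
        apply Nat.mul_le_mul_left
        apply card_le_card
        intro H' hH'
        obtain ⟨H₀, hH₀, rfl⟩ := mem_image.1 hH'
        exact hmap H₀ hH₀
    _ = T1.card * K := mul_comm _ _
end

section
/- For every k ∈ ℕ and every permutation π of [k] there exists a constant c such that for every n ∈ ℕ, the number of ordered hypergraphs on [n] that avoid π is at most c^n. -/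
namespace KM
open Finset

variable {k : ℕ}

/-- ℕ-ground containment. -/
def NContains (π : Equiv.Perm (Fin k)) (H : Finset (Finset ℕ)) : Prop :=
  ∃ v : Fin (2 * k) → ℕ, StrictMono v ∧ ∃ E : Fin k → Finset ℕ,
    Function.Injective E ∧ ∀ i : Fin k, E i ∈ H ∧ v (finL k i) ∈ E i ∧ v (finR k (π i)) ∈ E i

/-- which pattern edge owns position j -/
def owner (π : Equiv.Perm (Fin k)) (j : Fin (2 * k)) : Fin k :=
  if h : (j : ℕ) < k then ⟨j, h⟩ else π.symm ⟨(j : ℕ) - k, by have := j.isLt; omega⟩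

lemma owner_finL (π : Equiv.Perm (Fin k)) (i : Fin k) : owner π (finL k i) = i := by
  simp [owner, finL, i.isLt]

lemma owner_finR (π : Equiv.Perm (Fin k)) (i : Fin k) : owner π (finR k (π i)) = i := by
  have h1 : ¬ ((finR k (π i) : ℕ) < k) := by simp [finR]
  rw [owner, dif_neg h1]
  have h2 : (⟨(finR k (π i) : ℕ) - k, by have := (finR k (π i)).isLt; omega⟩ : Fin k) = π i := by
    apply Fin.ext; simp [finR]
  rw [h2, Equiv.symm_apply_apply]

lemma k_pos_of_avoid {π : Equiv.Perm (Fin k)} {H : Finset (Finset ℕ)}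
    (h : ¬ NContains π H) : 0 < k := by
  rcases Nat.eq_zero_or_pos k with hk | hk
  · exfalso; apply h
    subst hk
    refine ⟨Fin.elim0, fun a => a.elim0, Fin.elim0, fun a => a.elim0, fun i => i.elim0⟩
  · exact hk

/-- Master containment lemma. -/
lemma master (π : Equiv.Perm (Fin k)) {H : Finset (Finset ℕ)}
    (P : Fin (2 * k) → Finset ℕ) (E : Fin k → Finset ℕ)
    (hE : Function.Injective E) (hmem : ∀ i, E i ∈ H)
    (hsep : ∀ ⦃j j' : Fin (2 * k)⦄, j < j' → ∀ x ∈ P j, ∀ y ∈ P j', x < y)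
    (hne : ∀ i, (E i ∩ P (finL k i)).Nonempty ∧ (E i ∩ P (finR k (π i))).Nonempty) :
    NContains π H := by
  have key : ∀ j : Fin (2 * k), (E (owner π j) ∩ P j).Nonempty := by
    intro j
    by_cases h : (j : ℕ) < k
    · have hj : j = finL k ⟨j, h⟩ := by apply Fin.ext; simp [finL]
      rw [hj, owner_finL]
      exact (hne ⟨j, h⟩).1
    · set i : Fin k := π.symm ⟨(j : ℕ) - k, by have := j.isLt; omega⟩ with hi
      have hj : j = finR k (π i) := by
        apply Fin.ext
        simp only [finR, hi, Equiv.apply_symm_apply]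
        have := j.isLt; omega
      rw [hj, owner_finR]
      exact (hne i).2
  set v : Fin (2 * k) → ℕ := fun j => (E (owner π j) ∩ P j).min' (key j) with hv
  have hvmem : ∀ j, v j ∈ E (owner π j) ∩ P j := fun j => Finset.min'_mem _ (key j)
  have hvP : ∀ j, v j ∈ P j := fun j => (Finset.mem_inter.1 (hvmem j)).2
  have hvE : ∀ j, v j ∈ E (owner π j) := fun j => (Finset.mem_inter.1 (hvmem j)).1
  refine ⟨v, ?_, E, hE, ?_⟩
  · intro a b hab; exact hsep hab _ (hvP a) _ (hvP b)
  · intro i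
    refine ⟨hmem i, ?_, ?_⟩
    · have := hvE (finL k i); rwa [owner_finL] at this
    · have := hvE (finR k (π i)); rwa [owner_finR] at this

/-- Matching-or-confined lemma. -/
lemma matching_or_confined (k : ℕ) {α : Type} [DecidableEq α] (s : Finset α) (r : α → Finset ℕ) :
    (∃ T ⊆ s, ∃ g : α → ℕ, T.card = k ∧ Set.InjOn g ↑T ∧ ∀ a ∈ T, g a ∈ r a) ∨
    (∃ X : Finset ℕ, ∃ T₀ : Finset α, T₀ ⊆ s ∧ X.card ≤ k - 1 ∧ T₀.card ≤ k - 1 ∧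
      ∀ a ∈ s, a ∉ T₀ → r a ⊆ X) := by
  induction k with
  | zero =>
    left
    exact ⟨∅, empty_subset _, fun _ => 0, card_empty, by simp, by simp⟩
  | succ k ih =>
    rcases ih with ⟨T, hTs, g, hcard, hinj, hg⟩ | ⟨X, T₀, hT₀s, hX, hT₀, hcov⟩
    · by_cases hext : ∃ a ∈ s, a ∉ T ∧ ∃ x ∈ r a, x ∉ T.image g
      · obtain ⟨a, has, haT, x, hxr, hxi⟩ := hext
        left
        refine ⟨insert a T, ?_, Function.update g a x, ?_, ?_, ?_⟩
        · intro b hb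
          rcases mem_insert.1 hb with rfl | hb
          · exact has
          · exact hTs hb
        · rw [card_insert_of_notMem haT, hcard]
        · have key : ∀ d ∈ T, Function.update g a x d = g d := fun d hd =>
            Function.update_of_ne (by rintro rfl; exact haT hd) _ _
          intro b hb c hc hbc
          simp only [coe_insert, Set.mem_insert_iff, mem_coe] at hb hc
          rcases hb with rfl | hb
          · rcases hc with rfl | hc
            · rfl
            · exfalso
              rw [Function.update_self, key c hc] at hbc
              exact hxi (by rw [hbc]; exact mem_image_of_mem g hc)
          · rcases hc with rfl | hc
            · exfalso
              rw [Function.update_self, key b hb] at hbc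
              exact hxi (by rw [← hbc]; exact mem_image_of_mem g hb)
            · rw [key b hb, key c hc] at hbc
              exact hinj hb hc hbc
        · have key : ∀ d ∈ T, Function.update g a x d = g d := fun d hd =>
            Function.update_of_ne (by rintro rfl; exact haT hd) _ _
          intro b hb
          rcases mem_insert.1 hb with rfl | hb
          · rw [Function.update_self]; exact hxr
          · rw [key b hb]; exact hg b hb
      · push_neg at hext
        right
        refine ⟨T.image g, T, hTs, ?_, ?_, ?_⟩
        · calc (T.image g).card ≤ T.card := card_image_le
            _ = k := hcard
            _ ≤ k + 1 - 1 := by omega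
        · omega
        · intro a has haT x hx
          exact hext a has haT x hx
    · right
      exact ⟨X, T₀, hT₀s, by omega, by omega, hcov⟩

section Blocks
variable (s : ℕ) (H : Finset (Finset ℕ))

def img (E : Finset ℕ) : Finset ℕ := E.image (· / s)

def blockI (b : ℕ) : Finset ℕ := Finset.Ico (b * s) (b * s + s)

def fiber (F : Finset ℕ) : Finset (Finset ℕ) := H.filter (fun E => img s E = F)

def contract : Finset (Finset ℕ) := (H.filter (fun E => 2 ≤ (img s E).card)).image (img s)

def traceU (F : Finset ℕ) (b : ℕ) : Finset ℕ := (fiber s H F).biUnion (fun E => E ∩ blockI s b)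

end Blocks

lemma mem_blockI_iff {s : ℕ} (hs : 0 < s) {b x : ℕ} : x ∈ blockI s b ↔ x / s = b := by
  simp only [blockI, Finset.mem_Ico]
  constructor
  · rintro ⟨h1, h2⟩
    exact Nat.div_eq_of_lt_le h1 (by rw [add_mul, one_mul]; omega)
  · rintro rfl
    have h1 := Nat.div_add_mod x s
    have h2 := Nat.mod_lt x hs
    refine ⟨Nat.div_mul_le_self x s, ?_⟩
    rw [mul_comm]; omega

lemma block_sep {s b b' x y : ℕ} (h : b < b') (hx : x ∈ blockI s b) (hy : y ∈ blockI s b') :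
    x < y := by
  simp only [blockI, Finset.mem_Ico] at hx hy
  have : b * s + s ≤ b' * s := by
    have : (b + 1) * s ≤ b' * s := Nat.mul_le_mul_right s h
    rw [add_mul, one_mul] at this; omega
  omega

lemma img_inter_nonempty {s : ℕ} (hs : 0 < s) {E : Finset ℕ} {b : ℕ} (h : b ∈ img s E) :
    (E ∩ blockI s b).Nonempty := by
  simp only [img, mem_image] at h
  obtain ⟨x, hx, rfl⟩ := h
  exact ⟨x, Finset.mem_inter.2 ⟨hx, (mem_blockI_iff hs).2 rfl⟩⟩

/-- P4: contraction preserves avoidance. -/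
lemma contract_avoid (π : Equiv.Perm (Fin k)) (s : ℕ) (hs : 0 < s) {H : Finset (Finset ℕ)}
    (h : ¬ NContains π H) : ¬ NContains π (contract s H) := by
  intro hC
  obtain ⟨vh, hmono, F, hFinj, hF⟩ := hC
  have hex : ∀ i, ∃ e, e ∈ H ∧ img s e = F i := by
    intro i
    have := (hF i).1
    simp only [contract, mem_image, mem_filter] at this
    obtain ⟨e, ⟨he, _⟩, heq⟩ := this
    exact ⟨e, he, heq⟩
  choose E hEH hEimg using hex
  apply h
  apply master π (fun j => blockI s (vh j)) E
  · intro i j hij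
    apply hFinj
    rw [← hEimg i, ← hEimg j, hij]
  · exact hEH
  · intro j j' hjj' x hx y hy
    exact block_sep (hmono hjj') hx hy
  · intro i
    constructor
    · exact img_inter_nonempty hs (by rw [hEimg]; exact (hF i).2.1)
    · exact img_inter_nonempty hs (by rw [hEimg]; exact (hF i).2.2)

/-- P3: multiplicity cap for big images. -/
lemma mult_cap (π : Equiv.Perm (Fin k)) (s : ℕ) (hs : 0 < s) {H : Finset (Finset ℕ)}
    (h : ¬ NContains π H) (F : Finset ℕ) (hF : 2 * k ≤ F.card) :
    (fiber s H F).card ≤ k - 1 := by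
  have hk := k_pos_of_avoid h
  by_contra hcon
  push_neg at hcon
  have hcard : k ≤ (fiber s H F).card := by omega
  obtain ⟨T, hTsub, hTcard⟩ := Finset.exists_subset_card_eq hcard
  obtain ⟨U, hUF, hUcard⟩ := Finset.exists_subset_card_eq hF
  set u := U.orderIsoOfFin hUcard with hu
  set e := (T.equivFin.trans (finCongr hTcard)).symm with he
  apply h
  apply master π (fun j => blockI s (u j)) (fun i => ((e i : { x // x ∈ T }) : Finset ℕ))
  · intro i j hij
    apply e.injective
    exact Subtype.ext hij
  · intro i
    have := (e i).2
    have := hTsub this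
    simp only [fiber, mem_filter] at this
    exact this.1
  · intro j j' hjj' x hx y hy
    exact block_sep (u.strictMono hjj') hx hy
  · intro i
    have himg : ∀ (i' : Fin k), img s ((e i' : { x // x ∈ T }) : Finset ℕ) = F := by
      intro i'
      have := hTsub (e i').2
      simp only [fiber, mem_filter] at this
      exact this.2
    constructor
    · apply img_inter_nonempty hs
      rw [himg]
      exact hUF (u (finL k i)).2
    · apply img_inter_nonempty hs
      rw [himg]
      exact hUF (u (finR k (π i))).2


/-- Specialized master lemma with left/right position families. -/
lemma master' (π : Equiv.Perm (Fin k)) {H : Finset (Finset ℕ)}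
    (Px Py : Fin k → Finset ℕ) (E : Fin k → Finset ℕ)
    (hE : Function.Injective E) (hmem : ∀ i, E i ∈ H)
    (hxx : ∀ ⦃i i' : Fin k⦄, i < i' → ∀ x ∈ Px i, ∀ x' ∈ Px i', x < x')
    (hyy : ∀ ⦃i i' : Fin k⦄, i < i' → ∀ y ∈ Py i, ∀ y' ∈ Py i', y < y')
    (hxy : ∀ (i i' : Fin k), ∀ x ∈ Px i, ∀ y ∈ Py i', x < y)
    (hnex : ∀ i, (E i ∩ Px i).Nonempty) (hney : ∀ i, (E i ∩ Py (π i)).Nonempty) :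
    NContains π H := by
  set P : Fin (2 * k) → Finset ℕ := fun j =>
    if h : (j : ℕ) < k then Px ⟨j, h⟩ else Py ⟨(j : ℕ) - k, by have := j.isLt; omega⟩ with hP
  have hPL : ∀ i : Fin k, P (finL k i) = Px i := by
    intro i
    have h : ((finL k i : Fin (2*k)) : ℕ) < k := i.isLt
    simp only [hP, dif_pos h]
    congr 1
  have hPR : ∀ i : Fin k, P (finR k i) = Py i := by
    intro i
    have h : ¬ (((finR k i : Fin (2*k)) : ℕ) < k) := by simp [finR]
    simp only [hP, dif_neg h]
    congr 1
    apply Fin.ext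
    simp [finR]
  apply master π P E hE hmem
  · intro j j' hjj' x hx y hy
    by_cases h1 : (j : ℕ) < k <;> by_cases h2 : (j' : ℕ) < k
    · simp only [hP, dif_pos h1] at hx
      simp only [hP, dif_pos h2] at hy
      exact hxx (show (⟨(j:ℕ), h1⟩ : Fin k) < ⟨(j':ℕ), h2⟩ from hjj') x hx y hy
    · simp only [hP, dif_pos h1] at hx
      simp only [hP, dif_neg h2] at hy
      exact hxy _ _ x hx y hy
    · exact absurd (lt_trans (show (j:ℕ) < (j':ℕ) from hjj') h2) h1
    · simp only [hP, dif_neg h1] at hx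
      simp only [hP, dif_neg h2] at hy
      refine hyy (show (⟨(j:ℕ)-k, _⟩ : Fin k) < ⟨(j':ℕ)-k, _⟩ from ?_) x hx y hy
      simp only [Fin.mk_lt_mk]
      have := Fin.lt_def.1 hjj'
      omega
  · intro i
    rw [hPL, hPR]
    exact ⟨(hnex i), (hney i)⟩

/-- P1: fat edges at an interval are few. -/
lemma fat_edges (π : Equiv.Perm (Fin k)) {H : Finset (Finset ℕ)} (h : ¬ NContains π H)
    (a s : ℕ) :
    (H.filter (fun E => k ≤ (E ∩ Finset.Ico a (a + s)).card)).card ≤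
      s.choose k * (2 * k + 2 ^ (2 * k + s)) := by
  classical
  have hk := k_pos_of_avoid h
  by_contra hcon
  push_neg at hcon
  set B := Finset.Ico a (a + s) with hB
  set D := H.filter (fun E => k ≤ (E ∩ B).card) with hD
  have hch : ∀ E : Finset ℕ, ∃ S : Finset ℕ, E ∈ D → (S ⊆ E ∩ B ∧ S.card = k) := by
    intro E
    by_cases hE : E ∈ D
    · obtain ⟨S, h1, h2⟩ := Finset.exists_subset_card_eq (mem_filter.1 hE).2
      exact ⟨S, fun _ => ⟨h1, h2⟩⟩
    · exact ⟨∅, fun hE' => absurd hE' hE⟩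
  choose ch hch using hch
  have hmaps : ∀ E ∈ D, ch E ∈ B.powersetCard k := by
    intro E hE
    rw [mem_powersetCard]
    exact ⟨(hch E hE).1.trans inter_subset_right, (hch E hE).2⟩
  have hcard_cls : (B.powersetCard k).card = s.choose k := by
    rw [card_powersetCard, hB, Nat.card_Ico]
    congr 1
    omega
  obtain ⟨S, hSmem, hSfib⟩ :=
    Finset.exists_lt_card_fiber_of_mul_lt_card_of_maps_to hmaps
      (by rw [hcard_cls]; exact hcon)
  set D' := D.filter (fun E => ch E = S) with hD'
  have hSsub : ∀ E ∈ D', S ⊆ E := by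
    intro E hE
    rw [hD', mem_filter] at hE
    rw [← hE.2]
    exact ((hch E hE.1).1).trans inter_subset_left
  have hSB : S ⊆ B := (mem_powersetCard.1 hSmem).1
  have hScard : S.card = k := (mem_powersetCard.1 hSmem).2
  have hSne : S.Nonempty := by rw [← card_pos, hScard]; exact hk
  set mS := S.min' hSne with hmS
  set xS := S.max' hSne with hxS
  set uS := S.orderIsoOfFin hScard with huS
  have huSS : ∀ i, (uS i : ℕ) ∈ S := fun i => (uS i).2
  have hD'H : ∀ E ∈ D', E ∈ H := by
    intro E hE
    rw [hD', mem_filter, hD, mem_filter] at hE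
    exact hE.1.1
  -- below matching
  rcases matching_or_confined k D' (fun E => E.filter (· < mS)) with
    ⟨T, hTs, g, hTcard, hinj, hg⟩ | ⟨Xb, T₀b, hT₀bs, hXb, hT₀b, hcovb⟩
  · -- left: below-SDR: contains π
    apply h
    have hVcard : (T.image g).card = k := by rw [Finset.card_image_of_injOn hinj, hTcard]
    set w := (T.image g).orderIsoOfFin hVcard with hw
    have hwV : ∀ i, (w i : ℕ) ∈ T.image g := fun i => (w i).2
    have hEd : ∀ i : Fin k, ∃ e, e ∈ T ∧ g e = (w i : ℕ) := by
      intro i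
      obtain ⟨e, he, hge⟩ := mem_image.1 (hwV i)
      exact ⟨e, he, hge⟩
    choose Ed hEdT hEdg using hEd
    have hVbel : ∀ x ∈ T.image g, x < mS := by
      intro x hx
      obtain ⟨e, he, rfl⟩ := mem_image.1 hx
      have := hg e he
      exact (mem_filter.1 this).2
    apply master' π (fun i => {(w i : ℕ)}) (fun i => {(uS i : ℕ)}) Ed
    · intro i j hij
      apply w.injective
      apply Subtype.ext
      rw [← hEdg i, ← hEdg j, hij]
    · intro i; exact hD'H _ (hTs (hEdT i))
    · intro i i' hii' x hx x' hx'
      rw [mem_singleton] at hx hx'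
      subst hx; subst hx'
      exact w.strictMono hii'
    · intro i i' hii' y hy y' hy'
      rw [mem_singleton] at hy hy'
      subst hy; subst hy'
      exact uS.strictMono hii'
    · intro i i' x hx y hy
      rw [mem_singleton] at hx hy
      subst hx; subst hy
      calc (w i : ℕ) < mS := hVbel _ (hwV i)
        _ ≤ (uS i' : ℕ) := S.min'_le _ (huSS i')
    · intro i
      refine ⟨(w i : ℕ), mem_inter.2 ⟨?_, mem_singleton_self _⟩⟩
      have := hg (Ed i) (hEdT i)
      rw [hEdg i] at this
      exact filter_subset _ _ this
    · intro i
      refine ⟨(uS (π i) : ℕ), mem_inter.2 ⟨?_, mem_singleton_self _⟩⟩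
      exact hSsub _ (hTs (hEdT i)) (huSS (π i))
  · -- above matching
    rcases matching_or_confined k D' (fun E => E.filter (xS < ·)) with
      ⟨T, hTs, g, hTcard, hinj, hg⟩ | ⟨Xa, T₀a, hT₀as, hXa, hT₀a, hcova⟩
    · -- above-SDR: contains π
      apply h
      have hVcard : (T.image g).card = k := by rw [Finset.card_image_of_injOn hinj, hTcard]
      set w := (T.image g).orderIsoOfFin hVcard with hw
      have hwV : ∀ i, (w i : ℕ) ∈ T.image g := fun i => (w i).2
      have hEd : ∀ i : Fin k, ∃ e, e ∈ T ∧ g e = (w (π i) : ℕ) := by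
        intro i
        obtain ⟨e, he, hge⟩ := mem_image.1 (hwV (π i))
        exact ⟨e, he, hge⟩
      choose Ed hEdT hEdg using hEd
      have hVab : ∀ x ∈ T.image g, xS < x := by
        intro x hx
        obtain ⟨e, he, rfl⟩ := mem_image.1 hx
        exact (mem_filter.1 (hg e he)).2
      apply master' π (fun i => {(uS i : ℕ)}) (fun i => {(w i : ℕ)}) Ed
      · intro i j hij
        have : (w (π i) : ℕ) = (w (π j) : ℕ) := by rw [← hEdg i, ← hEdg j, hij]
        have := w.injective (Subtype.ext this)
        exact π.injective this
      · intro i; exact hD'H _ (hTs (hEdT i))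
      · intro i i' hii' x hx x' hx'
        rw [mem_singleton] at hx hx'
        subst hx; subst hx'
        exact uS.strictMono hii'
      · intro i i' hii' y hy y' hy'
        rw [mem_singleton] at hy hy'
        subst hy; subst hy'
        exact w.strictMono hii'
      · intro i i' x hx y hy
        rw [mem_singleton] at hx hy
        subst hx; subst hy
        calc (uS i : ℕ) ≤ xS := S.le_max' _ (huSS i)
          _ < (w i' : ℕ) := hVab _ (hwV i')
      · intro i
        refine ⟨(uS i : ℕ), mem_inter.2 ⟨?_, mem_singleton_self _⟩⟩
        exact hSsub _ (hTs (hEdT i)) (huSS i)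
      · intro i
        refine ⟨(w (π i) : ℕ), mem_inter.2 ⟨?_, mem_singleton_self _⟩⟩
        have := hg (Ed i) (hEdT i)
        rw [hEdg i] at this
        exact filter_subset _ _ this
    · -- confined: D' is small, contradiction
      set U := Xb ∪ Xa ∪ B with hU
      have hconf : ∀ E ∈ D', E ∉ T₀b → E ∉ T₀a → E ⊆ U := by
        intro E hE hEb hEa x hx
        rcases lt_or_ge x mS with hlt | hge
        · exact mem_union_left _ (mem_union_left _
            (hcovb E hE hEb (mem_filter.2 ⟨hx, hlt⟩)))
        · rcases le_or_gt x xS with hle | hgt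
          · apply mem_union_right
            have h1 : a ≤ mS := (Finset.mem_Ico.1 (hSB (S.min'_mem hSne))).1
            have h2 : xS < a + s := (Finset.mem_Ico.1 (hSB (S.max'_mem hSne))).2
            rw [hB, Finset.mem_Ico]
            omega
          · exact mem_union_left _ (mem_union_right _
              (hcova E hE hEa (mem_filter.2 ⟨hx, hgt⟩)))
      have hsub : D' ⊆ T₀b ∪ T₀a ∪ U.powerset := by
        intro E hE
        by_cases h1 : E ∈ T₀b
        · exact mem_union_left _ (mem_union_left _ h1)
        by_cases h2 : E ∈ T₀a
        · exact mem_union_left _ (mem_union_right _ h2)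
        · exact mem_union_right _ (mem_powerset.2 (hconf E hE h1 h2))
      have hUcard : U.card ≤ 2 * k + s := by
        calc U.card ≤ (Xb ∪ Xa).card + B.card := card_union_le _ _
          _ ≤ (Xb.card + Xa.card) + B.card := by
              exact Nat.add_le_add_right (card_union_le _ _) _
          _ ≤ ((k - 1) + (k - 1)) + s := by
              have : B.card = s := by rw [hB, Nat.card_Ico]; omega
              omega
          _ ≤ 2 * k + s := by omega
      have : D'.card ≤ (k - 1) + (k - 1) + 2 ^ (2 * k + s) := by
        calc D'.card ≤ (T₀b ∪ T₀a ∪ U.powerset).card := card_le_card hsub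
          _ ≤ (T₀b ∪ T₀a).card + U.powerset.card := card_union_le _ _
          _ ≤ (T₀b.card + T₀a.card) + U.powerset.card := by
              exact Nat.add_le_add_right (card_union_le _ _) _
          _ ≤ (k - 1) + (k - 1) + 2 ^ U.card := by
              rw [card_powerset]
              omega
          _ ≤ (k - 1) + (k - 1) + 2 ^ (2 * k + s) := by
              have := Nat.pow_le_pow_right (show 1 ≤ 2 by omega) hUcard
              omega
      omega


/-- P2: wide images at a block are few. -/
lemma wide_images (π : Equiv.Perm (Fin k)) (s : ℕ) (hs : 0 < s) {H : Finset (Finset ℕ)}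
    (h : ¬ NContains π H) (b : ℕ) :
    ((contract s H).filter (fun F => b ∈ F ∧ k ≤ (traceU s H F b).card)).card ≤
      s.choose k * (2 * k + 2 ^ (2 * k)) := by
  classical
  have hk := k_pos_of_avoid h
  by_contra hcon
  push_neg at hcon
  set FF := (contract s H).filter (fun F => b ∈ F ∧ k ≤ (traceU s H F b).card) with hFF
  have htrsub : ∀ F, traceU s H F b ⊆ blockI s b := by
    intro F x hx
    obtain ⟨E, _, hxE⟩ := mem_biUnion.1 hx
    exact (mem_inter.1 hxE).2
  have hch : ∀ F : Finset ℕ, ∃ S : Finset ℕ, F ∈ FF → (S ⊆ traceU s H F b ∧ S.card = k) := by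
    intro F
    by_cases hF : F ∈ FF
    · obtain ⟨S, h1, h2⟩ := Finset.exists_subset_card_eq (mem_filter.1 hF).2.2
      exact ⟨S, fun _ => ⟨h1, h2⟩⟩
    · exact ⟨∅, fun hF' => absurd hF' hF⟩
  choose ch hch using hch
  have hmaps : ∀ F ∈ FF, ch F ∈ (blockI s b).powersetCard k := by
    intro F hF
    rw [mem_powersetCard]
    exact ⟨((hch F hF).1).trans (htrsub F), (hch F hF).2⟩
  have hcard_cls : ((blockI s b).powersetCard k).card = s.choose k := by
    rw [card_powersetCard, blockI, Nat.card_Ico]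
    congr 1
    omega
  obtain ⟨S, hSmem, hSfib⟩ :=
    Finset.exists_lt_card_fiber_of_mul_lt_card_of_maps_to hmaps
      (by rw [hcard_cls]; exact hcon)
  set FF' := FF.filter (fun F => ch F = S) with hFF'
  have hStr : ∀ F ∈ FF', S ⊆ traceU s H F b := by
    intro F hF
    rw [hFF', mem_filter] at hF
    rw [← hF.2]
    exact (hch F hF.1).1
  have hSB : S ⊆ blockI s b := (mem_powersetCard.1 hSmem).1
  have hScard : S.card = k := (mem_powersetCard.1 hSmem).2
  have hSne : S.Nonempty := by rw [← card_pos, hScard]; exact hk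
  set uS := S.orderIsoOfFin hScard with huS
  have huSS : ∀ i, (uS i : ℕ) ∈ S := fun i => (uS i).2
  have hkey : ∀ F ∈ FF', ∀ x ∈ S, ∃ e, e ∈ H ∧ img s e = F ∧ x ∈ e := by
    intro F hF x hx
    have := hStr F hF hx
    obtain ⟨E, hE, hxE⟩ := mem_biUnion.1 this
    rw [fiber, mem_filter] at hE
    exact ⟨E, hE.1, hE.2, (mem_inter.1 hxE).1⟩
  -- above-side matching on block indices
  rcases matching_or_confined k FF' (fun F => F.filter (b < ·)) with
    ⟨T, hTs, g, hTcard, hinj, hg⟩ | ⟨Xa, T₀a, hT₀as, hXa, hT₀a, hcova⟩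
  · -- S as lefts, blocks above as rights
    apply h
    have hVcard : (T.image g).card = k := by rw [Finset.card_image_of_injOn hinj, hTcard]
    set w := (T.image g).orderIsoOfFin hVcard with hw
    have hwV : ∀ i, (w i : ℕ) ∈ T.image g := fun i => (w i).2
    have hW : ∀ i : Fin k, ∃ F, F ∈ T ∧ g F = (w i : ℕ) := by
      intro i
      obtain ⟨F, hF, hgF⟩ := mem_image.1 (hwV i)
      exact ⟨F, hF, hgF⟩
    choose W hWT hWg using hW
    have hVab : ∀ x ∈ T.image g, b < x := by
      intro x hx
      obtain ⟨F, hF, rfl⟩ := mem_image.1 hx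
      exact (mem_filter.1 (hg F hF)).2
    have hWmem : ∀ i, (w i : ℕ) ∈ W i := by
      intro i
      have := hg (W i) (hWT i)
      rw [hWg i] at this
      exact filter_subset _ _ this
    have hEd : ∀ i : Fin k, ∃ e, e ∈ H ∧ img s e = W (π i) ∧ (uS i : ℕ) ∈ e :=
      fun i => hkey (W (π i)) (hTs (hWT (π i))) _ (huSS i)
    choose Ed hEdH hEdimg hEdx using hEd
    apply master' π (fun i => {(uS i : ℕ)}) (fun i => blockI s (w i : ℕ)) Ed
    · intro i j hij
      have himg : W (π i) = W (π j) := by rw [← hEdimg i, ← hEdimg j, hij]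
      have : (w (π i) : ℕ) = (w (π j) : ℕ) := by rw [← hWg (π i), ← hWg (π j), himg]
      exact π.injective (w.injective (Subtype.ext this))
    · exact hEdH
    · intro i i' hii' x hx x' hx'
      rw [mem_singleton] at hx hx'
      subst hx; subst hx'
      exact uS.strictMono hii'
    · intro i i' hii' y hy y' hy'
      exact block_sep (w.strictMono hii') hy hy'
    · intro i i' x hx y hy
      rw [mem_singleton] at hx
      subst hx
      exact block_sep (hVab _ (hwV i')) (hSB (huSS i)) hy
    · intro i
      exact ⟨(uS i : ℕ), mem_inter.2 ⟨hEdx i, mem_singleton_self _⟩⟩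
    · intro i
      apply img_inter_nonempty hs
      rw [hEdimg]
      exact hWmem (π i)
  · -- below-side matching
    rcases matching_or_confined k FF' (fun F => F.filter (· < b)) with
      ⟨T, hTs, g, hTcard, hinj, hg⟩ | ⟨Xb, T₀b, hT₀bs, hXb, hT₀b, hcovb⟩
    · -- blocks below as lefts, S as rights
      apply h
      have hVcard : (T.image g).card = k := by rw [Finset.card_image_of_injOn hinj, hTcard]
      set w := (T.image g).orderIsoOfFin hVcard with hw
      have hwV : ∀ i, (w i : ℕ) ∈ T.image g := fun i => (w i).2
      have hW : ∀ i : Fin k, ∃ F, F ∈ T ∧ g F = (w i : ℕ) := by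
        intro i
        obtain ⟨F, hF, hgF⟩ := mem_image.1 (hwV i)
        exact ⟨F, hF, hgF⟩
      choose W hWT hWg using hW
      have hVbel : ∀ x ∈ T.image g, x < b := by
        intro x hx
        obtain ⟨F, hF, rfl⟩ := mem_image.1 hx
        exact (mem_filter.1 (hg F hF)).2
      have hWmem : ∀ i, (w i : ℕ) ∈ W i := by
        intro i
        have := hg (W i) (hWT i)
        rw [hWg i] at this
        exact filter_subset _ _ this
      have hEd : ∀ i : Fin k, ∃ e, e ∈ H ∧ img s e = W i ∧ (uS (π i) : ℕ) ∈ e :=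
        fun i => hkey (W i) (hTs (hWT i)) _ (huSS (π i))
      choose Ed hEdH hEdimg hEdx using hEd
      apply master' π (fun i => blockI s (w i : ℕ)) (fun i => {(uS i : ℕ)}) Ed
      · intro i j hij
        have himg : W i = W j := by rw [← hEdimg i, ← hEdimg j, hij]
        have : (w i : ℕ) = (w j : ℕ) := by rw [← hWg i, ← hWg j, himg]
        exact w.injective (Subtype.ext this)
      · exact hEdH
      · intro i i' hii' x hx x' hx'
        exact block_sep (w.strictMono hii') hx hx'
      · intro i i' hii' y hy y' hy'
        rw [mem_singleton] at hy hy'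
        subst hy; subst hy'
        exact uS.strictMono hii'
      · intro i i' x hx y hy
        rw [mem_singleton] at hy
        subst hy
        exact block_sep (hVbel _ (hwV i)) hx (hSB (huSS i'))
      · intro i
        apply img_inter_nonempty hs
        rw [hEdimg]
        exact hWmem i
      · intro i
        exact ⟨(uS (π i) : ℕ), mem_inter.2 ⟨hEdx i, mem_singleton_self _⟩⟩
    · -- confined images
      set U := Xb ∪ Xa ∪ ({b} : Finset ℕ) with hU
      have hconf : ∀ F ∈ FF', F ∉ T₀b → F ∉ T₀a → F ⊆ U := by
        intro F hF hFb hFa x hx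
        rcases lt_trichotomy x b with hlt | rfl | hgt
        · exact mem_union_left _ (mem_union_left _
            (hcovb F hF hFb (mem_filter.2 ⟨hx, hlt⟩)))
        · exact mem_union_right _ (mem_singleton_self _)
        · exact mem_union_left _ (mem_union_right _
            (hcova F hF hFa (mem_filter.2 ⟨hx, hgt⟩)))
      have hsub : FF' ⊆ T₀b ∪ T₀a ∪ U.powerset := by
        intro F hF
        by_cases h1 : F ∈ T₀b
        · exact mem_union_left _ (mem_union_left _ h1)
        by_cases h2 : F ∈ T₀a
        · exact mem_union_left _ (mem_union_right _ h2)
        · exact mem_union_right _ (mem_powerset.2 (hconf F hF h1 h2))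
      have hUcard : U.card ≤ 2 * k := by
        calc U.card ≤ (Xb ∪ Xa).card + ({b} : Finset ℕ).card := card_union_le _ _
          _ ≤ (Xb.card + Xa.card) + 1 := by
              have := card_union_le Xb Xa
              simp only [card_singleton]
              omega
          _ ≤ 2 * k := by omega
      have : FF'.card ≤ (k - 1) + (k - 1) + 2 ^ (2 * k) := by
        calc FF'.card ≤ (T₀b ∪ T₀a ∪ U.powerset).card := card_le_card hsub
          _ ≤ (T₀b ∪ T₀a).card + U.powerset.card := card_union_le _ _
          _ ≤ (T₀b.card + T₀a.card) + U.powerset.card := by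
              exact Nat.add_le_add_right (card_union_le _ _) _
          _ ≤ (k - 1) + (k - 1) + 2 ^ U.card := by
              rw [card_powerset]
              omega
          _ ≤ (k - 1) + (k - 1) + 2 ^ (2 * k) := by
              have := Nat.pow_le_pow_right (show 1 ≤ 2 by omega) hUcard
              omega
      omega


/-- parameters -/
def tauK (k : ℕ) : ℕ := 2 ^ (2 * k * k)
def bs (k : ℕ) : ℕ := k * k + 2 * k * k * tauK k + 2
def ThetaK (k : ℕ) : ℕ := (bs k).choose k * (2 * k + 2 ^ (2 * k + bs k))
def WK (k : ℕ) : ℕ := (bs k).choose k * (2 * k + 2 ^ (2 * k))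
def C1 (k : ℕ) : ℕ :=
  bs k * 2 ^ bs k + bs k * ThetaK k + 2 * k * k * 2 ^ (2 * k * bs k) * WK k
def CI (k : ℕ) : ℕ := 2 ^ (bs k) ^ 3 * (bs k) ^ 3 + C1 k

lemma bs_ge_two (k : ℕ) : 2 ≤ bs k := by simp [bs]
lemma bs_pos (k : ℕ) : 0 < bs k := by have := bs_ge_two k; omega

/-- The incidence theorem. -/
theorem incidence_bound (π : Equiv.Perm (Fin k)) : ∀ n : ℕ, ∀ H : Finset (Finset ℕ),
    (∀ E ∈ H, E ⊆ Finset.range n ∧ 2 ≤ E.card) → ¬ NContains π H →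
    ∑ E ∈ H, E.card ≤ CI k * n := by
  intro n
  induction n using Nat.strong_induction_on with
  | _ n ih =>
    intro H hH havoid
    classical
    have hk := k_pos_of_avoid havoid
    set s := bs k with hsdef
    have hs0 : 0 < s := bs_pos k
    have hs2 : 2 ≤ s := bs_ge_two k
    rcases Nat.eq_zero_or_pos n with rfl | hn1
    · -- n = 0
      have : H = ∅ := by
        rcases Finset.eq_empty_or_nonempty H with rfl | ⟨E, hE⟩
        · rfl
        · exfalso
          have h1 := (hH E hE).1
          have h2 := (hH E hE).2
          simp only [Finset.range_zero, Finset.subset_empty] at h1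
          rw [h1] at h2
          simp at h2
      simp [this]
    by_cases hbase : n ≤ s ^ 3
    · -- base case
      have hHsub : H ⊆ (Finset.range n).powerset := fun E hE => mem_powerset.2 (hH E hE).1
      have hcard : H.card ≤ 2 ^ n := by
        calc H.card ≤ (Finset.range n).powerset.card := card_le_card hHsub
          _ = 2 ^ n := by rw [card_powerset, card_range]
      calc ∑ E ∈ H, E.card ≤ ∑ _E ∈ H, n := by
            apply sum_le_sum
            intro E hE
            calc E.card ≤ (Finset.range n).card := card_le_card (hH E hE).1
              _ = n := card_range n
        _ = H.card * n := by rw [sum_const, smul_eq_mul]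
        _ ≤ 2 ^ n * n := Nat.mul_le_mul_right n hcard
        _ ≤ 2 ^ (s ^ 3) * s ^ 3 := Nat.mul_le_mul (Nat.pow_le_pow_right (by omega) hbase) hbase
        _ ≤ CI k * 1 := by rw [mul_one, CI]; exact Nat.le_add_right _ _
        _ ≤ CI k * n := Nat.mul_le_mul_left _ hn1
    · -- inductive case
      push_neg at hbase
      set M := n / s + 1 with hM
      have hMlt : M < n := by
        have h1 : n / s ≤ n / 2 := Nat.div_le_div_left hs2 (by omega)
        have h2 : (8:ℕ) ≤ s ^ 3 := by
          calc (8:ℕ) = 2^3 := by norm_num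
            _ ≤ s ^ 3 := Nat.pow_le_pow_left hs2 3
        have h3 := Nat.div_add_mod n 2
        omega
      have hblock : ∀ x, x < n → x / s < M := by
        intro x hx
        have : x / s ≤ n / s := Nat.div_le_div_right (le_of_lt hx)
        omega
      have himg_lt : ∀ E ∈ H, ∀ b ∈ img s E, b < M := by
        intro E hE b hb
        obtain ⟨x, hx, rfl⟩ := mem_image.1 hb
        exact hblock x (mem_range.1 ((hH E hE).1 hx))
      have hMs : s ≤ M := by
        have h1 : s * s * s ≤ n := by
          have : s ^ 3 = s * s * s := by ring
          omega
        have h2 : s ≤ n / s := by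
          rw [Nat.le_div_iff_mul_le hs0]
          nlinarith
        omega
      have hnsM : s * M ≤ n + s := by
        have := Nat.div_mul_le_self n s
        calc s * M = s * (n / s) + s := by rw [hM]; ring
          _ = (n / s) * s + s := by ring
          _ ≤ n + s := by omega
      -- contraction
      set Gc := contract s H with hGc
      have hGavoid : ¬ NContains π Gc := contract_avoid π s hs0 havoid
      have hGH : ∀ F ∈ Gc, F ⊆ Finset.range M ∧ 2 ≤ F.card := by
        intro F hF
        simp only [hGc, contract, mem_image, mem_filter] at hF
        obtain ⟨E, ⟨hEH, hE2⟩, rfl⟩ := hF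
        exact ⟨fun b hb => mem_range.2 (himg_lt E hEH b hb), hE2⟩
      have hIG : ∑ F ∈ Gc, F.card ≤ CI k * M := ih M hMlt Gc hGH hGavoid
      have hGcard : Gc.card ≤ CI k * M := by
        calc Gc.card = ∑ _F ∈ Gc, 1 := by rw [sum_const, smul_eq_mul, mul_one]
          _ ≤ ∑ F ∈ Gc, F.card := by
              apply sum_le_sum
              intro F hF
              have := (hGH F hF).2
              omega
          _ ≤ CI k * M := hIG
      -- split
      set H2 := H.filter (fun E => 2 ≤ (img s E).card) with hH2
      set H1 := H.filter (fun E => ¬ 2 ≤ (img s E).card) with hH1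
      have hsplit : ∑ E ∈ H2, E.card + ∑ E ∈ H1, E.card = ∑ E ∈ H, E.card :=
        Finset.sum_filter_add_sum_filter_not H _ _
      -- intra bound
      have hintra : ∑ E ∈ H1, E.card ≤ M * 2 ^ s * s := by
        set fblk : Finset ℕ → ℕ := fun E => if hE : E.Nonempty then E.min' hE / s else 0 with hfblk
        have hsub1 : ∀ E ∈ H1, E ⊆ blockI s (fblk E) := by
          intro E hE x hx
          rw [hH1, mem_filter] at hE
          have hne : E.Nonempty := ⟨x, hx⟩
          have h1 : (img s E).card ≤ 1 := by omega
          have hx1 : x / s ∈ img s E := mem_image_of_mem _ hx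
          have hx2 : E.min' hne / s ∈ img s E := mem_image_of_mem _ (E.min'_mem hne)
          have heq : x / s = E.min' hne / s := Finset.card_le_one.1 h1 _ hx1 _ hx2
          rw [hfblk]
          simp only [dif_pos hne]
          exact (mem_blockI_iff hs0).2 heq
        have hmaps : ∀ E ∈ H1, fblk E ∈ Finset.range M := by
          intro E hE
          rw [hH1, mem_filter] at hE
          have hne : E.Nonempty := Finset.card_pos.1 (by have := (hH E hE.1).2; omega)
          rw [hfblk]
          simp only [dif_pos hne]
          exact mem_range.2 (hblock _ (mem_range.1 ((hH E hE.1).1 (E.min'_mem hne))))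
        have hcnt : H1.card ≤ M * 2 ^ s := by
          rw [Finset.card_eq_sum_card_fiberwise hmaps]
          calc ∑ b ∈ Finset.range M, (H1.filter (fun E => fblk E = b)).card
              ≤ ∑ _b ∈ Finset.range M, 2 ^ s := by
                apply sum_le_sum
                intro b _
                have hsub2 : H1.filter (fun E => fblk E = b) ⊆ (blockI s b).powerset := by
                  intro E hE
                  rw [mem_filter] at hE
                  rw [mem_powerset, ← hE.2]
                  exact hsub1 E hE.1
                calc (H1.filter (fun E => fblk E = b)).card
                    ≤ (blockI s b).powerset.card := card_le_card hsub2
                  _ = 2 ^ (blockI s b).card := card_powerset _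
                  _ = 2 ^ s := by rw [blockI, Nat.card_Ico]; congr 1; omega
            _ = M * 2 ^ s := by rw [sum_const, card_range, smul_eq_mul]
        calc ∑ E ∈ H1, E.card ≤ ∑ E ∈ H1, s := by
              apply sum_le_sum
              intro E hE
              calc E.card ≤ (blockI s (fblk E)).card := card_le_card (hsub1 E hE)
                _ = s := by rw [blockI, Nat.card_Ico]; omega
          _ = H1.card * s := by rw [sum_const, smul_eq_mul]
          _ ≤ M * 2 ^ s * s := Nat.mul_le_mul_right s hcnt
      -- edge decomposition for spread edges
      have hedge : ∀ E ∈ H2, E.card ≤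
          s * ((img s E).filter (fun b => k ≤ (E ∩ blockI s b).card)).card
            + (k - 1) * (img s E).card := by
        intro E _
        have hmapsE : ∀ x ∈ E, x / s ∈ img s E := fun x hx => mem_image_of_mem _ hx
        have hdec : E.card = ∑ b ∈ img s E, (E ∩ blockI s b).card := by
          rw [Finset.card_eq_sum_card_fiberwise hmapsE]
          apply sum_congr rfl
          intro b _
          congr 1
          ext x
          simp only [mem_filter, mem_inter]
          constructor
          · rintro ⟨hx, hb⟩
            exact ⟨hx, (mem_blockI_iff hs0).2 hb⟩
          · rintro ⟨hx, hb⟩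
            exact ⟨hx, (mem_blockI_iff hs0).1 hb⟩
        rw [hdec, ← Finset.sum_filter_add_sum_filter_not (img s E)
          (fun b => k ≤ (E ∩ blockI s b).card) (fun b => (E ∩ blockI s b).card)]
        apply Nat.add_le_add
        · calc ∑ b ∈ (img s E).filter (fun b => k ≤ (E ∩ blockI s b).card), (E ∩ blockI s b).card
              ≤ ∑ _b ∈ (img s E).filter (fun b => k ≤ (E ∩ blockI s b).card), s := by
                apply sum_le_sum
                intro b _
                calc (E ∩ blockI s b).card ≤ (blockI s b).card := card_le_card inter_subset_right
                  _ = s := by rw [blockI, Nat.card_Ico]; omega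
            _ = _ * s := by rw [sum_const, smul_eq_mul]
            _ = s * _ := Nat.mul_comm _ _
        · calc ∑ b ∈ (img s E).filter (fun b => ¬ k ≤ (E ∩ blockI s b).card), (E ∩ blockI s b).card
              ≤ ∑ _b ∈ (img s E).filter (fun b => ¬ k ≤ (E ∩ blockI s b).card), (k-1) := by
                apply sum_le_sum
                intro b hb
                have := (mem_filter.1 hb).2
                omega
            _ = _ * (k-1) := by rw [sum_const, smul_eq_mul]
            _ ≤ (img s E).card * (k-1) := Nat.mul_le_mul_right _ (card_le_card (filter_subset _ _))
            _ = (k-1) * (img s E).card := Nat.mul_comm _ _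
      -- fat pairs bound
      have hfat : ∑ E ∈ H2, ((img s E).filter (fun b => k ≤ (E ∩ blockI s b).card)).card
          ≤ M * ThetaK k := by
        have step1 : ∀ E ∈ H2, ((img s E).filter (fun b => k ≤ (E ∩ blockI s b).card)).card
            ≤ ((Finset.range M).filter (fun b => k ≤ (E ∩ blockI s b).card)).card := by
          intro E hE
          apply card_le_card
          apply filter_subset_filter
          intro b hb
          exact mem_range.2 (himg_lt E (mem_of_mem_filter E hE) b hb)
        calc ∑ E ∈ H2, ((img s E).filter (fun b => k ≤ (E ∩ blockI s b).card)).card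
            ≤ ∑ E ∈ H2, ((Finset.range M).filter (fun b => k ≤ (E ∩ blockI s b).card)).card :=
              sum_le_sum step1
          _ = ∑ E ∈ H2, ∑ b ∈ Finset.range M, (if k ≤ (E ∩ blockI s b).card then 1 else 0) := by
              apply sum_congr rfl
              intro E _
              rw [Finset.card_filter]
          _ = ∑ b ∈ Finset.range M, ∑ E ∈ H2, (if k ≤ (E ∩ blockI s b).card then 1 else 0) :=
              Finset.sum_comm
          _ = ∑ b ∈ Finset.range M, (H2.filter (fun E => k ≤ (E ∩ blockI s b).card)).card := by
              apply sum_congr rfl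
              intro b _
              rw [Finset.card_filter]
          _ ≤ ∑ _b ∈ Finset.range M, ThetaK k := by
              apply sum_le_sum
              intro b _
              calc (H2.filter (fun E => k ≤ (E ∩ blockI s b).card)).card
                  ≤ (H.filter (fun E => k ≤ (E ∩ blockI s b).card)).card :=
                    card_le_card (filter_subset_filter _ (filter_subset _ _))
                _ ≤ ThetaK k := fat_edges π havoid (b * s) s
          _ = M * ThetaK k := by rw [sum_const, card_range, smul_eq_mul]
      -- image-sum via fibers over the contraction
      have hmaps2 : ∀ E ∈ H2, img s E ∈ Gc := by
        intro E hE
        rw [hGc, contract]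
        exact mem_image_of_mem _ hE
      have hfibsum : ∑ E ∈ H2, (img s E).card
          = ∑ F ∈ Gc, (H2.filter (fun E => img s E = F)).card * F.card := by
        rw [← Finset.sum_fiberwise_of_maps_to hmaps2 (fun E => (img s E).card)]
        apply sum_congr rfl
        intro F _
        calc ∑ E ∈ H2.filter (fun E => img s E = F), (img s E).card
            = ∑ _E ∈ H2.filter (fun E => img s E = F), F.card := by
              apply sum_congr rfl
              intro E hE
              rw [(mem_filter.1 hE).2]
          _ = _ := by rw [sum_const, smul_eq_mul]
      have hfibeq : ∀ F ∈ Gc, H2.filter (fun E => img s E = F) = fiber s H F := by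
        intro F hF
        ext E
        simp only [hH2, fiber, mem_filter]
        constructor
        · rintro ⟨⟨h1, _⟩, h3⟩
          exact ⟨h1, h3⟩
        · rintro ⟨h1, h3⟩
          refine ⟨⟨h1, ?_⟩, h3⟩
          rw [h3]
          exact (hGH F hF).2
      have hcase : ∀ F ∈ Gc, (fiber s H F).card * F.card ≤
          (k - 1) * F.card + 2 * k * (if 2 * k ≤ F.card then 0 else (fiber s H F).card) := by
        intro F hF
        by_cases hbig : 2 * k ≤ F.card
        · rw [if_pos hbig]
          have hm := mult_cap π s hs0 havoid F hbig
          calc (fiber s H F).card * F.card ≤ (k - 1) * F.card := Nat.mul_le_mul_right _ hm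
            _ ≤ _ := by omega
        · rw [if_neg hbig]
          push_neg at hbig
          calc (fiber s H F).card * F.card ≤ (fiber s H F).card * (2 * k) := by
                apply Nat.mul_le_mul_left
                omega
            _ = 2 * k * (fiber s H F).card := by ring
            _ ≤ _ := Nat.le_add_left _ _
      -- bound the small-image fibers
      have hexp : ∀ F ∈ Gc, ∀ E ∈ fiber s H F, E ⊆ F.biUnion (blockI s) := by
        intro F _ E hE x hx
        rw [fiber, mem_filter] at hE
        apply mem_biUnion.2
        refine ⟨x / s, ?_, (mem_blockI_iff hs0).2 rfl⟩
        rw [← hE.2]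
        exact mem_image_of_mem _ hx
      have hsmall : ∑ F ∈ Gc, (if 2 * k ≤ F.card then 0 else (fiber s H F).card)
          ≤ tauK k * (CI k * M) + 2 ^ (2 * k * s) * (M * WK k) := by
        have hrw : ∑ F ∈ Gc, (if 2 * k ≤ F.card then 0 else (fiber s H F).card)
            = ∑ F ∈ Gc.filter (fun F => ¬ 2 * k ≤ F.card), (fiber s H F).card := by
          rw [Finset.sum_filter]
          apply sum_congr rfl
          intro F _
          by_cases h : 2 * k ≤ F.card <;> simp [h]
        rw [hrw]
        set Sm := Gc.filter (fun F => ¬ 2 * k ≤ F.card) with hSm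
        rw [← Finset.sum_filter_add_sum_filter_not Sm
          (fun F => ∃ b ∈ F, k ≤ (traceU s H F b).card) (fun F => (fiber s H F).card)]
        rw [Nat.add_comm]
        apply Nat.add_le_add
        · -- non-wide small images: fiber ≤ tauK
          have hper : ∀ F ∈ Sm.filter (fun F => ¬ ∃ b ∈ F, k ≤ (traceU s H F b).card),
              (fiber s H F).card ≤ tauK k := by
            intro F hF
            rw [mem_filter] at hF
            obtain ⟨hFSm, hnw⟩ := hF
            rw [hSm, mem_filter] at hFSm
            obtain ⟨hFG, hFsmall⟩ := hFSm
            push_neg at hnw hFsmall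
            have hsub : fiber s H F ⊆ (F.biUnion (traceU s H F)).powerset := by
              intro E hE
              rw [mem_powerset]
              intro x hx
              rw [fiber, mem_filter] at hE
              have hb : x / s ∈ F := by
                rw [← hE.2]
                exact mem_image_of_mem _ hx
              apply mem_biUnion.2
              refine ⟨x / s, hb, ?_⟩
              apply mem_biUnion.2
              refine ⟨E, ?_, mem_inter.2 ⟨hx, (mem_blockI_iff hs0).2 rfl⟩⟩
              rw [fiber, mem_filter]
              exact hE
            have hUcard : (F.biUnion (traceU s H F)).card ≤ 2 * k * k := by
              calc (F.biUnion (traceU s H F)).card ≤ ∑ b ∈ F, (traceU s H F b).card :=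
                    card_biUnion_le
                _ ≤ ∑ _b ∈ F, (k - 1) := by
                    apply sum_le_sum
                    intro b hb
                    have := hnw b hb
                    omega
                _ = F.card * (k - 1) := by rw [sum_const, smul_eq_mul]
                _ ≤ 2 * k * k := Nat.mul_le_mul (by omega) (by omega)
            calc (fiber s H F).card ≤ (F.biUnion (traceU s H F)).powerset.card :=
                  card_le_card hsub
              _ = 2 ^ (F.biUnion (traceU s H F)).card := card_powerset _
              _ ≤ 2 ^ (2 * k * k) := Nat.pow_le_pow_right (by omega) hUcard
              _ = tauK k := rfl
          calc ∑ F ∈ Sm.filter (fun F => ¬ ∃ b ∈ F, k ≤ (traceU s H F b).card),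
                (fiber s H F).card
              ≤ ∑ _F ∈ Sm.filter (fun F => ¬ ∃ b ∈ F, k ≤ (traceU s H F b).card), tauK k :=
                sum_le_sum hper
            _ = (Sm.filter (fun F => ¬ ∃ b ∈ F, k ≤ (traceU s H F b).card)).card * tauK k := by
                rw [sum_const, smul_eq_mul]
            _ ≤ (CI k * M) * tauK k := by
                apply Nat.mul_le_mul_right
                calc (Sm.filter _).card ≤ Sm.card := card_le_card (filter_subset _ _)
                  _ ≤ Gc.card := card_le_card (filter_subset _ _)
                  _ ≤ CI k * M := hGcard
            _ = tauK k * (CI k * M) := Nat.mul_comm _ _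
        · -- wide small images
          have hper : ∀ F ∈ Sm.filter (fun F => ∃ b ∈ F, k ≤ (traceU s H F b).card),
              (fiber s H F).card ≤ 2 ^ (2 * k * s) := by
            intro F hF
            rw [mem_filter] at hF
            obtain ⟨hFSm, _⟩ := hF
            rw [hSm, mem_filter] at hFSm
            obtain ⟨hFG, hFsmall⟩ := hFSm
            push_neg at hFsmall
            have hsub : fiber s H F ⊆ (F.biUnion (blockI s)).powerset := by
              intro E hE
              exact mem_powerset.2 (hexp F hFG E hE)
            have hUcard : (F.biUnion (blockI s)).card ≤ 2 * k * s := by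
              calc (F.biUnion (blockI s)).card ≤ ∑ b ∈ F, (blockI s b).card := card_biUnion_le
                _ = ∑ _b ∈ F, s := by
                    apply sum_congr rfl
                    intro b _
                    rw [blockI, Nat.card_Ico]
                    omega
                _ = F.card * s := by rw [sum_const, smul_eq_mul]
                _ ≤ 2 * k * s := by
                    apply Nat.mul_le_mul_right
                    omega
            calc (fiber s H F).card ≤ (F.biUnion (blockI s)).powerset.card := card_le_card hsub
              _ = 2 ^ (F.biUnion (blockI s)).card := card_powerset _
              _ ≤ 2 ^ (2 * k * s) := Nat.pow_le_pow_right (by omega) hUcard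
          have hwcount : (Sm.filter (fun F => ∃ b ∈ F, k ≤ (traceU s H F b).card)).card
              ≤ M * WK k := by
            have hsub : Sm.filter (fun F => ∃ b ∈ F, k ≤ (traceU s H F b).card) ⊆
                (Finset.range M).biUnion
                  (fun b => Gc.filter (fun F => b ∈ F ∧ k ≤ (traceU s H F b).card)) := by
              intro F hF
              rw [mem_filter] at hF
              obtain ⟨hFSm, b, hbF, hwide⟩ := hF
              rw [hSm, mem_filter] at hFSm
              apply mem_biUnion.2
              refine ⟨b, ?_, ?_⟩
              · exact (hGH F hFSm.1).1 hbF
              · rw [mem_filter]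
                exact ⟨hFSm.1, hbF, hwide⟩
            calc (Sm.filter _).card ≤ _ := card_le_card hsub
              _ ≤ ∑ b ∈ Finset.range M,
                  (Gc.filter (fun F => b ∈ F ∧ k ≤ (traceU s H F b).card)).card :=
                    card_biUnion_le
              _ ≤ ∑ _b ∈ Finset.range M, WK k := by
                  apply sum_le_sum
                  intro b _
                  exact wide_images π s hs0 havoid b
              _ = M * WK k := by rw [sum_const, card_range, smul_eq_mul]
          calc ∑ F ∈ Sm.filter (fun F => ∃ b ∈ F, k ≤ (traceU s H F b).card), (fiber s H F).card
              ≤ ∑ _F ∈ Sm.filter (fun F => ∃ b ∈ F, k ≤ (traceU s H F b).card),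
                  2 ^ (2 * k * s) := sum_le_sum hper
            _ = (Sm.filter _).card * 2 ^ (2 * k * s) := by rw [sum_const, smul_eq_mul]
            _ ≤ (M * WK k) * 2 ^ (2 * k * s) := Nat.mul_le_mul_right _ hwcount
            _ = 2 ^ (2 * k * s) * (M * WK k) := Nat.mul_comm _ _
      -- total image sum
      have himgsum : ∑ E ∈ H2, (img s E).card ≤
          (k - 1) * (CI k * M) + 2 * k * (tauK k * (CI k * M) + 2 ^ (2 * k * s) * (M * WK k)) := by
        rw [hfibsum]
        calc ∑ F ∈ Gc, (H2.filter (fun E => img s E = F)).card * F.card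
            = ∑ F ∈ Gc, (fiber s H F).card * F.card := by
              apply sum_congr rfl
              intro F hF
              rw [hfibeq F hF]
          _ ≤ ∑ F ∈ Gc, ((k - 1) * F.card
              + 2 * k * (if 2 * k ≤ F.card then 0 else (fiber s H F).card)) := sum_le_sum hcase
          _ = (k - 1) * (∑ F ∈ Gc, F.card)
              + 2 * k * (∑ F ∈ Gc, (if 2 * k ≤ F.card then 0 else (fiber s H F).card)) := by
              rw [Finset.sum_add_distrib, Finset.mul_sum, Finset.mul_sum]
          _ ≤ (k - 1) * (CI k * M)
              + 2 * k * (tauK k * (CI k * M) + 2 ^ (2 * k * s) * (M * WK k)) :=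
              Nat.add_le_add (Nat.mul_le_mul_left _ hIG) (Nat.mul_le_mul_left _ hsmall)
      -- spread total
      have hspread : ∑ E ∈ H2, E.card ≤
          s * (M * ThetaK k) + (k - 1) * (∑ E ∈ H2, (img s E).card) := by
        calc ∑ E ∈ H2, E.card
            ≤ ∑ E ∈ H2, (s * ((img s E).filter (fun b => k ≤ (E ∩ blockI s b).card)).card
                + (k - 1) * (img s E).card) := sum_le_sum hedge
          _ = s * (∑ E ∈ H2, ((img s E).filter (fun b => k ≤ (E ∩ blockI s b).card)).card)
              + (k - 1) * (∑ E ∈ H2, (img s E).card) := by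
              rw [Finset.sum_add_distrib, Finset.mul_sum, Finset.mul_sum]
          _ ≤ _ := Nat.add_le_add_right (Nat.mul_le_mul_left _ hfat) _
      -- final arithmetic
      set A := k * k + 2 * k * k * tauK k with hA
      have hsA : s = A + 2 := by rw [hsdef, bs, hA]
      have hX : (k - 1) * (∑ E ∈ H2, (img s E).card) ≤
          A * (CI k * M) + 2 * k * k * 2 ^ (2 * k * s) * WK k * M := by
        calc (k - 1) * (∑ E ∈ H2, (img s E).card)
            ≤ (k - 1) * ((k - 1) * (CI k * M)
              + 2 * k * (tauK k * (CI k * M) + 2 ^ (2 * k * s) * (M * WK k))) :=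
              Nat.mul_le_mul_left _ himgsum
          _ = (k - 1) * (k - 1) * (CI k * M) + (k - 1) * (2 * k) * tauK k * (CI k * M)
              + (k - 1) * (2 * k) * 2 ^ (2 * k * s) * (WK k * M) := by ring
          _ ≤ k * k * (CI k * M) + 2 * k * k * tauK k * (CI k * M)
              + 2 * k * k * 2 ^ (2 * k * s) * (WK k * M) := by
              have e1 : (k - 1) * (k - 1) ≤ k * k := Nat.mul_le_mul (by omega) (by omega)
              have e2 : (k - 1) * (2 * k) ≤ 2 * k * k := by
                calc (k - 1) * (2 * k) ≤ k * (2 * k) := Nat.mul_le_mul_right _ (by omega)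
                  _ = 2 * k * k := by ring
              have t1 := Nat.mul_le_mul_right (CI k * M) e1
              have t2 := Nat.mul_le_mul_right (CI k * M) (Nat.mul_le_mul_right (tauK k) e2)
              have t3 := Nat.mul_le_mul_right (WK k * M)
                (Nat.mul_le_mul_right (2 ^ (2 * k * s)) e2)
              omega
          _ = A * (CI k * M) + 2 * k * k * 2 ^ (2 * k * s) * WK k * M := by
              rw [hA]; ring
      have htotal : ∑ E ∈ H, E.card ≤ C1 k * M + A * (CI k * M) := by
        have hC1M : s * (M * ThetaK k) + M * 2 ^ s * s
            + 2 * k * k * 2 ^ (2 * k * s) * WK k * M = C1 k * M := by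
          rw [C1, hsdef]; ring
        calc ∑ E ∈ H, E.card = ∑ E ∈ H2, E.card + ∑ E ∈ H1, E.card := hsplit.symm
          _ ≤ (s * (M * ThetaK k) + (k - 1) * (∑ E ∈ H2, (img s E).card)) + M * 2 ^ s * s :=
              Nat.add_le_add hspread hintra
          _ ≤ (s * (M * ThetaK k)
              + (A * (CI k * M) + 2 * k * k * 2 ^ (2 * k * s) * WK k * M)) + M * 2 ^ s * s := by
              have := Nat.add_le_add_right (Nat.add_le_add_left hX (s * (M * ThetaK k)))
                (M * 2 ^ s * s)
              omega
          _ = C1 k * M + A * (CI k * M) := by rw [← hC1M]; ring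
      have hC1CI : C1 k ≤ CI k := by rw [CI]; omega
      have key1 : C1 k * M ≤ CI k * M := Nat.mul_le_mul_right M hC1CI
      have key2 : CI k * s ≤ CI k * M := Nat.mul_le_mul_left _ hMs
      have key3 : A * (CI k * M) + 2 * (CI k * M) ≤ CI k * n + CI k * s := by
        have e1 : A * (CI k * M) + 2 * (CI k * M) = CI k * (s * M) := by
          rw [hsA]; ring
        rw [e1]
        calc CI k * (s * M) ≤ CI k * (n + s) := Nat.mul_le_mul_left _ hnsM
          _ = CI k * n + CI k * s := by ring
      have key4 : A * (CI k * M) + CI k * M ≤ CI k * n := by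
        have : A * (CI k * M) + 2 * (CI k * M) ≤ CI k * n + CI k * M := by
          calc A * (CI k * M) + 2 * (CI k * M) ≤ CI k * n + CI k * s := key3
            _ ≤ CI k * n + CI k * M := Nat.add_le_add_left key2 _
        omega
      calc ∑ E ∈ H, E.card ≤ C1 k * M + A * (CI k * M) := htotal
        _ ≤ CI k * M + A * (CI k * M) := Nat.add_le_add_right key1 _
        _ ≤ CI k * n := by omega


lemma sum_pow_le (N t : ℕ) : ∑ j ∈ Finset.range (t+1), N^j ≤ (N+1)^t := by
  induction t with
  | zero => simp
  | succ t ih =>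
    rw [Finset.sum_range_succ]
    have h1 : N^(t+1) ≤ N * (N+1)^t := by
      rw [pow_succ]
      calc N^t * N = N * N^t := Nat.mul_comm _ _
        _ ≤ N * (N+1)^t := Nat.mul_le_mul_left _ (Nat.pow_le_pow_left (by omega) t)
    calc ∑ j ∈ Finset.range (t+1), N^j + N^(t+1) ≤ (N+1)^t + N * (N+1)^t :=
          Nat.add_le_add ih h1
      _ = (N+1)^(t+1) := by ring

lemma card_small_subsets {β : Type} [DecidableEq β] (X : Finset β) (t : ℕ) :
    (X.powerset.filter (fun S => S.card ≤ t)).card ≤ (X.card + 1)^t := by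
  have hsub : X.powerset.filter (fun S => S.card ≤ t) ⊆
      (Finset.range (t+1)).biUnion (fun j => X.powersetCard j) := by
    intro S hS
    rw [mem_filter, mem_powerset] at hS
    exact mem_biUnion.2 ⟨S.card, mem_range.2 (by omega), mem_powersetCard.2 ⟨hS.1, rfl⟩⟩
  calc (X.powerset.filter (fun S => S.card ≤ t)).card
      ≤ ((Finset.range (t+1)).biUnion (fun j => X.powersetCard j)).card := card_le_card hsub
    _ ≤ ∑ j ∈ Finset.range (t+1), (X.powersetCard j).card := card_biUnion_le
    _ = ∑ j ∈ Finset.range (t+1), X.card.choose j := by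
        apply sum_congr rfl
        intro j _
        exact card_powersetCard j X
    _ ≤ ∑ j ∈ Finset.range (t+1), X.card ^ j :=
        sum_le_sum (fun j _ => Nat.choose_le_pow _ _)
    _ ≤ (X.card + 1)^t := sum_pow_le _ _

/-- avoiders -/
noncomputable def avoiders (π : Equiv.Perm (Fin k)) (n : ℕ) : Finset (Finset (Finset ℕ)) :=
  @Finset.filter _ (fun H => (∀ E ∈ H, 2 ≤ E.card) ∧ ¬ NContains π H)
    (Classical.decPred _) (Finset.range n).powerset.powerset

lemma mem_avoiders {π : Equiv.Perm (Fin k)} {n : ℕ} {H : Finset (Finset ℕ)} :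
    H ∈ avoiders π n ↔
    (∀ E ∈ H, E ⊆ Finset.range n) ∧ (∀ E ∈ H, 2 ≤ E.card) ∧ ¬ NContains π H := by
  have key : H ∈ avoiders π n ↔ H ∈ (Finset.range n).powerset.powerset ∧
      ((∀ E ∈ H, 2 ≤ E.card) ∧ ¬ NContains π H) :=
    @Finset.mem_filter _ _ (Classical.decPred _) _ _
  rw [key, mem_powerset]
  constructor
  · rintro ⟨h1, h2, h3⟩
    exact ⟨fun E hE => mem_powerset.1 (h1 hE), h2, h3⟩
  · rintro ⟨h1, h2, h3⟩
    exact ⟨fun E hE => mem_powerset.2 (h1 E hE), h2, h3⟩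

lemma avoiders_mono (π : Equiv.Perm (Fin k)) {n n' : ℕ} (h : n ≤ n') :
    avoiders π n ⊆ avoiders π n' := by
  intro H hH
  rw [mem_avoiders] at hH ⊢
  exact ⟨fun E hE => (hH.1 E hE).trans (Finset.range_subset_range.2 h), hH.2⟩

def Ldbl (k : ℕ) : ℕ := 2 ^ 2 ^ (4 * k) * 2 ^ (3 * k)
def Kdbl (k : ℕ) : ℕ := 2 * Ldbl k ^ CI k

lemma Ldbl_pos (k : ℕ) : 1 ≤ Ldbl k := by
  rw [Ldbl]
  calc (1:ℕ) = 1 * 1 := by omega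
    _ ≤ 2 ^ 2 ^ (4 * k) * 2 ^ (3 * k) :=
        Nat.mul_le_mul Nat.one_le_two_pow Nat.one_le_two_pow

/-- the doubling bound -/
lemma doubling (π : Equiv.Perm (Fin k)) (m : ℕ) :
    (avoiders π (2 * m)).card ≤ (avoiders π m).card * Kdbl k ^ m := by
  classical
  have hmaps : ∀ H ∈ avoiders π (2 * m), contract 2 H ∈ avoiders π m := by
    intro H hH
    rw [mem_avoiders] at hH ⊢
    obtain ⟨hsub, hcard, hav⟩ := hH
    refine ⟨?_, ?_, contract_avoid π 2 (by omega) hav⟩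
    · intro F hF
      rw [contract, mem_image] at hF
      obtain ⟨E, hE, rfl⟩ := hF
      intro b hb
      rw [img, mem_image] at hb
      obtain ⟨x, hx, rfl⟩ := hb
      have hxlt : x < 2 * m := mem_range.1 (hsub E (mem_of_mem_filter E hE) hx)
      rw [mem_range]
      omega
    · intro F hF
      rw [contract, mem_image] at hF
      obtain ⟨E, hE, rfl⟩ := hF
      exact (mem_filter.1 hE).2
  rw [Finset.card_eq_sum_card_fiberwise hmaps]
  have hfib : ∀ G ∈ avoiders π m,
      ((avoiders π (2 * m)).filter (fun H => contract 2 H = G)).card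
        ≤ 2 ^ m * Ldbl k ^ (CI k * m) := by
    intro G hG
    rw [mem_avoiders] at hG
    obtain ⟨hGsub, hGcard, hGav⟩ := hG
    have hIG : ∑ F ∈ G, F.card ≤ CI k * m :=
      incidence_bound π m G (fun F hF => ⟨hGsub F hF, hGcard F hF⟩) hGav
    set cand : Finset ℕ → Finset (Finset ℕ) :=
      fun F => (F.biUnion (blockI 2)).powerset.filter (fun E => img 2 E = F) with hcand
    set Allowed : Finset ℕ → Finset (Finset (Finset ℕ)) :=
      fun F => (cand F).powerset.filter (fun S => 2 * k ≤ F.card → S.card ≤ k - 1) with hAllowed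
    set Target := (Finset.range m).powerset ×ˢ (G.pi (fun F => Allowed F)) with hTarget
    set ψ : Finset (Finset ℕ) → Finset ℕ × (∀ F ∈ G, Finset (Finset ℕ)) :=
      fun H => ((Finset.range m).filter (fun b => blockI 2 b ∈ H),
        fun F _ => (H.filter (fun E => 2 ≤ (img 2 E).card)).filter (fun E => img 2 E = F))
      with hψ
    have h2pos : (0:ℕ) < 2 := by omega
    -- intra edges are exactly full pairs
    have hintra_eq : ∀ H ∈ avoiders π (2 * m), ∀ E ∈ H, ¬ (2 ≤ (img 2 E).card) →
        ∃ b < m, E = blockI 2 b := by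
      intro H hH E hE hE1
      rw [mem_avoiders] at hH
      have hc2 := hH.2.1 E hE
      have hne : E.Nonempty := Finset.card_pos.1 (by omega)
      have h1 : (img 2 E).card ≤ 1 := by omega
      have hbsub : E ⊆ blockI 2 (E.min' hne / 2) := by
        intro x hx
        have hx1 : x / 2 ∈ img 2 E := mem_image_of_mem _ hx
        have hx2 : E.min' hne / 2 ∈ img 2 E := mem_image_of_mem _ (E.min'_mem hne)
        have heq : x / 2 = E.min' hne / 2 := Finset.card_le_one.1 h1 _ hx1 _ hx2
        exact (mem_blockI_iff h2pos).2 heq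
      have hbcard : (blockI 2 (E.min' hne / 2)).card = 2 := by
        rw [blockI, Nat.card_Ico]; omega
      have hEeq : E = blockI 2 (E.min' hne / 2) :=
        Finset.eq_of_subset_of_card_le hbsub (by omega)
      refine ⟨E.min' hne / 2, ?_, hEeq⟩
      have : E.min' hne < 2 * m := mem_range.1 (hH.1 E hE (E.min'_mem hne))
      omega
    have hinj : ((avoiders π (2 * m)).filter (fun H => contract 2 H = G)).card
        ≤ Target.card := by
      apply Finset.card_le_card_of_injOn ψ ?_ ?_
      · -- maps to Target
        intro H hHf
        rw [mem_coe, mem_filter] at hHf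
        obtain ⟨hHav2, hHc⟩ := hHf
        have hHmem := hHav2
        rw [mem_avoiders] at hHmem
        rw [hTarget, mem_coe, mem_product]
        constructor
        · exact mem_powerset.2 (filter_subset _ _)
        · rw [mem_pi]
          intro F hF
          rw [hAllowed, mem_filter]
          constructor
          · rw [mem_powerset]
            intro E hE
            rw [mem_filter] at hE
            obtain ⟨hE2, hE3⟩ := hE
            rw [hcand, mem_filter, mem_powerset]
            refine ⟨?_, hE3⟩
            intro x hx
            apply mem_biUnion.2
            refine ⟨x / 2, ?_, (mem_blockI_iff h2pos).2 rfl⟩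
            rw [← hE3]
            exact mem_image_of_mem _ hx
          · intro hbig
            have hsubfib : (H.filter (fun E => 2 ≤ (img 2 E).card)).filter
                (fun E => img 2 E = F) ⊆ fiber 2 H F := by
              intro E hE
              rw [fiber, mem_filter]
              exact ⟨mem_of_mem_filter E (mem_of_mem_filter E hE), (mem_filter.1 hE).2⟩
            calc _ ≤ (fiber 2 H F).card := card_le_card hsubfib
              _ ≤ k - 1 := mult_cap π 2 h2pos hHmem.2.2 F hbig
      · -- injective on the fiber
        intro H hH H' hH' heq
        simp only [mem_coe, mem_filter] at hH hH'
        have hps : ∀ F, F ∈ G → (H.filter (fun E => 2 ≤ (img 2 E).card)).filter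
            (fun E => img 2 E = F) = (H'.filter (fun E => 2 ≤ (img 2 E).card)).filter
            (fun E => img 2 E = F) := by
          intro F hF
          have h2 := congrArg Prod.snd heq
          simp only [hψ] at h2
          exact congrFun (congrFun h2 F) hF
        have hpair : (Finset.range m).filter (fun b => blockI 2 b ∈ H) =
            (Finset.range m).filter (fun b => blockI 2 b ∈ H') := by
          have h1 := congrArg Prod.fst heq
          simpa [hψ] using h1
        have hdir : ∀ (K K' : Finset (Finset ℕ)), K ∈ avoiders π (2*m) → K' ∈ avoiders π (2*m) →
            contract 2 K = G → contract 2 K' = G →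
            (∀ F, F ∈ G → (K.filter (fun E => 2 ≤ (img 2 E).card)).filter
              (fun E => img 2 E = F) = (K'.filter (fun E => 2 ≤ (img 2 E).card)).filter
              (fun E => img 2 E = F)) →
            ((Finset.range m).filter (fun b => blockI 2 b ∈ K) =
              (Finset.range m).filter (fun b => blockI 2 b ∈ K')) →
            K ⊆ K' := by
          intro K K' hK hK' hcK hcK' hfibs hpairs E hE
          by_cases hsp : 2 ≤ (img 2 E).card
          · have hFG : img 2 E ∈ G := by
              rw [← hcK, contract]
              exact mem_image_of_mem _ (mem_filter.2 ⟨hE, hsp⟩)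
            have : E ∈ (K.filter (fun E => 2 ≤ (img 2 E).card)).filter
                (fun E' => img 2 E' = img 2 E) := by
              rw [mem_filter, mem_filter]
              exact ⟨⟨hE, hsp⟩, rfl⟩
            rw [hfibs _ hFG] at this
            exact mem_of_mem_filter E (mem_of_mem_filter E this)
          · obtain ⟨b, hbm, rfl⟩ := hintra_eq K hK E hE hsp
            have : b ∈ (Finset.range m).filter (fun b => blockI 2 b ∈ K) :=
              mem_filter.2 ⟨mem_range.2 hbm, hE⟩
            rw [hpairs] at this
            exact (mem_filter.1 this).2
        have hsub1 : H ⊆ H' := hdir H H' hH.1 hH'.1 hH.2 hH'.2 hps hpair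
        have hsub2 : H' ⊆ H := hdir H' H hH'.1 hH.1 hH'.2 hH.2
          (fun F hF => (hps F hF).symm) hpair.symm
        exact Finset.Subset.antisymm hsub1 hsub2
    have hTcard : Target.card = 2 ^ m * ∏ F ∈ G, (Allowed F).card := by
      rw [hTarget, Finset.card_product, card_powerset, card_range, Finset.card_pi]
    have hperF : ∀ F ∈ G, (Allowed F).card ≤ Ldbl k ^ F.card := by
      intro F hF
      have hFcard2 : 2 ≤ F.card := hGcard F hF
      have hN : (cand F).card ≤ 2 ^ (2 * F.card) := by
        calc (cand F).card ≤ (F.biUnion (blockI 2)).powerset.card :=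
              card_le_card (filter_subset _ _)
          _ = 2 ^ (F.biUnion (blockI 2)).card := card_powerset _
          _ ≤ 2 ^ (2 * F.card) := by
              apply Nat.pow_le_pow_right (by omega)
              calc (F.biUnion (blockI 2)).card ≤ ∑ b ∈ F, (blockI 2 b).card :=
                    card_biUnion_le
                _ = ∑ _b ∈ F, 2 := by
                    apply sum_congr rfl
                    intro b _
                    rw [blockI, Nat.card_Ico]
                    omega
                _ = F.card * 2 := by rw [sum_const, smul_eq_mul]
                _ = 2 * F.card := Nat.mul_comm _ _
      by_cases hbig : 2 * k ≤ F.card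
      · have hsubA : Allowed F ⊆ (cand F).powerset.filter (fun S => S.card ≤ k - 1) := by
          intro S hS
          rw [hAllowed, mem_filter] at hS
          exact mem_filter.2 ⟨hS.1, hS.2 hbig⟩
        calc (Allowed F).card ≤ ((cand F).powerset.filter (fun S => S.card ≤ k-1)).card :=
              card_le_card hsubA
          _ ≤ ((cand F).card + 1)^(k-1) := card_small_subsets _ _
          _ ≤ (2^(2*F.card) + 1)^(k-1) := Nat.pow_le_pow_left (by omega) _
          _ ≤ (2^(2*F.card + 1))^(k-1) := by
              apply Nat.pow_le_pow_left
              have h1 : 1 ≤ 2^(2*F.card) := Nat.one_le_two_pow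
              rw [pow_succ]
              omega
          _ = 2^((2*F.card+1)*(k-1)) := by rw [← pow_mul]
          _ ≤ 2^(3*k*F.card) := by
              apply Nat.pow_le_pow_right (by omega)
              have h2 : 2*F.card + 1 ≤ 3*F.card := by omega
              calc (2*F.card+1)*(k-1) ≤ 3*F.card*k := Nat.mul_le_mul h2 (by omega)
                _ = 3*k*F.card := by ring
          _ = (2^(3*k))^F.card := by rw [← pow_mul]
          _ ≤ Ldbl k ^ F.card := by
              apply Nat.pow_le_pow_left
              rw [Ldbl]
              have h3 : 0 < 2 ^ 2 ^ (4*k) := Nat.pow_pos (by omega)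
              exact Nat.le_mul_of_pos_left _ h3
      · push_neg at hbig
        calc (Allowed F).card ≤ (cand F).powerset.card := by
              apply card_le_card
              rw [hAllowed]
              exact filter_subset _ _
          _ = 2 ^ (cand F).card := card_powerset _
          _ ≤ 2 ^ 2 ^ (2 * F.card) := Nat.pow_le_pow_right (by omega) hN
          _ ≤ 2 ^ 2 ^ (4 * k) := by
              apply Nat.pow_le_pow_right (by omega)
              apply Nat.pow_le_pow_right (by omega)
              omega
          _ ≤ Ldbl k := by
              rw [Ldbl]
              have h4 : 0 < 2^(3*k) := Nat.pow_pos (by omega)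
              exact Nat.le_mul_of_pos_right _ h4
          _ ≤ Ldbl k ^ F.card := by
              calc Ldbl k = Ldbl k ^ 1 := (pow_one _).symm
                _ ≤ Ldbl k ^ F.card := Nat.pow_le_pow_right (Ldbl_pos k) (by omega)
    have hprod : ∏ F ∈ G, (Allowed F).card ≤ Ldbl k ^ (CI k * m) := by
      calc ∏ F ∈ G, (Allowed F).card ≤ ∏ F ∈ G, Ldbl k ^ F.card :=
            Finset.prod_le_prod' hperF
        _ = Ldbl k ^ (∑ F ∈ G, F.card) := Finset.prod_pow_eq_pow_sum _ _ _
        _ ≤ Ldbl k ^ (CI k * m) := Nat.pow_le_pow_right (Ldbl_pos k) hIG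
    calc ((avoiders π (2 * m)).filter (fun H => contract 2 H = G)).card
        ≤ Target.card := hinj
      _ = 2 ^ m * ∏ F ∈ G, (Allowed F).card := hTcard
      _ ≤ 2 ^ m * Ldbl k ^ (CI k * m) := Nat.mul_le_mul_left _ hprod
  calc ∑ G ∈ avoiders π m, ((avoiders π (2*m)).filter (fun H => contract 2 H = G)).card
      ≤ ∑ _G ∈ avoiders π m, 2 ^ m * Ldbl k ^ (CI k * m) := sum_le_sum hfib
    _ = (avoiders π m).card * (2 ^ m * Ldbl k ^ (CI k * m)) := by
        rw [sum_const, smul_eq_mul]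
    _ ≤ (avoiders π m).card * Kdbl k ^ m := by
        apply Nat.mul_le_mul_left
        rw [Kdbl, mul_pow, pow_mul]


lemma avoiders_card_one (π : Equiv.Perm (Fin k)) : (avoiders π 1).card ≤ 1 := by
  have hsub : avoiders π 1 ⊆ {∅} := by
    intro H hH
    rw [mem_avoiders] at hH
    rw [mem_singleton]
    rcases Finset.eq_empty_or_nonempty H with rfl | ⟨E, hE⟩
    · rfl
    · exfalso
      have h1 := hH.1 E hE
      have h2 := hH.2.1 E hE
      have : E.card ≤ 1 := by
        calc E.card ≤ (Finset.range 1).card := card_le_card h1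
          _ = 1 := card_range 1
      omega
  calc (avoiders π 1).card ≤ ({∅} : Finset (Finset (Finset ℕ))).card := card_le_card hsub
    _ = 1 := card_singleton _

lemma Kdbl_two (k : ℕ) : 2 ≤ Kdbl k := by
  rw [Kdbl]
  have h1 : 1 ≤ Ldbl k ^ CI k := Nat.one_le_pow _ _ (by have := Ldbl_pos k; omega)
  omega

lemma count_pow (π : Equiv.Perm (Fin k)) : ∀ t : ℕ, (avoiders π (2 ^ t)).card ≤ Kdbl k ^ 2 ^ t := by
  intro t
  induction t with
  | zero =>
    calc (avoiders π (2 ^ 0)).card = (avoiders π 1).card := by norm_num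
      _ ≤ 1 := avoiders_card_one π
      _ ≤ Kdbl k := by have := Kdbl_two k; omega
      _ = Kdbl k ^ 2 ^ 0 := by norm_num
  | succ t ih =>
    have h1 : (2:ℕ) ^ (t + 1) = 2 * 2 ^ t := by ring
    rw [h1]
    calc (avoiders π (2 * 2 ^ t)).card
        ≤ (avoiders π (2 ^ t)).card * Kdbl k ^ 2 ^ t := doubling π _
      _ ≤ Kdbl k ^ 2 ^ t * Kdbl k ^ 2 ^ t := Nat.mul_le_mul_right _ ih
      _ = Kdbl k ^ (2 * 2 ^ t) := by rw [← pow_add]; congr 1; ring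

lemma count_all (π : Equiv.Perm (Fin k)) (n : ℕ) :
    (avoiders π n).card ≤ (Kdbl k ^ 2) ^ n := by
  rcases Nat.eq_zero_or_pos n with rfl | hn
  · have h0 : (avoiders π 0).card ≤ 1 :=
      le_trans (card_le_card (avoiders_mono π (by omega))) (avoiders_card_one π)
    simpa using h0
  · have hlt : n < 2 ^ (Nat.log 2 n + 1) := Nat.lt_pow_succ_log_self (by omega) n
    have hle : 2 ^ (Nat.log 2 n + 1) ≤ 2 * n := by
      have h2 := Nat.pow_log_le_self 2 (by omega : n ≠ 0)
      calc (2:ℕ) ^ (Nat.log 2 n + 1) = 2 * 2 ^ Nat.log 2 n := by rw [pow_succ]; ring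
        _ ≤ 2 * n := by omega
    calc (avoiders π n).card ≤ (avoiders π (2 ^ (Nat.log 2 n + 1))).card :=
          card_le_card (avoiders_mono π (le_of_lt hlt))
      _ ≤ Kdbl k ^ 2 ^ (Nat.log 2 n + 1) := count_pow π _
      _ ≤ Kdbl k ^ (2 * n) := Nat.pow_le_pow_right (by have := Kdbl_two k; omega) hle
      _ = (Kdbl k ^ 2) ^ n := by rw [← pow_mul]

lemma pos_mem {π : Equiv.Perm (Fin k)} {v : Fin (2 * k) → ℕ} {E : Fin k → Finset ℕ}
    (hcond : ∀ i, v (finL k i) ∈ E i ∧ v (finR k (π i)) ∈ E i) (j : Fin (2 * k)) :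
    ∃ i, v j ∈ E i := by
  by_cases h : (j : ℕ) < k
  · have hj : j = finL k ⟨j, h⟩ := by apply Fin.ext; simp [finL]
    refine ⟨⟨j, h⟩, ?_⟩
    have h2 := (hcond ⟨j, h⟩).1
    rwa [← hj] at h2
  · set i : Fin k := π.symm ⟨(j : ℕ) - k, by have := j.isLt; omega⟩ with hi
    have hj : j = finR k (π i) := by
      apply Fin.ext
      simp only [finR, hi, Equiv.apply_symm_apply]
      have := j.isLt
      omega
    refine ⟨i, ?_⟩
    have h2 := (hcond i).2
    rwa [← hj] at h2

lemma transfer {n : ℕ} (π : Equiv.Perm (Fin k)) (H : Finset (Finset (Fin n)))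
    (hcard : ∀ e ∈ H, 2 ≤ e.card) (hav : ¬ HContainsPerm H π) :
    H.image (fun e => e.image (Fin.val)) ∈ avoiders π n := by
  classical
  rw [mem_avoiders]
  refine ⟨?_, ?_, ?_⟩
  · intro E hE
    obtain ⟨e, _, rfl⟩ := mem_image.1 hE
    intro x hx
    obtain ⟨a, _, rfl⟩ := mem_image.1 hx
    exact mem_range.2 a.isLt
  · intro E hE
    obtain ⟨e, he, rfl⟩ := mem_image.1 hE
    rw [Finset.card_image_of_injective _ Fin.val_injective]
    exact hcard e he
  · intro hC
    apply hav
    obtain ⟨v, hmono, Eb, hinj, hcond⟩ := hC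
    have hch : ∀ i, ∃ e, e ∈ H ∧ e.image Fin.val = Eb i := by
      intro i
      obtain ⟨e, he, heq⟩ := mem_image.1 (hcond i).1
      exact ⟨e, he, heq⟩
    choose e he heimg using hch
    have hbound : ∀ j, v j < n := by
      intro j
      obtain ⟨i, hvi⟩ := pos_mem (fun i => ⟨(hcond i).2.1, (hcond i).2.2⟩) j
      rw [← heimg i] at hvi
      obtain ⟨a, _, haeq⟩ := mem_image.1 hvi
      rw [← haeq]
      exact a.isLt
    refine ⟨fun j => ⟨v j, hbound j⟩, ?_, e, ?_, ?_⟩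
    · intro a b hab
      exact Fin.mk_lt_mk.2 (hmono hab)
    · intro i j hij
      apply hinj
      rw [← heimg i, ← heimg j, hij]
    · intro i
      refine ⟨he i, ?_, ?_⟩
      · have h1 := (hcond i).2.1
        rw [← heimg i] at h1
        obtain ⟨a, ha, haeq⟩ := mem_image.1 h1
        have heq2 : (⟨v (finL k i), hbound _⟩ : Fin n) = a := Fin.ext haeq.symm
        show (⟨v (finL k i), hbound _⟩ : Fin n) ∈ e i
        rw [heq2]
        exact ha
      · have h1 := (hcond i).2.2
        rw [← heimg i] at h1
        obtain ⟨a, ha, haeq⟩ := mem_image.1 h1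
        have heq2 : (⟨v (finR k (π i)), hbound _⟩ : Fin n) = a := Fin.ext haeq.symm
        show (⟨v (finR k (π i)), hbound _⟩ : Fin n) ∈ e i
        rw [heq2]
        exact ha

end KM

theorem stmt14 (k : ℕ) (π : Equiv.Perm (Fin k)) :
    ∃ c : ℕ, ∀ n : ℕ,
      ({H : Finset (Finset (Fin n)) |
          (∀ e ∈ H, 2 ≤ e.card) ∧ ¬HContainsPerm H π}).ncard ≤ c ^ n := by
  classical
  refine ⟨KM.Kdbl k ^ 2, fun n => ?_⟩
  set S := {H : Finset (Finset (Fin n)) |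
      (∀ e ∈ H, 2 ≤ e.card) ∧ ¬HContainsPerm H π} with hS
  have hfin : S.Finite := Set.toFinite S
  rw [Set.ncard_eq_toFinset_card S hfin]
  have hmaps : ∀ H ∈ hfin.toFinset, H.image (fun e => e.image (Fin.val)) ∈ KM.avoiders π n := by
    intro H hH
    rw [Set.Finite.mem_toFinset] at hH
    exact KM.transfer π H hH.1 hH.2
  have hinj : Set.InjOn (fun H : Finset (Finset (Fin n)) => H.image (fun e => e.image (Fin.val)))
      ↑hfin.toFinset := by
    intro a _ b _ hab
    exact Finset.image_injective (Finset.image_injective Fin.val_injective) hab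
  calc hfin.toFinset.card ≤ (KM.avoiders π n).card :=
        Finset.card_le_card_of_injOn _ hmaps hinj
    _ ≤ (KM.Kdbl k ^ 2) ^ n := KM.count_all π n
end
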